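/- arXiv:2009.06445 — 7 statements merged into one kernel-verified Lean document; each statement's English description precedes it below -/
import Mathlib

section
/- Every closed subset X of [ω]^ω such that any two elements of X have infinite intersection is σ-compact (where elements of [ω]^ω are identified with their increasing enumerations in ω^ω, or with characteristic functions in 2^ω). -/
open Set Topology Filter

namespace Stmt0Aux

/-! ### Cylinders, restrictions, maxima of finite sequences -/

/-- The cylinder (basic clopen set) of a finite sequence in Baire space. -/
def cyl (s : List ℕ) : Set (ℕ → ℕ) := {y | ∀ i : Fin s.length, y i = s.get i}

lemma cyl_eq (s : List ℕ) :
    cyl s = ⋂ i : Fin s.length, (fun y : ℕ → ℕ => y i) ⁻¹' {s.get i} := by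
  ext y; simp [cyl, Set.mem_iInter]

lemma isClosed_cyl (s : List ℕ) : IsClosed (cyl s) := by
  rw [cyl_eq]
  exact isClosed_iInter fun i => (isClosed_discrete _).preimage (continuous_apply _)

lemma isOpen_cyl (s : List ℕ) : IsOpen (cyl s) := by
  rw [cyl_eq]
  exact isOpen_iInter_of_finite fun i =>
    (isOpen_discrete _).preimage (continuous_apply _)

lemma cyl_anti {s t : List ℕ} (h : s <+: t) : cyl t ⊆ cyl s := by
  intro y hy i
  have hi : (i : ℕ) < t.length := lt_of_lt_of_le i.2 h.length_le
  have := hy ⟨i, hi⟩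
  simpa [List.get_eq_getElem, List.IsPrefix.getElem h i.2] using this

/-- The restriction of an element of Baire space to a finite sequence. -/
def res (y : ℕ → ℕ) (m : ℕ) : List ℕ := (List.range m).map y

@[simp] lemma res_length (y : ℕ → ℕ) (m : ℕ) : (res y m).length = m := by
  simp [res]

lemma res_getElem (y : ℕ → ℕ) {m i : ℕ} (h : i < (res y m).length) :
    (res y m)[i] = y i := by
  simp [res]

lemma mem_cyl_res (y : ℕ → ℕ) (m : ℕ) : y ∈ cyl (res y m) := by
  intro i
  simp [List.get_eq_getElem, res_getElem]

lemma res_prefix (y : ℕ → ℕ) {a b : ℕ} (h : a ≤ b) : res y a <+: res y b := by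
  have : res y a = (res y b).take a := by
    simp [res, ← List.map_take, List.take_range, Nat.min_eq_left h]
  rw [this]
  exact List.take_prefix _ _

lemma res_eq_of_mem_cyl {y : ℕ → ℕ} {s : List ℕ} (h : y ∈ cyl s) :
    res y s.length = s := by
  apply List.ext_getElem (by simp)
  intro i h1 h2
  rw [res_getElem]
  exact h ⟨i, h2⟩

/-- Maximum (with 0) of a finite sequence. -/
def mxv (s : List ℕ) : ℕ := s.foldr max 0

lemma le_mxv {s : List ℕ} {a : ℕ} (h : a ∈ s) : a ≤ mxv s := by
  induction s with
  | nil => simp at h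
  | cons b t ih =>
    rcases List.mem_cons.1 h with rfl | h
    · exact le_max_left _ _
    · exact le_trans (ih h) (le_max_right _ _)

lemma mxv_le {s : List ℕ} {n : ℕ} (h : ∀ a ∈ s, a ≤ n) : mxv s ≤ n := by
  induction s with
  | nil => simp [mxv]
  | cons b t ih =>
    show max b (mxv t) ≤ n
    exact max_le (h b List.mem_cons_self) (ih fun a ha => h a (List.mem_cons_of_mem _ ha))

lemma mxv_le_of_prefix {s t : List ℕ} (h : s <+: t) : mxv s ≤ mxv t :=
  mxv_le fun a ha => le_mxv (h.sublist.subset ha)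

/-! ### σ-compactness helpers -/

lemma sigma_closed {α : Type*} [TopologicalSpace α] {S C : Set α}
    (hS : IsSigmaCompact S) (hC : IsClosed C) (hsub : C ⊆ S) : IsSigmaCompact C := by
  obtain ⟨K, hK, hU⟩ := hS
  refine ⟨fun n => K n ∩ C, fun n => (hK n).inter_right hC, ?_⟩
  rw [← Set.iUnion_inter, hU, Set.inter_eq_self_of_subset_right hsub]

/-- `Big X s` means `X ∩ cyl s` is not σ-compact. -/
def Big (X : Set (ℕ → ℕ)) (s : List ℕ) : Prop := ¬ IsSigmaCompact (X ∩ cyl s)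

lemma big_nonempty {X : Set (ℕ → ℕ)} {s : List ℕ} (h : Big X s) :
    (X ∩ cyl s).Nonempty := by
  rcases Set.eq_empty_or_nonempty (X ∩ cyl s) with he | hne
  · exact absurd (he ▸ isSigmaCompact_empty) h
  · exact hne

lemma isClosed_inter_cyl {X : Set (ℕ → ℕ)} (hX : IsClosed X) (s : List ℕ) :
    IsClosed (X ∩ cyl s) := hX.inter (isClosed_cyl s)

lemma big_mono {X : Set (ℕ → ℕ)} (hX : IsClosed X) {s t : List ℕ}
    (h : s <+: t) (hb : Big X t) : Big X s := by
  intro hσ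
  exact hb (sigma_closed hσ (isClosed_inter_cyl hX t)
    (Set.inter_subset_inter_right X (cyl_anti h)))

/-- `Splits X t`: `t` is big and has infinitely many big one-step extensions. -/
def Splits (X : Set (ℕ → ℕ)) (t : List ℕ) : Prop :=
  Big X t ∧ {n | Big X (t ++ [n])}.Infinite

/-! ### The key lemma (Hurewicz-style): every big node has a splitting big extension -/

lemma lemA {X : Set (ℕ → ℕ)} (hX : IsClosed X) {s : List ℕ} (hs : Big X s) :
    ∃ t, s <+: t ∧ Splits X t := by
  classical
  by_contra hcon
  push_neg at hcon
  simp only [Splits, not_and, Set.not_infinite] at hcon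
  -- all big extensions have only finitely many big one-step extensions
  have hcon' : ∀ t, s <+: t → Big X t → {n | Big X (t ++ [n])}.Finite := hcon
  -- the set of big extensions of `s` of relative length `k`
  set BE : ℕ → Set (List ℕ) :=
    fun k => {t | s <+: t ∧ t.length = s.length + k ∧ Big X t} with hBE
  have hfin : ∀ k, (BE k).Finite := by
    intro k
    induction k with
    | zero =>
      apply Set.Finite.subset (Set.finite_singleton s)
      rintro t ⟨h1, h2, -⟩
      exact Set.mem_singleton_iff.2 (h1.eq_of_length (by omega)).symm
    | succ k ih =>
      have hsub : BE (k + 1) ⊆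
          ⋃ t ∈ BE k, (fun n => t ++ [n]) '' {n | Big X (t ++ [n])} := by
        rintro t' ⟨h1, h2, h3⟩
        have hne : t' ≠ [] := by
          intro he; rw [he] at h2; simp at h2
        have hsplit : t'.dropLast ++ [t'.getLast hne] = t' :=
          List.dropLast_append_getLast hne
        have hdlen : t'.dropLast.length = s.length + k := by
          simp [List.length_dropLast, h2]
        have hdpre : s <+: t'.dropLast := by
          have h5 : s = t'.take s.length := List.prefix_iff_eq_take.1 h1
          rw [List.dropLast_eq_take, List.prefix_iff_eq_take, List.take_take,
            show min s.length (t'.length - 1) = s.length from by omega]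
          exact h5
        have hdbig : Big X t'.dropLast := big_mono hX (List.dropLast_prefix t') h3
        refine Set.mem_biUnion (show t'.dropLast ∈ BE k from ⟨hdpre, hdlen, hdbig⟩) ?_
        refine ⟨t'.getLast hne, ?_, hsplit⟩
        show Big X (t'.dropLast ++ [t'.getLast hne])
        rw [hsplit]; exact h3
      exact Set.Finite.subset
        (Set.Finite.biUnion ih fun t ht => (hcon' t ht.1 ht.2.2).image _) hsub
  -- bounds on the values appearing in big extensions
  have hbound : ∀ k, ∃ B, ∀ t ∈ BE k, mxv t ≤ B := by
    intro k
    obtain ⟨B, hB⟩ := ((hfin k).image mxv).bddAbove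
    exact ⟨B, fun t ht => hB ⟨t, ht, rfl⟩⟩
  choose B hB using hbound
  -- the "kernel" of points whose restrictions stay big; it is compact
  set K : Set (ℕ → ℕ) :=
    X ∩ cyl s ∩ ⋂ k, ⋃ t ∈ BE k, cyl t with hK
  have hKclosed : IsClosed K :=
    ((isClosed_inter_cyl hX s).inter
      (isClosed_iInter fun k => (hfin k).isClosed_biUnion fun t _ => isClosed_cyl t))
  have hKsub : K ⊆ Set.pi Set.univ fun i => Set.Iic (B (i + 1)) := by
    intro y hy
    intro i _
    have := (Set.mem_iInter.1 hy.2) (i + 1)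
    obtain ⟨t, ht, hyt⟩ := Set.mem_iUnion₂.1 this
    have hlen : i < t.length := by
      rw [ht.2.1]; omega
    have : y i = t[i] := by
      simpa [List.get_eq_getElem] using hyt ⟨i, hlen⟩
    rw [Set.mem_Iic, this]
    exact le_trans (le_mxv (List.getElem_mem hlen)) (hB (i + 1) t ht)
  have hKcompact : IsCompact K := by
    refine IsCompact.of_isClosed_subset ?_ hKclosed hKsub
    exact isCompact_univ_pi fun i => (Set.finite_Iic _).isCompact
  -- the σ-compact remainder
  set D : List ℕ → Set (ℕ → ℕ) :=
    fun t => if Big X t then ∅ else X ∩ cyl t with hD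
  have hDsigma : ∀ t, IsSigmaCompact (D t) := by
    intro t
    by_cases h : Big X t
    · simp [hD, h, isSigmaCompact_empty]
    · simpa [hD, h] using not_not.1 h
  have hcover : X ∩ cyl s ⊆ K ∪ ⋃ t, D t := by
    intro y hy
    by_cases hyK : y ∈ K
    · exact Or.inl hyK
    · right
      have : ∃ k, y ∉ ⋃ t ∈ BE k, cyl t := by
        by_contra hall
        push_neg at hall
        exact hyK ⟨hy, Set.mem_iInter.2 hall⟩
      obtain ⟨k, hk⟩ := this
      set t := res y (s.length + k) with htdef
      have hyt : y ∈ cyl t := mem_cyl_res y _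
      have hpre : s <+: t := by
        have : s = res y s.length := (res_eq_of_mem_cyl hy.2).symm
        rw [this]
        exact res_prefix y (Nat.le_add_right _ _)
      have hnb : ¬ Big X t := by
        intro hb
        exact hk (Set.mem_biUnion ⟨hpre, by simp [htdef], hb⟩ hyt)
      refine Set.mem_iUnion.2 ⟨t, ?_⟩
      simp only [hD, if_neg hnb]
      exact ⟨hy.1, hyt⟩
  -- conclude σ-compactness of X ∩ cyl s, contradiction
  apply hs
  refine sigma_closed ?_ (isClosed_inter_cyl hX s) hcover
  have hUeq : K ∪ ⋃ t, D t = ⋃ o : Option (List ℕ), Option.elim o K D := by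
    ext x
    simp only [Set.mem_union, Set.mem_iUnion]
    constructor
    · rintro (h | ⟨t, ht⟩)
      · exact ⟨none, h⟩
      · exact ⟨some t, ht⟩
    · rintro ⟨o, ho⟩
      cases o with
      | none => exact Or.inl ho
      | some t => exact Or.inr ⟨t, ho⟩
  rw [hUeq]
  refine isSigmaCompact_iUnion _ fun o => ?_
  cases o with
  | none => exact hKcompact.isSigmaCompact
  | some t => exact hDsigma t

/-! ### One construction step -/

lemma step {X : Set (ℕ → ℕ)} (hX : IsClosed X) (hmono : ∀ x ∈ X, StrictMono x)
    {u : List ℕ} (hu : Splits X u) (m : ℕ) :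
    ∃ u', u <+: u' ∧ u.length < u'.length ∧ Splits X u' ∧
      ∀ p (hp : p < u'.length), u.length ≤ p → m < u'[p] := by
  obtain ⟨n, hnbig, hnm⟩ := hu.2.exists_gt m
  obtain ⟨u', hpre, hu'⟩ := lemA hX hnbig
  have hupre : u <+: u' := (List.prefix_append u [n]).trans hpre
  have hlen : u.length + 1 ≤ u'.length := by
    have := hpre.length_le
    simpa using this
  refine ⟨u', hupre, by omega, hu', ?_⟩
  intro p hp hup
  obtain ⟨x, hxX, hxcyl⟩ := big_nonempty hu'.1
  have hxp : x p = u'[p] := by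
    simpa [List.get_eq_getElem] using hxcyl ⟨p, hp⟩
  have hul : u.length < u'.length := by omega
  have hxu : x u.length = n := by
    have h1 : x u.length = u'[u.length] := by
      simpa [List.get_eq_getElem] using hxcyl ⟨u.length, hul⟩
    have h2 : u'[u.length] = (u ++ [n])[u.length]'(by simp) :=
      (List.IsPrefix.getElem hpre (by simp)).symm
    have h3 : (u ++ [n])[u.length]'(by simp) = n := by
      simp
    rw [h1, h2, h3]
  have : n ≤ x p := by
    rw [← hxu]
    exact (hmono x hxX).monotone hup
  omega

end Stmt0Aux

open Stmt0Aux

/-- Every closed subset `X` of `[ω]^ω` (viewed as the set of strictly increasing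
elements of Baire space, via increasing enumerations) such that any two elements
of `X` have infinite intersection (of their ranges) is σ-compact. -/
theorem stmt0 (X : Set (ℕ → ℕ)) (hclosed : IsClosed X)
    (hmono : ∀ x ∈ X, StrictMono x)
    (hinter : ∀ x ∈ X, ∀ y ∈ X, (Set.range x ∩ Set.range y).Infinite) :
    IsSigmaCompact X := by
  by_contra hσ
  have hbigroot : Big X [] := by
    have : X ∩ cyl [] = X := by
      ext y; simp [cyl]
    rw [Big, this]; exact hσ
  obtain ⟨t0, -, ht0⟩ := lemA hclosed hbigroot
  -- the state space and step relation
  let S := {p : List ℕ × List ℕ // Splits X p.1 ∧ Splits X p.2}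
  let Rel : List ℕ × List ℕ → List ℕ × List ℕ → Prop := fun p q =>
    p.1 <+: q.1 ∧ p.2 <+: q.2 ∧ p.1.length < q.1.length ∧ p.2.length < q.2.length ∧
    (∀ i (h : i < q.1.length), p.1.length ≤ i → mxv p.2 < q.1[i]) ∧
    (∀ i (h : i < q.2.length), p.2.length ≤ i → mxv q.1 < q.2[i])
  have key : ∀ p : S, ∃ q : S, Rel p.1 q.1 := by
    rintro ⟨⟨u, v⟩, hu, hv⟩
    obtain ⟨u', hupre, hulen, hu', hunew⟩ := step hclosed hmono hu (mxv v)
    obtain ⟨v', hvpre, hvlen, hv', hvnew⟩ := step hclosed hmono hv (mxv u')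
    exact ⟨⟨(u', v'), hu', hv'⟩, hupre, hvpre, hulen, hvlen, hunew, hvnew⟩
  choose g hg using key
  let f : ℕ → S := fun n => Nat.rec ⟨(t0, t0), ht0, ht0⟩ (fun _ p => g p) n
  have hf : ∀ n, Rel (f n).1 (f (n + 1)).1 := fun n => hg (f n)
  set u : ℕ → List ℕ := fun n => (f n).1.1 with hu_def
  set v : ℕ → List ℕ := fun n => (f n).1.2 with hv_def
  have hfu : ∀ n, u n <+: u (n + 1) := fun n => (hf n).1
  have hfv : ∀ n, v n <+: v (n + 1) := fun n => (hf n).2.1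
  have hflen_u : ∀ n, (u n).length < (u (n + 1)).length := fun n => (hf n).2.2.1
  have hflen_v : ∀ n, (v n).length < (v (n + 1)).length := fun n => (hf n).2.2.2.1
  have hfent_u : ∀ n i (h : i < (u (n + 1)).length), (u n).length ≤ i →
      mxv (v n) < (u (n + 1))[i] := fun n => (hf n).2.2.2.2.1
  have hfent_v : ∀ n i (h : i < (v (n + 1)).length), (v n).length ≤ i →
      mxv (u (n + 1)) < (v (n + 1))[i] := fun n => (hf n).2.2.2.2.2
  -- basic chain facts
  have hchain_u : ∀ i j, i ≤ j → u i <+: u j := by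
    intro i j hij
    induction j, hij using Nat.le_induction with
    | base => exact List.prefix_refl _
    | succ j hij ih => exact ih.trans (hfu j)
  have hchain_v : ∀ i j, i ≤ j → v i <+: v j := by
    intro i j hij
    induction j, hij using Nat.le_induction with
    | base => exact List.prefix_refl _
    | succ j hij ih => exact ih.trans (hfv j)
  have hlen_u : ∀ i, i ≤ (u i).length := by
    intro i
    induction i with
    | zero => omega
    | succ i ih => have := hflen_u i; omega
  have hlen_v : ∀ i, i ≤ (v i).length := by
    intro i
    induction i with
    | zero => omega
    | succ i ih => have := hflen_v i; omega
  have hmxv_u : ∀ i j, i ≤ j → mxv (u i) ≤ mxv (u j) :=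
    fun i j hij => mxv_le_of_prefix (hchain_u i j hij)
  have hmxv_v : ∀ i j, i ≤ j → mxv (v i) ≤ mxv (v j) :=
    fun i j hij => mxv_le_of_prefix (hchain_v i j hij)
  -- the two limit branches
  let y : ℕ → ℕ := fun a => (u (a + 1)).getD a 0
  let z : ℕ → ℕ := fun a => (v (a + 1)).getD a 0
  have hy_eq : ∀ k a (h : a < (u k).length), y a = (u k)[a] := by
    intro k a h
    have ha1 : a < (u (a + 1)).length := lt_of_lt_of_le (by omega) (hlen_u (a + 1))
    show (u (a + 1)).getD a 0 = (u k)[a]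
    rw [List.getD_eq_getElem _ _ ha1]
    rcases le_total k (a + 1) with hka | hka
    · exact (List.IsPrefix.getElem (hchain_u k (a + 1) hka) h).symm
    · exact List.IsPrefix.getElem (hchain_u (a + 1) k hka) ha1
  have hz_eq : ∀ k a (h : a < (v k).length), z a = (v k)[a] := by
    intro k a h
    have ha1 : a < (v (a + 1)).length := lt_of_lt_of_le (by omega) (hlen_v (a + 1))
    show (v (a + 1)).getD a 0 = (v k)[a]
    rw [List.getD_eq_getElem _ _ ha1]
    rcases le_total k (a + 1) with hka | hka
    · exact (List.IsPrefix.getElem (hchain_v k (a + 1) hka) h).symm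
    · exact List.IsPrefix.getElem (hchain_v (a + 1) k hka) ha1
  -- membership of the branches in X
  have hbranch : ∀ (w : ℕ → List ℕ), (∀ k, Splits X (w k)) →
      (∀ k a (h : a < (w k).length), (fun a => (w (a + 1)).getD a 0) a = (w k)[a]) →
      (∀ k, k ≤ (w k).length) → (fun a => (w (a + 1)).getD a 0) ∈ X := by
    intro w hsp hweq hwlen
    choose x hx using fun k => big_nonempty (hsp k).1
    set yy : ℕ → ℕ := fun a => (w (a + 1)).getD a 0 with hyy
    have htend : Tendsto x atTop (nhds yy) := by
      rw [tendsto_pi_nhds]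
      intro i
      apply tendsto_atTop_of_eventually_const (i₀ := i + 1)
      intro k hk
      have hik : i < (w k).length := lt_of_lt_of_le (by omega) (hwlen k)
      have : x k i = (w k)[i] := by
        simpa [List.get_eq_getElem] using (hx k).2 ⟨i, hik⟩
      rw [this, ← hweq k i hik]
    exact hclosed.mem_of_tendsto htend (Filter.Eventually.of_forall fun k => (hx k).1)
  have hyX : y ∈ X := hbranch u (fun k => (f k).2.1) hy_eq hlen_u
  have hzX : z ∈ X := hbranch v (fun k => (f k).2.2) hz_eq hlen_v
  -- locating positions in stages
  have hstage_u : ∀ a, (u 0).length ≤ a →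
      ∃ i, (u i).length ≤ a ∧ a < (u (i + 1)).length := by
    intro a ha
    classical
    set P : ℕ → Prop := fun i => (u i).length ≤ a with hP
    have hP0 : P 0 := ha
    set i := Nat.findGreatest P a with hi
    have hPi : P i := Nat.findGreatest_spec (Nat.zero_le a) hP0
    refine ⟨i, hPi, ?_⟩
    by_cases hia : i + 1 ≤ a
    · have := Nat.findGreatest_is_greatest (lt_of_le_of_lt (le_refl i) (Nat.lt_succ_self i)) hia
      simpa [hP, not_le] using this
    · have : a < i + 1 := by omega
      exact lt_of_lt_of_le this (hlen_u (i + 1))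
  have hstage_v : ∀ b, (v 0).length ≤ b →
      ∃ j, (v j).length ≤ b ∧ b < (v (j + 1)).length := by
    intro b hb
    classical
    set P : ℕ → Prop := fun j => (v j).length ≤ b with hP
    have hP0 : P 0 := hb
    set j := Nat.findGreatest P b with hj
    have hPj : P j := Nat.findGreatest_spec (Nat.zero_le b) hP0
    refine ⟨j, hPj, ?_⟩
    by_cases hjb : j + 1 ≤ b
    · have := Nat.findGreatest_is_greatest (Nat.lt_succ_self j) hjb
      simpa [hP, not_le] using this
    · have : b < j + 1 := by omega
      exact lt_of_lt_of_le this (hlen_v (j + 1))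
  -- disjointness of the ranges beyond the common stem
  have hcore : ∀ a b, (u 0).length ≤ a → (v 0).length ≤ b → y a ≠ z b := by
    intro a b ha hb
    obtain ⟨i, hi1, hi2⟩ := hstage_u a ha
    obtain ⟨j, hj1, hj2⟩ := hstage_v b hb
    have hya : y a = (u (i + 1))[a]'hi2 := hy_eq (i + 1) a hi2
    have hzb : z b = (v (j + 1))[b]'hj2 := hz_eq (j + 1) b hj2
    have hylow : mxv (v i) < y a := by
      rw [hya]; exact hfent_u i a hi2 hi1
    have hyup : y a ≤ mxv (u (i + 1)) := by
      rw [hya]; exact le_mxv (List.getElem_mem hi2)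
    have hzlow : mxv (u (j + 1)) < z b := by
      rw [hzb]; exact hfent_v j b hj2 hj1
    have hzup : z b ≤ mxv (v (j + 1)) := by
      rw [hzb]; exact le_mxv (List.getElem_mem hj2)
    rcases le_or_gt i j with hij | hij
    · have : mxv (u (i + 1)) ≤ mxv (u (j + 1)) := hmxv_u (i + 1) (j + 1) (by omega)
      omega
    · have : mxv (v (j + 1)) ≤ mxv (v i) := hmxv_v (j + 1) i (by omega)
      omega
  -- the ranges intersect in a finite set: contradiction
  have hfin : (Set.range y ∩ Set.range z).Finite := by
    apply Set.Finite.subset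
      (((Set.finite_Iio (u 0).length).image y).union
        ((Set.finite_Iio (v 0).length).image z))
    rintro c ⟨⟨a, rfl⟩, ⟨b, hb⟩⟩
    by_cases hA : a < (u 0).length
    · exact Or.inl ⟨a, hA, rfl⟩
    · by_cases hB : b < (v 0).length
      · exact Or.inr ⟨b, hB, hb⟩
      · exact absurd hb.symm (hcore a b (by omega) (by omega))
  exact hinter y hyX z hzX hfin
end

section
/- If I is a maximal independent family on ω, then the closure of I in 2^ω (identifying sets with characteristic functions) is not an independent family; in particular there exists x in the closure of I with x ∉ I. -/
/-- Independent family on `ω`, with sets identified with their characteristic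
functions in Cantor space `2^ω`: every finite Boolean combination is infinite. -/
def BoolIndep (I : Set (ℕ → Bool)) : Prop :=
  ∀ A B : Finset (ℕ → Bool), ↑A ⊆ I → ↑B ⊆ I → Disjoint A B →
    {n : ℕ | (∀ x ∈ A, x n = true) ∧ (∀ x ∈ B, x n = false)}.Infinite

/-- Maximal independent family. -/
def MaxBoolIndep (I : Set (ℕ → Bool)) : Prop :=
  BoolIndep I ∧ ∀ J : Set (ℕ → Bool), BoolIndep J → I ⊆ J → J = I

lemma cover (I : Set (ℕ → Bool)) (hInd : BoolIndep I) (hcl : IsClosed I)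
    (a b p j : ℕ) :
    ∃ N : Finset ℕ, (∀ n ∈ N, j < n) ∧
      ∀ (f : Fin a → ℕ → Bool) (g : Fin b → ℕ → Bool),
        (∀ i, f i ∈ I) → (∀ i, g i ∈ I) →
        (∀ i i', ∃ n, n < p ∧ f i n ≠ g i' n) →
        ∃ n ∈ N, (∀ i, f i n = true) ∧ (∀ i, g i n = false) := by
  classical
  set X : Set ((Fin a → ℕ → Bool) × (Fin b → ℕ → Bool)) :=
    {fg | (∀ i, fg.1 i ∈ I) ∧ (∀ i, fg.2 i ∈ I) ∧
      ∀ i i', ∃ n, n < p ∧ fg.1 i n ≠ fg.2 i' n} with hX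
  have hXeq : X = (⋂ i, (fun fg : (Fin a → ℕ → Bool) × (Fin b → ℕ → Bool) => fg.1 i) ⁻¹' I) ∩
      ((⋂ i, (fun fg : (Fin a → ℕ → Bool) × (Fin b → ℕ → Bool) => fg.2 i) ⁻¹' I) ∩
       (⋂ i, ⋂ i', ⋃ n ∈ Finset.range p,
         {fg : (Fin a → ℕ → Bool) × (Fin b → ℕ → Bool) | fg.1 i n ≠ fg.2 i' n})) := by
    ext fg
    simp only [hX, Set.mem_setOf_eq, Set.mem_inter_iff, Set.mem_iInter, Set.mem_preimage,
      Set.mem_iUnion, Finset.mem_range, Set.mem_setOf_eq, exists_prop]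
  have hXc : IsClosed X := by
    rw [hXeq]
    refine IsClosed.inter ?_ (IsClosed.inter ?_ ?_)
    · exact isClosed_iInter fun i => hcl.preimage ((continuous_apply i).comp continuous_fst)
    · exact isClosed_iInter fun i => hcl.preimage ((continuous_apply i).comp continuous_snd)
    · refine isClosed_iInter fun i => isClosed_iInter fun i' => ?_
      refine Set.Finite.isClosed_biUnion (Finset.range p).finite_toSet fun n _ => ?_
      have hcont : Continuous (fun fg : (Fin a → ℕ → Bool) × (Fin b → ℕ → Bool) =>
          (fg.1 i n, fg.2 i' n)) := by
        exact Continuous.prodMk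
          ((continuous_apply n).comp ((continuous_apply i).comp continuous_fst))
          ((continuous_apply n).comp ((continuous_apply i').comp continuous_snd))
      exact (isClosed_discrete {uv : Bool × Bool | uv.1 ≠ uv.2}).preimage hcont
  have hXcpt : IsCompact X := hXc.isCompact
  set U : ℕ → Set ((Fin a → ℕ → Bool) × (Fin b → ℕ → Bool)) := fun n =>
    {fg | (∀ i, fg.1 i n = true) ∧ (∀ i, fg.2 i n = false)} with hU
  have hUopen : ∀ n, IsOpen (U n) := by
    intro n
    have h1 : U n = (⋂ i, (fun fg : (Fin a → ℕ → Bool) × (Fin b → ℕ → Bool) =>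
        fg.1 i n) ⁻¹' {true}) ∩
        (⋂ i, (fun fg : (Fin a → ℕ → Bool) × (Fin b → ℕ → Bool) => fg.2 i n) ⁻¹' {false}) := by
      ext fg
      simp [hU]
    rw [h1]
    refine IsOpen.inter ?_ ?_
    · exact isOpen_iInter_of_finite fun i => (isOpen_discrete _).preimage
        ((continuous_apply n).comp ((continuous_apply i).comp continuous_fst))
    · exact isOpen_iInter_of_finite fun i => (isOpen_discrete _).preimage
        ((continuous_apply n).comp ((continuous_apply i).comp continuous_snd))
  set U' : ℕ → Set ((Fin a → ℕ → Bool) × (Fin b → ℕ → Bool)) := fun n =>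
    if j < n then U n else ∅ with hU'
  have hU'open : ∀ n, IsOpen (U' n) := by
    intro n
    by_cases h : j < n
    · simpa [U', h] using hUopen n
    · simp [U', h]
  have hings : X ⊆ ⋃ n, U' n := by
    intro fg hfg
    obtain ⟨hf, hg, hsep⟩ := hfg
    set A : Finset (ℕ → Bool) := Finset.univ.image fg.1 with hA
    set B : Finset (ℕ → Bool) := Finset.univ.image fg.2 with hB
    have hAI : ↑A ⊆ I := by
      intro y hy
      simp only [hA, Finset.coe_image, Set.mem_image] at hy
      obtain ⟨i, _, rfl⟩ := hy
      exact hf i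
    have hBI : ↑B ⊆ I := by
      intro y hy
      simp only [hB, Finset.coe_image, Set.mem_image] at hy
      obtain ⟨i, _, rfl⟩ := hy
      exact hg i
    have hdisj : Disjoint A B := by
      rw [Finset.disjoint_left]
      intro y hyA hyB
      simp only [hA, Finset.mem_image, Finset.mem_univ, true_and] at hyA
      simp only [hB, Finset.mem_image, Finset.mem_univ, true_and] at hyB
      obtain ⟨i, rfl⟩ := hyA
      obtain ⟨i', hii⟩ := hyB
      obtain ⟨n, _, hne⟩ := hsep i i'
      exact hne (by rw [hii])
    obtain ⟨n, hnS, hjn⟩ := (hInd A B hAI hBI hdisj).exists_gt j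
    refine Set.mem_iUnion.mpr ⟨n, ?_⟩
    rw [hU']
    simp only [hjn, if_pos]
    refine ⟨fun i => ?_, fun i => ?_⟩
    · exact hnS.1 _ (Finset.mem_image.mpr ⟨i, Finset.mem_univ i, rfl⟩)
    · exact hnS.2 _ (Finset.mem_image.mpr ⟨i, Finset.mem_univ i, rfl⟩)
  obtain ⟨t, ht⟩ := hXcpt.elim_finite_subcover U' hU'open hings
  refine ⟨t.filter (fun n => j < n), fun n hn => (Finset.mem_filter.mp hn).2, ?_⟩
  intro f g hf hg hsep
  have hmem : (f, g) ∈ X := ⟨hf, hg, hsep⟩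
  obtain ⟨n, hnt, hfgU⟩ := Set.mem_iUnion₂.mp (ht hmem)
  by_cases hjn : j < n
  · simp only [U', if_pos hjn] at hfgU
    exact ⟨n, Finset.mem_filter.mpr ⟨hnt, hjn⟩, hfgU⟩
  · simp only [U', if_neg hjn] at hfgU
    exact absurd hfgU (Set.notMem_empty _)


open Classical in

/-- separation witness for distinct functions -/
noncomputable def sepWit (yz : (ℕ → Bool) × (ℕ → Bool)) : ℕ :=
  if h : yz.1 ≠ yz.2 then (Function.ne_iff.mp h).choose else 0

lemma sepWit_spec {y z : ℕ → Bool} (h : y ≠ z) :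
    y (sepWit (y, z)) ≠ z (sepWit (y, z)) := by
  rw [sepWit]
  rw [dif_pos h]
  exact (Function.ne_iff.mp h).choose_spec

/-- enumeration of requirements, each appearing unboundedly often -/
def reqOf (k : ℕ) : ℕ × ℕ × ℕ × Bool :=
  (k.unpair.1, k.unpair.2.unpair.1, k.unpair.2.unpair.2.unpair.1,
    decide (k.unpair.2.unpair.2.unpair.2 = 0))

def reqEnum (s : ℕ) : ℕ × ℕ × ℕ × Bool := reqOf s.unpair.2

lemma reqEnum_spec (a b p : ℕ) (ε : Bool) (K : ℕ) :
    ∃ s, K < s ∧ reqEnum s = (a, b, p, ε) := by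
  refine ⟨Nat.pair (K + 1) (Nat.pair a (Nat.pair b (Nat.pair p (if ε then 0 else 1)))),
    ?_, ?_⟩
  · have := Nat.left_le_pair (K + 1)
      (Nat.pair a (Nat.pair b (Nat.pair p (if ε then 0 else 1))))
    omega
  · simp only [reqEnum, reqOf, Nat.unpair_pair]
    cases ε <;> simp

noncomputable section

variable (I : Set (ℕ → Bool)) (hInd : BoolIndep I) (hcl : IsClosed I)

def Nfor (a b p j : ℕ) : Finset ℕ := (cover I hInd hcl a b p j).choose

lemma Nfor_gt {a b p j : ℕ} : ∀ n ∈ Nfor I hInd hcl a b p j, j < n :=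
  (cover I hInd hcl a b p j).choose_spec.1

lemma Nfor_cov {a b p j : ℕ} :
    ∀ (f : Fin a → ℕ → Bool) (g : Fin b → ℕ → Bool),
      (∀ i, f i ∈ I) → (∀ i, g i ∈ I) →
      (∀ i i', ∃ n, n < p ∧ f i n ≠ g i' n) →
      ∃ n ∈ Nfor I hInd hcl a b p j, (∀ i, f i n = true) ∧ (∀ i, g i n = false) :=
  (cover I hInd hcl a b p j).choose_spec.2

variable (L : ℕ)

def st : ℕ → ℕ × (ℕ → Bool)
  | 0 => (L, fun _ => true)
  | s + 1 =>
    let mv := st s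
    let r := reqEnum s
    let N := Nfor I hInd hcl r.1 r.2.1 r.2.2.1 mv.1
    (max (mv.1 + 1) (N.sup id), fun n => if n ∈ N then r.2.2.2 else mv.2 n)

lemma st_m_lt (s : ℕ) : (st I hInd hcl L s).1 < (st I hInd hcl L (s + 1)).1 := by
  rw [st]
  exact lt_of_lt_of_le (Nat.lt_succ_self _) (le_max_left _ _)

lemma st_m_ge (s : ℕ) : L + s ≤ (st I hInd hcl L s).1 := by
  induction s with
  | zero => simp [st]
  | succ s ih => have := st_m_lt I hInd hcl L s; omega

lemma st_m_mono {s t : ℕ} (h : s ≤ t) : (st I hInd hcl L s).1 ≤ (st I hInd hcl L t).1 :=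
  monotone_nat_of_le_succ (fun u => le_of_lt (st_m_lt I hInd hcl L u)) h

lemma st_stable_step (s : ℕ) {n : ℕ} (hn : n ≤ (st I hInd hcl L s).1) :
    (st I hInd hcl L (s + 1)).2 n = (st I hInd hcl L s).2 n := by
  have key : n ∉ Nfor I hInd hcl (reqEnum s).1 (reqEnum s).2.1 (reqEnum s).2.2.1
      (st I hInd hcl L s).1 := by
    intro hmem
    exact absurd (Nfor_gt I hInd hcl _ hmem) (by omega)
  conv_lhs => rw [st]
  simp only [if_neg key]

lemma st_stable {s t : ℕ} (h : s ≤ t) {n : ℕ} (hn : n ≤ (st I hInd hcl L s).1) :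
    (st I hInd hcl L t).2 n = (st I hInd hcl L s).2 n := by
  induction t with
  | zero => have : s = 0 := Nat.le_zero.mp h; rw [this]
  | succ t ih =>
    rcases Nat.lt_or_ge s (t + 1) with h' | h'
    · have hst : s ≤ t := Nat.lt_succ_iff.mp h'
      rw [st_stable_step I hInd hcl L t (le_trans hn (st_m_mono I hInd hcl L hst))]
      exact ih hst
    · have : s = t + 1 := le_antisymm h h'
      rw [this]

def xfun : ℕ → Bool := fun n => (st I hInd hcl L (n + 1)).2 n

lemma xfun_eq {s n : ℕ} (hn : n ≤ (st I hInd hcl L s).1) :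
    xfun I hInd hcl L n = (st I hInd hcl L s).2 n := by
  rcases Nat.le_total (n + 1) s with h | h
  · have hn1 : n ≤ (st I hInd hcl L (n + 1)).1 := by
      have := st_m_ge I hInd hcl L (n + 1); omega
    rw [xfun, st_stable I hInd hcl L h hn1]
  · rw [xfun, st_stable I hInd hcl L h hn]

lemma xfun_init {n : ℕ} (hn : n ≤ L) : xfun I hInd hcl L n = true := by
  have : xfun I hInd hcl L n = (st I hInd hcl L 0).2 n :=
    xfun_eq I hInd hcl L (by simpa [st] using hn)
  rw [this]; rfl

lemma xfun_meet {s a b p : ℕ} {ε : Bool} (hes : reqEnum s = (a, b, p, ε))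
    (f : Fin a → ℕ → Bool) (g : Fin b → ℕ → Bool)
    (hf : ∀ i, f i ∈ I) (hg : ∀ i, g i ∈ I)
    (hsep : ∀ i i', ∃ n, n < p ∧ f i n ≠ g i' n) :
    ∃ n, (st I hInd hcl L s).1 < n ∧ (∀ i, f i n = true) ∧ (∀ i, g i n = false) ∧
      xfun I hInd hcl L n = ε := by
  have hcov := Nfor_cov I hInd hcl (a := a) (b := b) (p := p)
    (j := (st I hInd hcl L s).1) f g hf hg hsep
  obtain ⟨n, hnN, hpat⟩ := hcov
  have hgt : (st I hInd hcl L s).1 < n := Nfor_gt I hInd hcl n hnN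
  have hle : n ≤ (st I hInd hcl L (s + 1)).1 := by
    have h1 : n ≤ (Nfor I hInd hcl a b p (st I hInd hcl L s).1).sup id :=
      Finset.le_sup (f := id) hnN
    rw [st, hes]
    exact le_trans h1 (le_max_right _ _)
  have hx : xfun I hInd hcl L n = (st I hInd hcl L (s + 1)).2 n :=
    xfun_eq I hInd hcl L hle
  refine ⟨n, hgt, hpat.1, hpat.2, ?_⟩
  rw [hx]
  conv_lhs => rw [st]
  simp only [hes, if_pos hnN]


end

lemma extend (I : Set (ℕ → Bool)) (hInd : BoolIndep I) (hcl : IsClosed I) :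
    ∃ x, x ∉ I ∧ BoolIndep (insert x I) := by
  classical
  have htt : (fun _ => true) ∉ I := by
    intro h
    have h2 := hInd ∅ {fun _ => true} (by simp) (by simpa using h) (by simp)
    have hempty : {n : ℕ | (∀ x ∈ (∅ : Finset (ℕ → Bool)), x n = true) ∧
        ∀ x ∈ ({fun _ => true} : Finset (ℕ → Bool)), x n = false} = ∅ := by
      ext n; simp
    rw [hempty] at h2
    exact Set.not_infinite.mpr Set.finite_empty h2
  have hopen : IsOpen Iᶜ := hcl.isOpen_compl
  obtain ⟨F, u, hFu, hsub⟩ := isOpen_pi_iff.mp hopen _ htt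
  set L := F.sup id with hLdef
  have hLP : ∀ y : ℕ → Bool, (∀ n ≤ L, y n = true) → y ∉ I := by
    intro y hy
    have hmem : y ∈ Set.pi (↑F : Set ℕ) u := by
      intro n hn
      have h1 : y n = true := hy n (Finset.le_sup (f := id) hn)
      rw [h1]
      exact (hFu n hn).2
    exact hsub hmem
  set x := xfun I hInd hcl L with hxdef
  have hxI : x ∉ I := hLP x fun n hn => xfun_init I hInd hcl L hn
  refine ⟨x, hxI, ?_⟩
  intro A B hA hB hdisj
  by_cases hxA : x ∈ A
  · have hxB : x ∉ B := fun h => Finset.disjoint_left.mp hdisj hxA h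
    set A' := A.erase x with hA'def
    have hA'I : ∀ y ∈ A', y ∈ I := by
      intro y hy
      have h1 := Finset.mem_erase.mp hy
      rcases Set.mem_insert_iff.mp (hA (Finset.mem_coe.mpr h1.2)) with h | h
      · exact absurd h h1.1
      · exact h
    have hBI : ∀ z ∈ B, z ∈ I := by
      intro z hz
      rcases Set.mem_insert_iff.mp (hB (Finset.mem_coe.mpr hz)) with h | h
      · exact absurd (h ▸ hz) hxB
      · exact h
    set a := A'.card
    set b := B.card
    set f : Fin a → ℕ → Bool := fun i => (A'.equivFin.symm i).1 with hfdef
    set g : Fin b → ℕ → Bool := fun i => (B.equivFin.symm i).1 with hgdef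
    have hfI : ∀ i, f i ∈ I := fun i => hA'I _ (A'.equivFin.symm i).2
    have hgI : ∀ i, g i ∈ I := fun i => hBI _ (B.equivFin.symm i).2
    have hsurjA : ∀ y ∈ A', ∃ i, f i = y := by
      intro y hy
      exact ⟨A'.equivFin ⟨y, hy⟩, by simp [hfdef]⟩
    have hsurjB : ∀ z ∈ B, ∃ i, g i = z := by
      intro z hz
      exact ⟨B.equivFin ⟨z, hz⟩, by simp [hgdef]⟩
    set p := ((A' ×ˢ B).sup sepWit) + 1 with hpdef
    have hsep : ∀ i i', ∃ n, n < p ∧ f i n ≠ g i' n := by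
      intro i i'
      have hyA : f i ∈ A' := (A'.equivFin.symm i).2
      have hzB : g i' ∈ B := (B.equivFin.symm i').2
      have hne : f i ≠ g i' := by
        intro h
        exact Finset.disjoint_left.mp hdisj (Finset.mem_of_mem_erase hyA) (h ▸ hzB)
      refine ⟨sepWit (f i, g i'), ?_, sepWit_spec hne⟩
      have hmem : (f i, g i') ∈ A' ×ˢ B := Finset.mem_product.mpr ⟨hyA, hzB⟩
      have := Finset.le_sup (f := sepWit) hmem
      omega
    apply Set.infinite_of_forall_exists_gt
    intro K
    obtain ⟨s, hKs, hes⟩ := reqEnum_spec a b p true K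
    obtain ⟨n, hn1, hfn, hgn, hxn⟩ := xfun_meet I hInd hcl L hes f g hfI hgI hsep
    have hKn : K < n := by have := st_m_ge I hInd hcl L s; omega
    refine ⟨n, ⟨?_, ?_⟩, hKn⟩
    · intro y hy
      by_cases hyx : y = x
      · rw [hyx]; exact hxn
      · obtain ⟨i, rfl⟩ := hsurjA y (Finset.mem_erase.mpr ⟨hyx, hy⟩)
        exact hfn i
    · intro z hz
      obtain ⟨i', rfl⟩ := hsurjB z hz
      exact hgn i'
  · by_cases hxB : x ∈ B
    · set B' := B.erase x with hB'def
      have hB'I : ∀ z ∈ B', z ∈ I := by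
        intro z hz
        have h1 := Finset.mem_erase.mp hz
        rcases Set.mem_insert_iff.mp (hB (Finset.mem_coe.mpr h1.2)) with h | h
        · exact absurd h h1.1
        · exact h
      have hAI : ∀ y ∈ A, y ∈ I := by
        intro y hy
        rcases Set.mem_insert_iff.mp (hA (Finset.mem_coe.mpr hy)) with h | h
        · exact absurd (h ▸ hy) hxA
        · exact h
      set a := A.card
      set b := B'.card
      set f : Fin a → ℕ → Bool := fun i => (A.equivFin.symm i).1 with hfdef
      set g : Fin b → ℕ → Bool := fun i => (B'.equivFin.symm i).1 with hgdef
      have hfI : ∀ i, f i ∈ I := fun i => hAI _ (A.equivFin.symm i).2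
      have hgI : ∀ i, g i ∈ I := fun i => hB'I _ (B'.equivFin.symm i).2
      have hsurjA : ∀ y ∈ A, ∃ i, f i = y := by
        intro y hy
        exact ⟨A.equivFin ⟨y, hy⟩, by simp [hfdef]⟩
      have hsurjB : ∀ z ∈ B', ∃ i, g i = z := by
        intro z hz
        exact ⟨B'.equivFin ⟨z, hz⟩, by simp [hgdef]⟩
      set p := ((A ×ˢ B').sup sepWit) + 1 with hpdef
      have hsep : ∀ i i', ∃ n, n < p ∧ f i n ≠ g i' n := by
        intro i i'
        have hyA : f i ∈ A := (A.equivFin.symm i).2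
        have hzB : g i' ∈ B' := (B'.equivFin.symm i').2
        have hne : f i ≠ g i' := by
          intro h
          exact Finset.disjoint_left.mp hdisj hyA (Finset.mem_of_mem_erase (h ▸ hzB))
        refine ⟨sepWit (f i, g i'), ?_, sepWit_spec hne⟩
        have hmem : (f i, g i') ∈ A ×ˢ B' := Finset.mem_product.mpr ⟨hyA, hzB⟩
        have := Finset.le_sup (f := sepWit) hmem
        omega
      apply Set.infinite_of_forall_exists_gt
      intro K
      obtain ⟨s, hKs, hes⟩ := reqEnum_spec a b p false K
      obtain ⟨n, hn1, hfn, hgn, hxn⟩ := xfun_meet I hInd hcl L hes f g hfI hgI hsep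
      have hKn : K < n := by have := st_m_ge I hInd hcl L s; omega
      refine ⟨n, ⟨?_, ?_⟩, hKn⟩
      · intro y hy
        obtain ⟨i, rfl⟩ := hsurjA y hy
        exact hfn i
      · intro z hz
        by_cases hzx : z = x
        · rw [hzx]; exact hxn
        · obtain ⟨i', rfl⟩ := hsurjB z (Finset.mem_erase.mpr ⟨hzx, hz⟩)
          exact hgn i'
    · have hAI : ↑A ⊆ I := by
        intro y hy
        rcases Set.mem_insert_iff.mp (hA hy) with h | h
        · exact absurd (h ▸ hy) (by simpa using hxA)
        · exact h
      have hBI : ↑B ⊆ I := by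
        intro z hz
        rcases Set.mem_insert_iff.mp (hB hz) with h | h
        · exact absurd (h ▸ hz) (by simpa using hxB)
        · exact h
      exact hInd A B hAI hBI hdisj

/-- If `I` is a maximal independent family, then the closure of `I` in `2^ω`
is not an independent family; in particular some point of the closure of `I`
does not belong to `I`. -/
theorem stmt3 (I : Set (ℕ → Bool)) (hI : MaxBoolIndep I) :
    ¬ BoolIndep (closure I) ∧ ∃ x ∈ closure I, x ∉ I := by
  have hnc : ¬ IsClosed I := by
    intro hcl
    obtain ⟨x, hxI, hJ⟩ := extend I hI.1 hcl
    have heq := hI.2 _ hJ (Set.subset_insert x I)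
    exact hxI (heq ▸ Set.mem_insert x I)
  constructor
  · intro h
    exact hnc (closure_eq_iff_isClosed.mp (hI.2 _ h subset_closure))
  · by_contra h
    push_neg at h
    have hsub : closure I ⊆ I := fun x hx => h x hx
    have : closure I = I := Set.Subset.antisymm hsub subset_closure
    exact hnc (closure_eq_iff_isClosed.mp this)
end

section
/- The dominating number d is less than or equal to i_cl, the least cardinality of a collection of closed subsets of P(ω) whose union is a maximal independent family. -/
/-- The dominating number `𝔡`: the least cardinality of a family `D ⊆ ω^ω` such
that every `f` is eventually strictly below some member of `D`. -/
noncomputable def domNumber : Cardinal :=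
  sInf {c : Cardinal | ∃ D : Set (ℕ → ℕ), c = Cardinal.mk D ∧
    ∀ f : ℕ → ℕ, ∃ g ∈ D, ∀ᶠ n in Filter.atTop, f n < g n}

/-- `𝔦_cl`: the least cardinality of a collection of closed subsets of `2^ω`
whose union is a maximal independent family. -/
noncomputable def iCl : Cardinal :=
  sInf {c : Cardinal | ∃ (ι : Type) (C : ι → Set (ℕ → Bool)), c = Cardinal.mk ι ∧
    (∀ i, IsClosed (C i)) ∧ MaxBoolIndep (⋃ i, C i)}

attribute [local instance] Classical.propDecidable

lemma wrapup {I : Set (ℕ → Bool)} (hI : MaxBoolIndep I) (Y : ℕ → Bool)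
    (MP : ∀ A B : Finset (ℕ → Bool), ↑A ⊆ I → ↑B ⊆ I → Disjoint A B → ∀ b : Bool,
      {m : ℕ | (∀ x ∈ A, x m = true) ∧ (∀ x ∈ B, x m = false) ∧ Y m = b}.Infinite) :
    False := by
  by_cases hY : Y ∈ I
  · have h := MP {Y} ∅ (by simpa using hY) (by simp) (by simp) false
    have : {m : ℕ | (∀ x ∈ ({Y} : Finset (ℕ → Bool)), x m = true) ∧
        (∀ x ∈ (∅ : Finset (ℕ → Bool)), x m = false) ∧ Y m = false} = ∅ := by
      ext m; simp
    rw [this] at h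
    exact h (Set.finite_empty)
  · have hind : BoolIndep (insert Y I) := by
      intro A B hA hB hAB
      by_cases hYA : Y ∈ A
      · have hYB : Y ∉ B := fun hYB => by
          exact (Finset.disjoint_left.1 hAB hYA) hYB
        have hA' : ↑(A.erase Y) ⊆ I := by
          intro x hx
          rcases Finset.mem_erase.1 (by exact_mod_cast hx) with ⟨hne, hxA⟩
          rcases hA hxA with h | h
          · exact absurd h hne
          · exact h
        have hB' : ↑B ⊆ I := by
          intro x hx
          rcases hB hx with h | h
          · exact absurd h (fun hh => hYB (hh ▸ hx))
          · exact h
        have := MP (A.erase Y) B hA' hB' (hAB.mono_left (Finset.erase_subset _ _)) true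
        refine this.mono ?_
        rintro m ⟨h1, h2, h3⟩
        refine ⟨fun x hxA' => ?_, h2⟩
        by_cases hxY : x = Y
        · rw [hxY]; exact h3
        · exact h1 x (Finset.mem_erase.2 ⟨hxY, hxA'⟩)
      · by_cases hYB : Y ∈ B
        · have hA' : ↑A ⊆ I := by
            intro x hx
            rcases hA hx with h | h
            · exact absurd h (fun hh => hYA (hh ▸ hx))
            · exact h
          have hB' : ↑(B.erase Y) ⊆ I := by
            intro x hx
            rcases Finset.mem_erase.1 (by exact_mod_cast hx) with ⟨hne, hxB⟩
            rcases hB hxB with h | h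
            · exact absurd h hne
            · exact h
          have := MP A (B.erase Y) hA' hB' (hAB.mono_right (Finset.erase_subset _ _)) false
          refine this.mono ?_
          rintro m ⟨h1, h2, h3⟩
          refine ⟨h1, fun x hxB' => ?_⟩
          by_cases hxY : x = Y
          · rw [hxY]; exact h3
          · exact h2 x (Finset.mem_erase.2 ⟨hxY, hxB'⟩)
        · have hA' : ↑A ⊆ I := by
            intro x hx
            rcases hA hx with h | h
            · exact absurd h (fun hh => hYA (hh ▸ hx))
            · exact h
          have hB' : ↑B ⊆ I := by
            intro x hx
            rcases hB hx with h | h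
            · exact absurd h (fun hh => hYB (hh ▸ hx))
            · exact h
          have := MP A B hA' hB' hAB true
          exact this.mono (fun m hm => ⟨hm.1, hm.2.1⟩)
    have := hI.2 (insert Y I) hind (Set.subset_insert _ _)
    exact hY (this ▸ Set.mem_insert Y I)
lemma finite_not_max {I : Set (ℕ → Bool)} (hI : MaxBoolIndep I) (hfin : I.Finite) :
    False := by
  classical
  set J : Finset (ℕ → Bool) := hfin.toFinset with hJ
  set cnt : ℕ → ℕ := fun m =>
    ((Finset.range (m+1)).filter (fun m' => ∀ x ∈ J, x m' = x m)).card with hcnt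
  set Y : ℕ → Bool := fun m => decide (Odd (cnt m)) with hYdef
  refine wrapup hI Y ?_
  intro A B hA hB hAB b
  set cell : Set ℕ := {m | ∀ x ∈ J, x m = decide (x ∈ A)} with hcelldef
  have hcell_inf : cell.Infinite := by
    have h := hI.1 (J.filter (· ∈ A)) (J.filter (· ∉ A))
      (by intro x hx; simp only [Finset.coe_filter, Set.mem_setOf_eq] at hx
          exact hfin.mem_toFinset.1 hx.1)
      (by intro x hx; simp only [Finset.coe_filter, Set.mem_setOf_eq] at hx
          exact hfin.mem_toFinset.1 hx.1)
      (by rw [Finset.disjoint_left]; intro x hx1 hx2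
          simp only [Finset.mem_filter] at hx1 hx2; exact hx2.2 hx1.2)
    refine Set.Infinite.mono ?_ h
    intro m hm
    simp only [Set.mem_setOf_eq, Finset.mem_filter] at hm ⊢
    intro x hxJ
    by_cases hxA : x ∈ A
    · simp [hxA, (hm.1 x ⟨hxJ, hxA⟩)]
    · simp [hxA, (hm.2 x ⟨hxJ, hxA⟩)]
  have hsub : ∀ m ∈ cell, (∀ x ∈ A, x m = true) ∧ (∀ x ∈ B, x m = false) := by
    intro m hm
    constructor
    · intro x hxA
      have := hm x (hfin.mem_toFinset.2 (hA hxA))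
      simpa [hxA] using this
    · intro x hxB
      have hxA : x ∉ A := Finset.disjoint_right.1 hAB hxB
      have := hm x (hfin.mem_toFinset.2 (hB hxB))
      simpa [hxA] using this
  have hkey : ∀ m ∈ cell, cnt m = ((Finset.range (m+1)).filter (· ∈ cell)).card := by
    intro m hm
    have heq : Finset.filter (fun m' => ∀ x ∈ J, x m' = x m) (Finset.range (m+1)) =
        Finset.filter (· ∈ cell) (Finset.range (m+1)) := by
      apply Finset.filter_congr
      intro m' _
      constructor
      · intro h x hxJ
        rw [h x hxJ]; exact hm x hxJ
      · intro h x hxJ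
        rw [h x hxJ]; exact (hm x hxJ).symm
    simp only [hcnt]
    rw [heq]
  -- step: next element flips parity
  have hstep : ∀ m1 ∈ cell, ∃ m2 ∈ cell, m1 < m2 ∧ cnt m2 = cnt m1 + 1 := by
    intro m1 hm1
    have hex : ∃ n, n ∈ cell ∧ m1 < n := by
      obtain ⟨n, hn, hlt⟩ := hcell_inf.exists_gt m1
      exact ⟨n, hn, hlt⟩
    set m2 := Nat.find hex with hm2def
    obtain ⟨hm2cell, hm2lt⟩ := Nat.find_spec hex
    refine ⟨m2, hm2cell, hm2lt, ?_⟩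
    rw [hkey m2 hm2cell, hkey m1 hm1]
    have hins : (Finset.range (m2+1)).filter (· ∈ cell) =
        insert m2 ((Finset.range (m1+1)).filter (· ∈ cell)) := by
      ext n
      simp only [Finset.mem_insert, Finset.mem_filter, Finset.mem_range, Nat.lt_succ_iff]
      constructor
      · rintro ⟨hn2, hncell⟩
        rcases eq_or_lt_of_le hn2 with h | h
        · exact Or.inl h
        · right
          refine ⟨?_, hncell⟩
          by_contra hgt
          push_neg at hgt
          exact absurd ⟨hncell, hgt⟩ (Nat.find_min hex h)
      · rintro (rfl | ⟨hn1, hncell⟩)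
        · exact ⟨le_refl _, hm2cell⟩
        · exact ⟨le_trans hn1 (le_of_lt hm2lt), hncell⟩
    rw [hins, Finset.card_insert_of_notMem]
    simp only [Finset.mem_filter, Finset.mem_range, Nat.lt_succ_iff]
    intro h
    exact absurd h.1 (not_le.2 hm2lt)
  -- conclude
  apply Set.infinite_of_forall_exists_gt
  intro a
  obtain ⟨m1, hm1cell, hm1gt⟩ := hcell_inf.exists_gt a
  by_cases hb : Y m1 = b
  · exact ⟨m1, ⟨(hsub m1 hm1cell).1, (hsub m1 hm1cell).2, hb⟩, hm1gt⟩
  · obtain ⟨m2, hm2cell, hlt, hcnt2⟩ := hstep m1 hm1cell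
    refine ⟨m2, ⟨(hsub m2 hm2cell).1, (hsub m2 hm2cell).2, ?_⟩, lt_trans hm1gt hlt⟩
    have hflip : Y m2 = !(Y m1) := by
      show decide (Odd (cnt m2)) = !decide (Odd (cnt m1))
      rw [hcnt2]
      by_cases ho : Odd (cnt m1) <;> simp [Nat.odd_add_one, ho]
    rw [hflip]
    revert hb; cases Y m1 <;> cases b <;> simp
lemma dom_not_countable (D : Set (ℕ → ℕ))
    (hD : ∀ f : ℕ → ℕ, ∃ g ∈ D, ∀ᶠ n in Filter.atTop, f n < g n) :
    ¬ (Cardinal.mk D ≤ Cardinal.aleph0) := by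
  intro h
  have hcnt : D.Countable := Set.countable_coe_iff.1 (Cardinal.mk_le_aleph0_iff.1 h)
  have hne : D.Nonempty := by
    obtain ⟨g, hg, -⟩ := hD (fun _ => 0); exact ⟨g, hg⟩
  obtain ⟨u, hu⟩ := (Set.countable_iff_exists_surjective hne).1 hcnt
  set fstar : ℕ → ℕ := fun n => (Finset.range (n+1)).sup (fun i => (u i : ℕ → ℕ) n) + 1
  obtain ⟨g, hgD, hgev⟩ := hD fstar
  obtain ⟨i, hi⟩ := hu ⟨g, hgD⟩
  rw [Filter.eventually_atTop] at hgev
  obtain ⟨n₀, hn₀⟩ := hgev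
  have hn := hn₀ (max n₀ i) (le_max_left _ _)
  have : g (max n₀ i) ≤ (Finset.range (max n₀ i + 1)).sup (fun j => (u j : ℕ → ℕ) (max n₀ i)) := by
    have := Finset.le_sup (f := fun j => (u j : ℕ → ℕ) (max n₀ i))
      (Finset.mem_range.2 (Nat.lt_succ_of_le (le_max_right n₀ i)))
    simpa [hi] using this
  have hfss : fstar (n₀ ⊔ i) =
      (Finset.range (n₀ ⊔ i + 1)).sup (fun j => (u j : ℕ → ℕ) (n₀ ⊔ i)) + 1 := rfl
  omega

lemma exists_max_indep : ∃ I : Set (ℕ → Bool), MaxBoolIndep I := by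
  classical
  have hz : ∀ c ⊆ {I : Set (ℕ → Bool) | BoolIndep I}, IsChain (· ⊆ ·) c →
      ∃ ub ∈ {I : Set (ℕ → Bool) | BoolIndep I}, ∀ s ∈ c, s ⊆ ub := by
    intro c hc hchain
    rcases c.eq_empty_or_nonempty with rfl | hcne
    · refine ⟨∅, ?_, by simp⟩
      intro A B hA hB hAB
      have hA' : A = ∅ := by simpa using hA
      have hB' : B = ∅ := by simpa using hB
      subst hA'; subst hB'
      simpa using Set.infinite_univ (α := ℕ)
    · refine ⟨⋃₀ c, ?_, fun s hs => Set.subset_sUnion_of_mem hs⟩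
      intro A B hA hB hAB
      have hdir : DirectedOn (· ⊆ ·) c := hchain.directedOn
      have hfin : (↑(A ∪ B) : Set (ℕ → Bool)) ⊆ ⋃₀ c := by
        intro x hx
        rcases Finset.mem_union.1 (by exact_mod_cast hx) with h | h
        · exact hA h
        · exact hB h
      have : ∃ t ∈ c, (↑(A ∪ B) : Set (ℕ → Bool)) ⊆ t := by
        rw [Set.sUnion_eq_biUnion] at hfin
        exact DirectedOn.exists_mem_subset_of_finset_subset_biUnion hcne
          (hdir.mono' (fun a _ b _ h => h)) hfin
      obtain ⟨t, htc, hsub⟩ := this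
      have htind : BoolIndep t := hc htc
      exact htind A B (fun x hx => hsub (by simp [Finset.mem_union] at *; tauto))
        (fun x hx => hsub (by simp [Finset.mem_union] at *; tauto)) hAB
  obtain ⟨m, hm⟩ := zorn_subset {I : Set (ℕ → Bool) | BoolIndep I} hz
  exact ⟨m, hm.1, fun J hJ hsub => le_antisymm (hm.2 hJ hsub) hsub⟩
set_option maxHeartbeats 1000000 in
lemma compact_bound {ι : Type} (C : ι → Set (ℕ → Bool)) (hcl : ∀ i, IsClosed (C i))
    (hind : BoolIndep (⋃ i, C i))
    (Aseq : ℕ → ℕ → Bool) (hAI : ∀ l, Aseq l ∈ ⋃ i, C i) (hAinj : Function.Injective Aseq)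
    (L : List (ι × Bool)) (S : Finset ℕ) (στ : Finset ℕ) (d : ℕ) (b : Bool) (j : ℕ)
    (Dj : ℕ) (hjS : j ∉ S) :
    ∃ M, ∀ x : Fin L.length → (ℕ → Bool),
      (∀ i, x i ∈ C (L.get i).1) →
      (∀ i i', i ≠ i' → ∃ m, m < d ∧ x i m ≠ x i' m) →
      (∀ i, ∀ l ∈ S, ∃ m, m < d ∧ x i m ≠ Aseq l m) →
      (∀ i, ∃ m, m < Dj ∧ x i m ≠ Aseq j m) →
      ∃ m, j < m ∧ m ≤ M ∧ (∀ i, x i m = (L.get i).2) ∧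
        (∀ l ∈ S, Aseq l m = decide (l ∈ στ)) ∧ Aseq j m = b := by
  classical
  set r := L.length
  set K : Set (Fin r → ℕ → Bool) :=
    {x | (∀ i, x i ∈ C (L.get i).1) ∧
      (∀ i i', i ≠ i' → ∃ m, m < d ∧ x i m ≠ x i' m) ∧
      (∀ i, ∀ l ∈ S, ∃ m, m < d ∧ x i m ≠ Aseq l m) ∧
      (∀ i, ∃ m, m < Dj ∧ x i m ≠ Aseq j m)} with hK
  -- closedness
  have hKclosed : IsClosed K := by
    have h1 : IsClosed {x : Fin r → ℕ → Bool | ∀ i, x i ∈ C (L.get i).1} := by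
      have : {x : Fin r → ℕ → Bool | ∀ i, x i ∈ C (L.get i).1} =
          ⋂ i, (fun x : Fin r → ℕ → Bool => x i) ⁻¹' (C (L.get i).1) := by
        ext x; simp [Set.mem_iInter]; exact Iff.rfl
      rw [this]
      exact isClosed_iInter fun i => (hcl _).preimage (continuous_apply i)
    have hpt : ∀ (i : Fin r) (m : ℕ) (c : Bool),
        IsClosed {x : Fin r → ℕ → Bool | x i m = c} := by
      intro i m c
      have : Continuous (fun x : Fin r → ℕ → Bool => x i m) :=
        (continuous_apply m).comp (continuous_apply i)
      exact IsClosed.preimage this (isClosed_singleton (x := c))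
    have hne : ∀ (i i' : Fin r) (m : ℕ),
        IsClosed {x : Fin r → ℕ → Bool | x i m ≠ x i' m} := by
      intro i i' m
      have : {x : Fin r → ℕ → Bool | x i m ≠ x i' m} =
          ({x | x i m = true} ∩ {x | x i' m = false}) ∪
          ({x | x i m = false} ∩ {x | x i' m = true}) := by
        ext x; simp only [Set.mem_setOf_eq, Set.mem_union, Set.mem_inter_iff]
        cases h1 : x i m <;> cases h2 : x i' m <;> simp
      rw [this]
      exact ((hpt i m true).inter (hpt i' m false)).union
        ((hpt i m false).inter (hpt i' m true))
    have hconst : ∀ (i : Fin r) (m : ℕ) (c : Bool),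
        IsClosed {x : Fin r → ℕ → Bool | x i m ≠ c} := by
      intro i m c
      have : {x : Fin r → ℕ → Bool | x i m ≠ c} = {x | x i m = !c} := by
        ext x; cases h1 : x i m <;> cases c <;> simp
      rw [this]; exact hpt i m (!c)
    have hex : ∀ (D' : ℕ) (p : Fin r → ℕ → (Fin r → ℕ → Bool) → Prop),
        True := fun _ _ => trivial
    have h2 : IsClosed {x : Fin r → ℕ → Bool |
        ∀ i i', i ≠ i' → ∃ m, m < d ∧ x i m ≠ x i' m} := by
      have : {x : Fin r → ℕ → Bool | ∀ i i', i ≠ i' → ∃ m, m < d ∧ x i m ≠ x i' m} =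
          ⋂ i, ⋂ i', ⋂ (_ : i ≠ i'), ⋃ m ∈ Finset.range d,
            {x : Fin r → ℕ → Bool | x i m ≠ x i' m} := by
        ext x
        simp only [Set.mem_setOf_eq, Set.mem_iInter, Set.mem_iUnion, Finset.mem_range]
        constructor
        · intro h i i' hii; obtain ⟨m, hm1, hm2⟩ := h i i' hii; exact ⟨m, hm1, hm2⟩
        · intro h i i' hii; obtain ⟨m, hm1, hm2⟩ := h i i' hii; exact ⟨m, hm1, hm2⟩
      rw [this]
      refine isClosed_iInter fun i => isClosed_iInter fun i' => isClosed_iInter fun _ => ?_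
      exact Set.Finite.isClosed_biUnion (Finset.finite_toSet _) fun m _ => hne i i' m
    have h3 : IsClosed {x : Fin r → ℕ → Bool |
        ∀ i, ∀ l ∈ S, ∃ m, m < d ∧ x i m ≠ Aseq l m} := by
      have : {x : Fin r → ℕ → Bool | ∀ i, ∀ l ∈ S, ∃ m, m < d ∧ x i m ≠ Aseq l m} =
          ⋂ i, ⋂ l ∈ S, ⋃ m ∈ Finset.range d,
            {x : Fin r → ℕ → Bool | x i m ≠ Aseq l m} := by
        ext x
        simp only [Set.mem_setOf_eq, Set.mem_iInter, Set.mem_iUnion, Finset.mem_range]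
        constructor
        · intro h i l hl; obtain ⟨m, hm1, hm2⟩ := h i l hl; exact ⟨m, hm1, hm2⟩
        · intro h i l hl; obtain ⟨m, hm1, hm2⟩ := h i l hl; exact ⟨m, hm1, hm2⟩
      rw [this]
      refine isClosed_iInter fun i => isClosed_iInter fun l => isClosed_iInter fun _ => ?_
      exact Set.Finite.isClosed_biUnion (Finset.finite_toSet _) fun m _ => hconst i m (Aseq l m)
    have h4 : IsClosed {x : Fin r → ℕ → Bool | ∀ i, ∃ m, m < Dj ∧ x i m ≠ Aseq j m} := by
      have : {x : Fin r → ℕ → Bool | ∀ i, ∃ m, m < Dj ∧ x i m ≠ Aseq j m} =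
          ⋂ i, ⋃ m ∈ Finset.range Dj, {x : Fin r → ℕ → Bool | x i m ≠ Aseq j m} := by
        ext x
        simp only [Set.mem_setOf_eq, Set.mem_iInter, Set.mem_iUnion, Finset.mem_range]
        constructor
        · intro h i; obtain ⟨m, hm1, hm2⟩ := h i; exact ⟨m, hm1, hm2⟩
        · intro h i; obtain ⟨m, hm1, hm2⟩ := h i; exact ⟨m, hm1, hm2⟩
      rw [this]
      refine isClosed_iInter fun i => ?_
      exact Set.Finite.isClosed_biUnion (Finset.finite_toSet _) fun m _ => hconst i m (Aseq j m)
    have : K = _ ∩ (_ ∩ (_ ∩ _)) := rfl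
    exact (h1.inter (h2.inter (h3.inter h4)))
  have hKcompact : IsCompact K := hKclosed.isCompact
  -- the open cover
  set cond : ℕ → Prop := fun m => j < m ∧ (∀ l ∈ S, Aseq l m = decide (l ∈ στ)) ∧ Aseq j m = b
    with hcond
  set V : ℕ → Set (Fin r → ℕ → Bool) :=
    fun m => {x | cond m ∧ ∀ i, x i m = (L.get i).2} with hV
  have hVopen : ∀ m, IsOpen (V m) := by
    intro m
    by_cases hc : cond m
    · have : V m = ⋂ i, (fun x : Fin r → ℕ → Bool => x i m) ⁻¹' {(L.get i).2} := by
        ext x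
        simp only [hV, Set.mem_setOf_eq, Set.mem_iInter, Set.mem_preimage,
          Set.mem_singleton_iff]
        exact ⟨fun h i => h.2 i, fun h => ⟨hc, h⟩⟩
      rw [this]
      exact isOpen_iInter_of_finite fun i =>
        (IsOpen.preimage ((continuous_apply m).comp (continuous_apply i))
          (isOpen_discrete _))
    · have : V m = ∅ := by
        ext x; simp [hV, hc]
      rw [this]; exact isOpen_empty
  have hcover : K ⊆ ⋃ m, V m := by
    intro x hx
    obtain ⟨hx1, hx2, hx3, hx4⟩ := hx
    -- build the finsets
    set FA : Finset (ℕ → Bool) :=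
      ((Finset.univ.filter (fun i : Fin r => (L.get i).2 = true)).image x) ∪
      ((S.filter (fun l => l ∈ στ)).image Aseq) ∪
      (if b then {Aseq j} else ∅) with hFA
    set FB : Finset (ℕ → Bool) :=
      ((Finset.univ.filter (fun i : Fin r => (L.get i).2 = false)).image x) ∪
      ((S.filter (fun l => l ∉ στ)).image Aseq) ∪
      (if b then ∅ else {Aseq j}) with hFB
    have hFAI : ↑FA ⊆ ⋃ i, C i := by
      intro z hz
      simp only [hFA, Finset.coe_union, Set.mem_union, Finset.coe_image, Set.mem_image] at hz
      rcases hz with (⟨i, _, rfl⟩ | ⟨l, _, rfl⟩) | hz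
      · exact Set.mem_iUnion.2 ⟨(L.get i).1, hx1 i⟩
      · exact hAI l
      · cases b
        · simp at hz
        · simp only [if_true] at hz
          simp at hz; rw [hz]; exact hAI j
    have hFBI : ↑FB ⊆ ⋃ i, C i := by
      intro z hz
      simp only [hFB, Finset.coe_union, Set.mem_union, Finset.coe_image, Set.mem_image] at hz
      rcases hz with (⟨i, _, rfl⟩ | ⟨l, _, rfl⟩) | hz
      · exact Set.mem_iUnion.2 ⟨(L.get i).1, hx1 i⟩
      · exact hAI l
      · cases b
        · simp at hz; rw [hz]; exact hAI j
        · simp at hz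
    have hdisj : Disjoint FA FB := by
      rw [Finset.disjoint_left]
      intro z hzA hzB
      simp only [hFA, hFB, Finset.mem_union, Finset.mem_image, Finset.mem_filter,
        Finset.mem_univ, true_and] at hzA hzB
      rcases hzA with (⟨i, hi2, rfl⟩ | ⟨l, ⟨hlS, hlστ⟩, hlz⟩) | hzA
      · -- z = x i with (L.get i).2 = true
        rcases hzB with (⟨i', hi'2, hxx⟩ | ⟨l', ⟨hl'S, hl'στ⟩, hl'z⟩) | hzB
        · have hne : i ≠ i' := by
            rintro rfl
            exact absurd (hi2.symm.trans hi'2) (by simp)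
          obtain ⟨m, _, hm⟩ := hx2 i i' hne
          rw [hxx] at hm; exact hm rfl
        · obtain ⟨m, _, hm⟩ := hx3 i l' hl'S
          rw [hl'z] at hm; exact hm rfl
        · by_cases hb : b = true
          · simp [hb] at hzB
          · simp [Bool.not_eq_true] at hb; simp [hb] at hzB
            obtain ⟨m, _, hm⟩ := hx4 i
            rw [hzB] at hm; exact hm rfl
      · -- z = Aseq l, l ∈ στ
        rcases hzB with (⟨i', hi'2, hxx⟩ | ⟨l', ⟨hl'S, hl'στ⟩, hl'z⟩) | hzB
        · obtain ⟨m, _, hm⟩ := hx3 i' l hlS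
          rw [hxx, hlz] at hm; exact hm rfl
        · have : l = l' := hAinj (by rw [hlz, hl'z])
          exact hl'στ (this ▸ hlστ)
        · by_cases hb : b = true
          · simp [hb] at hzB
          · simp [Bool.not_eq_true] at hb; simp [hb] at hzB
            have : l = j := hAinj (by rw [hlz, hzB])
            exact hjS (this ▸ hlS)
      · -- z = Aseq j, b = true
        by_cases hb : b = true
        · simp [hb] at hzA
          rcases hzB with (⟨i', hi'2, hxx⟩ | ⟨l', ⟨hl'S, hl'στ⟩, hl'z⟩) | hzB
          · obtain ⟨m, _, hm⟩ := hx4 i'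
            rw [hxx, hzA] at hm; exact hm rfl
          · have : j = l' := hAinj (by rw [← hzA, ← hl'z])
            exact hjS (this ▸ hl'S)
          · simp [hb] at hzB
        · simp [Bool.not_eq_true] at hb; simp [hb] at hzA
    have hinf := hind FA FB hFAI hFBI hdisj
    obtain ⟨m, hmmem, hmgt⟩ := hinf.exists_gt j
    refine Set.mem_iUnion.2 ⟨m, ?_⟩
    obtain ⟨hAtrue, hBfalse⟩ := hmmem
    have hcondm : cond m := by
      refine ⟨hmgt, ?_, ?_⟩
      · intro l hlS
        by_cases hlστ : l ∈ στ
        · have hmem : Aseq l ∈ FA := by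
            rw [hFA]
            refine Finset.mem_union_left _ (Finset.mem_union_right _ ?_)
            exact Finset.mem_image.2 ⟨l, Finset.mem_filter.2 ⟨hlS, hlστ⟩, rfl⟩
          simp only [hlστ, decide_eq_true_eq, decide_true]
          exact hAtrue _ hmem
        · have hmem : Aseq l ∈ FB := by
            rw [hFB]
            refine Finset.mem_union_left _ (Finset.mem_union_right _ ?_)
            exact Finset.mem_image.2 ⟨l, Finset.mem_filter.2 ⟨hlS, hlστ⟩, rfl⟩
          simp only [hlστ, decide_false]
          exact hBfalse _ hmem
      · cases b
        · have hmem : Aseq j ∈ FB := by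
            rw [hFB]
            exact Finset.mem_union_right _ (by simp)
          exact hBfalse _ hmem
        · have hmem : Aseq j ∈ FA := by
            rw [hFA]
            exact Finset.mem_union_right _ (by simp)
          exact hAtrue _ hmem
    refine ⟨hcondm, ?_⟩
    intro i
    cases hLi : (L.get i).2
    · have hmem : x i ∈ FB := by
        rw [hFB]
        refine Finset.mem_union_left _ (Finset.mem_union_left _ ?_)
        exact Finset.mem_image.2 ⟨i, Finset.mem_filter.2 ⟨Finset.mem_univ _, hLi⟩, rfl⟩
      exact hBfalse _ hmem
    · have hmem : x i ∈ FA := by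
        rw [hFA]
        refine Finset.mem_union_left _ (Finset.mem_union_left _ ?_)
        exact Finset.mem_image.2 ⟨i, Finset.mem_filter.2 ⟨Finset.mem_univ _, hLi⟩, rfl⟩
      exact hAtrue _ hmem
  obtain ⟨t, ht⟩ := hKcompact.elim_finite_subcover V hVopen hcover
  refine ⟨t.sup id, ?_⟩
  intro x hx1 hx2 hx3 hx4
  have hxK : x ∈ K := ⟨hx1, hx2, hx3, hx4⟩
  obtain ⟨m, hmt, hmV⟩ := Set.mem_iUnion₂.1 (ht hxK)
  obtain ⟨⟨hjm, hσ, hbm⟩, hxi⟩ := hmV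
  exact ⟨m, hjm, le_trans (Finset.le_sup (f := id) hmt) (le_refl _), hxi, hσ, hbm⟩
lemma goodset {F g : ℕ → ℕ} (hF : Monotone F) (hg : Monotone g)
    (hfreq : ∀ N, ∃ j, N ≤ j ∧ F (F j) < g j)
    {h : ℕ → ℕ} (h0 : h 0 = 0) (hS : ∀ k, h (k+1) = g (h k) + h k + 2) :
    ∀ K, ∃ k, K ≤ k ∧ F (h k) < h (k+1) := by
  have hmono : StrictMono h := by
    apply strictMono_nat_of_lt_succ
    intro k; rw [hS k]; omega
  have hge : ∀ k, k ≤ h k := fun k => by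
    induction k with
    | zero => omega
    | succ n ih =>
      show n + 1 ≤ h (n + 1)
      have h2 := hS n; omega
  intro K
  by_contra hcon
  push_neg at hcon
  have hK : ∀ k, K ≤ k → h (k+1) ≤ F (h k) := fun k hk => hcon k hk
  obtain ⟨j, hj1, hj2⟩ := hfreq (h K)
  set k := Nat.findGreatest (fun k => h k ≤ j) j with hk
  have hk1 : h k ≤ j := by
    have := Nat.findGreatest_spec (P := fun k => h k ≤ j) (Nat.zero_le j) (by omega)
    exact this
  have hk2 : K ≤ k := Nat.le_findGreatest (le_trans (hge K) hj1) hj1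
  have hk3 : j < h (k+1) := by
    by_cases hcase : k + 1 ≤ j
    · by_contra hle
      push_neg at hle
      exact absurd (Nat.findGreatest_is_greatest (Nat.lt_succ_self k) hcase) (by
        simp only [not_not]; exact hle)
    · push_neg at hcase
      have hjk : j ≤ k := by omega
      have : j = h k := le_antisymm (le_trans hjk (hge k)) hk1
      rw [hS k]; omega
  have h1 : h (k+1) ≤ F j := le_trans (hK k hk2) (hF hk1)
  have h2 : h (k+2) ≤ F (F j) := le_trans (hK (k+1) (by omega)) (hF h1)
  have h3 : g j ≤ g (h (k+1)) := hg (by omega)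
  have h4 : h (k+2) = g (h (k+1)) + h (k+1) + 2 := hS (k+1)
  omega

lemma exists_acc_seq {I : Set (ℕ → Bool)} (hinf : I.Infinite) :
    ∃ (Astar : ℕ → Bool) (Aseq : ℕ → ℕ → Bool) (nseq : ℕ → ℕ),
      (∀ l, Aseq l ∈ I) ∧ StrictMono nseq ∧
      (∀ l m, m < nseq l → Aseq l m = Astar m) ∧
      (∀ l, Aseq l (nseq l) ≠ Astar (nseq l)) := by
  classical
  set y := hinf.natEmbedding with hy
  obtain ⟨Astar, -, φ, hφ, hconv⟩ :=
    (isCompact_univ (X := ℕ → Bool)).tendsto_subseq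
      (x := fun n => (y n : ℕ → Bool)) (fun n => Set.mem_univ _)
  have hcoord : ∀ m, ∀ᶠ l in Filter.atTop, (y (φ l) : ℕ → Bool) m = Astar m := by
    intro m
    have := tendsto_pi_nhds.1 hconv m
    rw [nhds_discrete] at this
    exact Filter.tendsto_pure.1 this
  have hL : ∀ L : ℕ, ∃ x, x ∈ I ∧ x ≠ Astar ∧ ∀ m, m < L → x m = Astar m := by
    intro L
    have hev : ∀ᶠ l in Filter.atTop, ∀ m ∈ Finset.range L, (y (φ l) : ℕ → Bool) m = Astar m :=
      (Filter.eventually_all_finset (Finset.range L)).2 (fun m _ => hcoord m)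
    obtain ⟨l1, hl1⟩ := hev.exists
    obtain ⟨l2, hl2, hl2gt⟩ := (hev.and (Filter.eventually_gt_atTop l1)).exists
    have hne : (y (φ l1) : ℕ → Bool) ≠ (y (φ l2) : ℕ → Bool) := by
      intro heq
      have : φ l1 = φ l2 := by
        have := y.injective (Subtype.ext heq)
        exact this
      exact absurd (hφ hl2gt) (by omega)
    by_cases hc : (y (φ l1) : ℕ → Bool) = Astar
    · refine ⟨(y (φ l2) : ℕ → Bool), (y (φ l2)).2, ?_, ?_⟩
      · rw [← hc]; exact fun h => hne h.symm
      · intro m hm; exact hl2 m (Finset.mem_range.2 hm)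
    · exact ⟨(y (φ l1) : ℕ → Bool), (y (φ l1)).2, hc,
        fun m hm => hl1 m (Finset.mem_range.2 hm)⟩
  choose xf hxf1 hxf2 hxf3 using hL
  have hfd : ∀ L, ∃ m, xf L m ≠ Astar m := fun L => Function.ne_iff.1 (hxf2 L)
  set fd : ℕ → ℕ := fun L => Nat.find (hfd L) with hfddef
  have hfd_ge : ∀ L, L ≤ fd L := by
    intro L
    by_contra hlt
    push_neg at hlt
    exact (Nat.find_spec (hfd L)) (hxf3 L _ hlt)
  set Lseq : ℕ → ℕ := fun l => Nat.rec 0 (fun _ p => fd p + 1) l with hLseq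
  refine ⟨Astar, fun l => xf (Lseq l), fun l => fd (Lseq l), fun l => hxf1 _, ?_, ?_, ?_⟩
  · apply strictMono_nat_of_lt_succ
    intro l
    have h1 : Lseq (l+1) = fd (Lseq l) + 1 := rfl
    have := hfd_ge (Lseq (l+1))
    omega
  · intro l m hm
    have := Nat.find_min (hfd (Lseq l)) hm
    simpa using this
  · exact fun l => Nat.find_spec (hfd (Lseq l))

noncomputable def fdw (u v : ℕ → Bool) : ℕ :=
  if h : ∃ m, u m ≠ v m then Nat.find h else 0

lemma fdw_spec {u v : ℕ → Bool} (h : u ≠ v) : u (fdw u v) ≠ v (fdw u v) := by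
  have hex : ∃ m, u m ≠ v m := Function.ne_iff.1 h
  rw [fdw, dif_pos hex]
  exact Nat.find_spec hex

set_option maxHeartbeats 4000000 in
lemma main_dom {ι : Type} (C : ι → Set (ℕ → Bool)) (hcl : ∀ i, IsClosed (C i))
    (hmax : MaxBoolIndep (⋃ i, C i)) :
    ∃ D : Set (ℕ → ℕ),
      Cardinal.mk D ≤ Cardinal.mk (List (ι × Bool) × Finset ℕ × Finset ℕ × ℕ × Bool) ∧
      ∀ f : ℕ → ℕ, ∃ g ∈ D, ∀ᶠ n in Filter.atTop, f n < g n := by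
  classical
  set I := ⋃ i, C i with hIdef
  rcases Set.finite_or_infinite I with hfin | hinf
  · exact absurd hfin (fun h => finite_not_max hmax h)
  have hind : BoolIndep I := hmax.1
  obtain ⟨Astar, Aseq, nseq, hA1, hn2, hA3, hA4⟩ := exists_acc_seq hinf
  have hAinj : Function.Injective Aseq := by
    have key : ∀ l l', l < l' → Aseq l ≠ Aseq l' := by
      intro l l' hlt heq
      have h1 : Aseq l' (nseq l) = Astar (nseq l) := hA3 l' (nseq l) (hn2 hlt)
      have h2 : Aseq l (nseq l) ≠ Astar (nseq l) := hA4 l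
      rw [heq, h1] at h2; exact h2 rfl
    intro l l' hll
    by_contra hne
    rcases Nat.lt_or_ge l l' with h | h
    · exact key l l' h hll
    · exact key l' l (lt_of_le_of_ne h (Ne.symm hne)) hll.symm
  have hnseq_ge : ∀ j, j ≤ nseq j := fun j => hn2.le_apply
  -- a default index
  obtain ⟨z0, hz0⟩ := hinf.nonempty
  obtain ⟨i0, -⟩ := Set.mem_iUnion.1 hz0
  set idx : (ℕ → Bool) → ι := fun z => if h : z ∈ I then (Set.mem_iUnion.1 h).choose else i0
    with hidxdef
  have hidxC : ∀ z, z ∈ I → z ∈ C (idx z) := by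
    intro z hz
    rw [hidxdef]
    simp only [dif_pos hz]
    exact (Set.mem_iUnion.1 hz).choose_spec
  -- the indexed family of functions
  set P : (List (ι × Bool) × Finset ℕ × Finset ℕ × ℕ × Bool) → ℕ → ℕ → Prop :=
    fun t j M => ∀ x : Fin t.1.length → (ℕ → Bool),
      (∀ i, x i ∈ C (t.1.get i).1) →
      (∀ i i', i ≠ i' → ∃ m, m < t.2.2.2.1 ∧ x i m ≠ x i' m) →
      (∀ i, ∀ l ∈ t.2.1, ∃ m, m < t.2.2.2.1 ∧ x i m ≠ Aseq l m) →
      (∀ i, ∃ m, m < max t.2.2.2.1 (nseq j + 1) ∧ x i m ≠ Aseq j m) →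
      ∃ m, j < m ∧ m ≤ M ∧ (∀ i, x i m = (t.1.get i).2) ∧
        (∀ l ∈ t.2.1, Aseq l m = decide (l ∈ t.2.2.1)) ∧ Aseq j m = t.2.2.2.2 with hPdef
  set fF : (List (ι × Bool) × Finset ℕ × Finset ℕ × ℕ × Bool) → ℕ → ℕ :=
    fun t j => sInf {M | P t j M} with hfFdef
  have hfF_spec : ∀ t j, j ∉ t.2.1 → P t j (fF t j) := by
    rintro ⟨L, S, στ, d, b⟩ j hjS
    have hne : {M | P (L, S, στ, d, b) j M}.Nonempty := by
      obtain ⟨M, hM⟩ := compact_bound C hcl hind Aseq hA1 hAinj L S στ d b j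
        (max d (nseq j + 1)) hjS
      exact ⟨M, hM⟩
    exact Nat.sInf_mem hne
  set Fm : (List (ι × Bool) × Finset ℕ × Finset ℕ × ℕ × Bool) → ℕ → ℕ :=
    fun t j => (Finset.range (j+1)).sup (fF t) with hFmdef
  have hFm_mono : ∀ t, Monotone (Fm t) := by
    intro t j j' hj
    exact Finset.sup_mono (Finset.range_subset_range.2 (by omega))
  have hFm_ge : ∀ t j, fF t j ≤ Fm t j := by
    intro t j
    exact Finset.le_sup (Finset.mem_range.2 (by omega))
  set Φ : (List (ι × Bool) × Finset ℕ × Finset ℕ × ℕ × Bool) → ℕ → ℕ :=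
    fun t j => Fm t (Fm t j) + 1 with hΦdef
  refine ⟨Set.range Φ, Cardinal.mk_range_le, ?_⟩
  intro u
  by_contra hcon
  push_neg at hcon
  have hfreq : ∀ t, ∀ N, ∃ j, N ≤ j ∧ Φ t j ≤ u j := by
    intro t N
    have := hcon (Φ t) ⟨t, rfl⟩
    obtain ⟨j, hj1, hj2⟩ := Filter.frequently_atTop.1 this N
    exact ⟨j, hj1, by omega⟩
  set g : ℕ → ℕ := fun j => (Finset.range (j+1)).sup u with hgdef
  have hg_mono : Monotone g := by
    intro j j' hj
    exact Finset.sup_mono (Finset.range_subset_range.2 (by omega))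
  have hg_ge : ∀ j, u j ≤ g j := fun j => Finset.le_sup (Finset.mem_range.2 (by omega))
  set hseq : ℕ → ℕ := fun k => Nat.rec 0 (fun _ p => g p + p + 2) k with hhseq
  have h0 : hseq 0 = 0 := rfl
  have hSk : ∀ k, hseq (k+1) = g (hseq k) + hseq k + 2 := fun k => rfl
  have hsm : StrictMono hseq := by
    apply strictMono_nat_of_lt_succ
    intro k; rw [hSk k]; omega
  have hge : ∀ k, k ≤ hseq k := fun k => hsm.le_apply
  have hgood : ∀ t, ∀ K, ∃ k, K ≤ k ∧ Fm t (hseq k) < hseq (k+1) := by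
    intro t
    apply goodset (hFm_mono t) hg_mono ?_ h0 hSk
    intro N
    obtain ⟨j, hj1, hj2⟩ := hfreq t N
    refine ⟨j, hj1, ?_⟩
    have := hg_ge j
    have hΦ : Φ t j = Fm t (Fm t j) + 1 := rfl
    omega
  -- level function and the diagonal real
  set lev : ℕ → ℕ := fun m => Nat.findGreatest (fun k => hseq k ≤ m) m with hlevdef
  have hlev : ∀ k m, hseq k ≤ m → m < hseq (k+1) → lev m = k := by
    intro k m h1 h2
    rw [hlevdef]
    rw [Nat.findGreatest_eq_iff]
    refine ⟨le_trans (hge k) h1, fun _ => h1, ?_⟩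
    intro n hn1 hn2 hP
    have : hseq (k+1) ≤ hseq n := hsm.monotone hn1
    omega
  set Y : ℕ → Bool := fun m => Aseq (hseq (lev m)) m with hYdef
  -- the main property
  have MP : ∀ A B : Finset (ℕ → Bool), ↑A ⊆ I → ↑B ⊆ I → Disjoint A B → ∀ b : Bool,
      {m : ℕ | (∀ x ∈ A, x m = true) ∧ (∀ x ∈ B, x m = false) ∧ Y m = b}.Infinite := by
    intro A B hA hB hAB b
    have hSfin : (Aseq ⁻¹' ↑(A ∪ B)).Finite :=
      Set.Finite.preimage (Set.injOn_of_injective hAinj) (A ∪ B).finite_toSet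
    set S : Finset ℕ := hSfin.toFinset with hSdef
    set στ : Finset ℕ := S.filter (fun l => Aseq l ∈ A) with hστdef
    set X : Finset (ℕ → Bool) := (A ∪ B).filter (fun z => z ∉ Set.range Aseq) with hXdef
    set xs : List (ℕ → Bool) := X.toList with hxsdef
    have hxsX : ∀ z ∈ xs, z ∈ X := fun z hz => Finset.mem_toList.1 hz
    have hXI : ∀ z ∈ X, z ∈ I := by
      intro z hz
      rw [hXdef, Finset.mem_filter] at hz
      rcases Finset.mem_union.1 hz.1 with h | h
      · exact hA h
      · exact hB h
    have hxsI : ∀ z ∈ xs, z ∈ I := fun z hz => hXI z (hxsX z hz)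
    set L : List (ι × Bool) := xs.map (fun z => (idx z, decide (z ∈ A))) with hLdef
    have hLlen : L.length = xs.length := List.length_map _
    set xt : Fin L.length → (ℕ → Bool) := fun i => xs.get (Fin.cast hLlen i) with hxtdef
    have hxtval : ∀ i, xt i = xs.get (Fin.cast hLlen i) := fun i => rfl
    have hLget : ∀ i : Fin L.length, L.get i = (idx (xt i), decide (xt i ∈ A)) := by
      intro i
      show (xs.map (fun z => (idx z, decide (z ∈ A)))).get i = _
      simp only [List.get_eq_getElem, List.getElem_map]
      rfl
    have hxtX : ∀ i, xt i ∈ X := by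
      intro i
      rw [hxtval i]
      exact hxsX _ (List.get_mem xs _)
    have hxtI : ∀ i, xt i ∈ I := fun i => hXI _ (hxtX i)
    have hxtC : ∀ i, xt i ∈ C (L.get i).1 := by
      intro i
      rw [hLget i]
      exact hidxC _ (hxtI i)
    have hxt_inj : ∀ i i' : Fin L.length, i ≠ i' → xt i ≠ xt i' := by
      intro i i' hne heq
      have hnd : xs.Nodup := Finset.nodup_toList X
      have h2 := (hnd.get_inj_iff).1 heq
      apply hne
      have h3 : (Fin.cast hLlen i).val = (Fin.cast hLlen i').val := congrArg Fin.val h2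
      exact Fin.ext h3
    have hxt_nr : ∀ i, xt i ∉ Set.range Aseq := by
      intro i
      have := hxtX i
      rw [hXdef, Finset.mem_filter] at this
      exact this.2
    -- the distance bound
    set d : ℕ := 1 + X.sup (fun z => (X.sup (fun z' => fdw z z')) ⊔
      (S.sup (fun l => fdw z (Aseq l))) ⊔ fdw z Astar) with hddef
    have hdw1 : ∀ z ∈ X, ∀ z' ∈ X, fdw z z' < d := by
      intro z hz z' hz'
      have h1 : fdw z z' ≤ X.sup (fun z' => fdw z z') := Finset.le_sup (f := fun z' => fdw z z') hz'
      have h2 : X.sup (fun z' => fdw z z') ⊔ S.sup (fun l => fdw z (Aseq l)) ⊔ fdw z Astar ≤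
          X.sup (fun z => (X.sup (fun z' => fdw z z')) ⊔
            (S.sup (fun l => fdw z (Aseq l))) ⊔ fdw z Astar) :=
        Finset.le_sup (f := fun z => (X.sup (fun z' => fdw z z')) ⊔
          (S.sup (fun l => fdw z (Aseq l))) ⊔ fdw z Astar) hz
      have h3 : fdw z z' ≤ X.sup (fun z' => fdw z z') ⊔ S.sup (fun l => fdw z (Aseq l))
          ⊔ fdw z Astar := le_trans h1 (le_trans le_sup_left le_sup_left)
      omega
    have hdw2 : ∀ z ∈ X, ∀ l ∈ S, fdw z (Aseq l) < d := by
      intro z hz l hl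
      have h1 : fdw z (Aseq l) ≤ S.sup (fun l => fdw z (Aseq l)) := Finset.le_sup (f := fun l => fdw z (Aseq l)) hl
      have h2 : X.sup (fun z' => fdw z z') ⊔ S.sup (fun l => fdw z (Aseq l)) ⊔ fdw z Astar ≤
          X.sup (fun z => (X.sup (fun z' => fdw z z')) ⊔
            (S.sup (fun l => fdw z (Aseq l))) ⊔ fdw z Astar) :=
        Finset.le_sup (f := fun z => (X.sup (fun z' => fdw z z')) ⊔
          (S.sup (fun l => fdw z (Aseq l))) ⊔ fdw z Astar) hz
      have h3 : fdw z (Aseq l) ≤ X.sup (fun z' => fdw z z') ⊔ S.sup (fun l => fdw z (Aseq l))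
          ⊔ fdw z Astar := le_trans h1 (le_trans le_sup_right le_sup_left)
      omega
    have hdw3 : ∀ z ∈ X, fdw z Astar < d := by
      intro z hz
      have h2 : X.sup (fun z' => fdw z z') ⊔ S.sup (fun l => fdw z (Aseq l)) ⊔ fdw z Astar ≤
          X.sup (fun z => (X.sup (fun z' => fdw z z')) ⊔
            (S.sup (fun l => fdw z (Aseq l))) ⊔ fdw z Astar) :=
        Finset.le_sup (f := fun z => (X.sup (fun z' => fdw z z')) ⊔
          (S.sup (fun l => fdw z (Aseq l))) ⊔ fdw z Astar) hz
      have h3 : fdw z Astar ≤ X.sup (fun z' => fdw z z') ⊔ S.sup (fun l => fdw z (Aseq l))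
          ⊔ fdw z Astar := le_sup_right
      omega
    set t : List (ι × Bool) × Finset ℕ × Finset ℕ × ℕ × Bool := (L, S, στ, d, b) with htdef
    -- conclude infinitude
    apply Set.infinite_of_forall_exists_gt
    intro a
    set K : ℕ := (S.sup id + 1) ⊔ d ⊔ (a + 1) with hKdef
    obtain ⟨k, hkK, hkgood⟩ := hgood t K
    set j : ℕ := hseq k with hjdef
    have hjk : k ≤ j := hge k
    have hjS : j ∉ S := by
      intro hj
      have : j ≤ S.sup id := Finset.le_sup (f := id) hj
      have hK1 : S.sup id + 1 ≤ K := le_trans le_sup_left le_sup_left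
      omega
    have hjd : d ≤ j := by
      have hK2 : d ≤ K := le_trans le_sup_right le_sup_left
      omega
    have hja : a < j := by
      have hK3 : a + 1 ≤ K := le_sup_right
      omega
    have hspec := hfF_spec t j hjS
    -- verify the four hypotheses for the tuple xt
    have hc2 : ∀ i i' : Fin L.length, i ≠ i' → ∃ m, m < d ∧ xt i m ≠ xt i' m := by
      intro i i' hne
      exact ⟨fdw (xt i) (xt i'), hdw1 _ (hxtX i) _ (hxtX i'),
        fdw_spec (hxt_inj i i' hne)⟩
    have hc3 : ∀ i : Fin L.length, ∀ l ∈ S, ∃ m, m < d ∧ xt i m ≠ Aseq l m := by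
      intro i l hl
      have hne : xt i ≠ Aseq l := fun h => hxt_nr i ⟨l, h.symm⟩
      exact ⟨fdw (xt i) (Aseq l), hdw2 _ (hxtX i) l hl, fdw_spec hne⟩
    have hc4 : ∀ i : Fin L.length, ∃ m, m < max d (nseq j + 1) ∧ xt i m ≠ Aseq j m := by
      intro i
      by_cases hz : xt i = Astar
      · refine ⟨nseq j, lt_of_lt_of_le (Nat.lt_succ_self _) (le_max_right _ _), ?_⟩
        rw [hz]
        exact fun h => hA4 j h.symm
      · set w : ℕ := fdw (xt i) Astar with hwdef
        have hwd : w < d := hdw3 _ (hxtX i)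
        have hwn : w < nseq j := by
          have := hnseq_ge j
          omega
        refine ⟨w, lt_of_lt_of_le hwd (le_max_left _ _), ?_⟩
        rw [hA3 j w hwn]
        exact fdw_spec hz
    obtain ⟨m, hm1, hm2, hm3, hm4, hm5⟩ := hspec xt hxtC hc2 hc3 hc4
    have hmlt : m < hseq (k+1) := by
      have h1 : fF t j ≤ Fm t j := hFm_ge t j
      omega
    have hYm : Y m = b := by
      have hl : lev m = k := hlev k m (le_of_lt hm1) hmlt
      rw [hYdef]
      simp only [hl]
      exact hm5
    refine ⟨m, ⟨?_, ?_, hYm⟩, lt_trans hja hm1⟩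
    · intro z hzA
      by_cases hzr : z ∈ Set.range Aseq
      · obtain ⟨l, rfl⟩ := hzr
        have hlS : l ∈ S := by
          rw [hSdef, Set.Finite.mem_toFinset]
          exact Finset.mem_union_left _ hzA
        have := hm4 l hlS
        rw [this]
        simp only [hστdef, Finset.mem_filter, decide_eq_true_eq]
        exact Finset.mem_filter.2 ⟨hlS, hzA⟩
      · have hzX : z ∈ X := by
          rw [hXdef, Finset.mem_filter]
          exact ⟨Finset.mem_union_left _ hzA, hzr⟩
        have hzxs : z ∈ xs := Finset.mem_toList.2 hzX
        obtain ⟨n, hn⟩ := List.mem_iff_get.1 hzxs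
        have hxti : xt (Fin.cast hLlen.symm n) = z := by
          rw [hxtval]
          exact hn
        have h5 := hm3 (Fin.cast hLlen.symm n)
        rw [hLget] at h5
        simp only [hxti] at h5
        rw [h5]
        simp [hzA]
    · intro z hzB
      by_cases hzr : z ∈ Set.range Aseq
      · obtain ⟨l, rfl⟩ := hzr
        have hlS : l ∈ S := by
          rw [hSdef, Set.Finite.mem_toFinset]
          exact Finset.mem_union_right _ hzB
        have := hm4 l hlS
        rw [this]
        have hzA : Aseq l ∉ A := Finset.disjoint_right.1 hAB hzB
        show decide (l ∈ στ) = false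
        simp only [hστdef, Finset.mem_filter]
        simp [hzA]
      · have hzX : z ∈ X := by
          rw [hXdef, Finset.mem_filter]
          exact ⟨Finset.mem_union_right _ hzB, hzr⟩
        have hzxs : z ∈ xs := Finset.mem_toList.2 hzX
        obtain ⟨n, hn⟩ := List.mem_iff_get.1 hzxs
        have hxti : xt (Fin.cast hLlen.symm n) = z := by
          rw [hxtval]
          exact hn
        have h5 := hm3 (Fin.cast hLlen.symm n)
        rw [hLget] at h5
        simp only [hxti] at h5
        have hzA : z ∉ A := Finset.disjoint_right.1 hAB hzB
        rw [h5]
        simp [hzA]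
  exact wrapup hmax Y MP

lemma card_T (ι : Type) :
    Cardinal.mk (List (ι × Bool) × Finset ℕ × Finset ℕ × ℕ × Bool) ≤
      max (Cardinal.mk ι) Cardinal.aleph0 := by
  set κ := max (Cardinal.mk ι) Cardinal.aleph0 with hκ
  have hκinf : Cardinal.aleph0 ≤ κ := le_max_right _ _
  have hmul : ∀ a b : Cardinal, a ≤ κ → b ≤ κ → a * b ≤ κ := fun a b ha hb =>
    le_trans (mul_le_mul' ha hb) (le_of_eq (Cardinal.mul_eq_self hκinf))
  have hbool : Cardinal.mk Bool ≤ κ := le_trans Cardinal.mk_le_aleph0 hκinf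
  have hιB : Cardinal.mk (ι × Bool) ≤ κ := by
    rw [Cardinal.mk_prod]
    simp only [Cardinal.lift_id]
    exact hmul _ _ (le_max_left _ _) hbool
  have hlist : Cardinal.mk (List (ι × Bool)) ≤ κ := by
    refine le_trans (Cardinal.mk_list_le_max _) ?_
    exact max_le hκinf hιB
  have hfin : Cardinal.mk (Finset ℕ) ≤ κ := le_trans Cardinal.mk_le_aleph0 hκinf
  have hnat : Cardinal.mk ℕ ≤ κ := le_trans Cardinal.mk_le_aleph0 hκinf
  rw [Cardinal.mk_prod, Cardinal.mk_prod, Cardinal.mk_prod, Cardinal.mk_prod]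
  simp only [Cardinal.lift_id]
  exact hmul _ _ hlist (hmul _ _ hfin (hmul _ _ hfin (hmul _ _ hnat hbool)))

/-- `𝔡 ≤ 𝔦_cl`. -/
theorem stmt4 : domNumber ≤ iCl := by
  classical
  have hne : {c : Cardinal | ∃ (ι : Type) (C : ι → Set (ℕ → Bool)), c = Cardinal.mk ι ∧
      (∀ i, IsClosed (C i)) ∧ MaxBoolIndep (⋃ i, C i)}.Nonempty := by
    obtain ⟨I, hI⟩ := exists_max_indep
    refine ⟨Cardinal.mk I, ↑I, fun x => {(x : ℕ → Bool)}, rfl, fun x => isClosed_singleton, ?_⟩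
    have heq : (⋃ x : ↑I, ({(x : ℕ → Bool)} : Set (ℕ → Bool))) = I := by
      ext z; simp
    rwa [heq]
  rw [iCl]
  apply le_csInf hne
  rintro c ⟨ι, C, rfl, hcl, hmax⟩
  obtain ⟨D, hD1, hD2⟩ := main_dom C hcl hmax
  have hd_le : domNumber ≤ Cardinal.mk D := csInf_le' ⟨D, rfl, hD2⟩
  have h1 : domNumber ≤ max (Cardinal.mk ι) Cardinal.aleph0 :=
    le_trans hd_le (le_trans hD1 (card_T ι))
  have hgt : ¬ domNumber ≤ Cardinal.aleph0 := by
    intro hle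
    have hne' : {c : Cardinal | ∃ D : Set (ℕ → ℕ), c = Cardinal.mk D ∧
        ∀ f : ℕ → ℕ, ∃ g ∈ D, ∀ᶠ n in Filter.atTop, f n < g n}.Nonempty := by
      refine ⟨Cardinal.mk (Set.univ : Set (ℕ → ℕ)), Set.univ, rfl, ?_⟩
      intro f
      exact ⟨fun n => f n + 1, Set.mem_univ _,
        Filter.Eventually.of_forall (fun n => Nat.lt_succ_self _)⟩
    have hmem := csInf_mem hne'
    obtain ⟨D₀, hD₀eq, hD₀dom⟩ := hmem
    refine dom_not_countable D₀ hD₀dom ?_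
    rw [← hD₀eq]
    exact hle
  rcases le_or_gt (Cardinal.mk ι) Cardinal.aleph0 with hc | hc
  · rw [max_eq_right hc] at h1
    exact absurd h1 hgt
  · rwa [max_eq_left (le_of_lt hc)] at h1
end

section
/- If ⟨T_n : n ∈ ω⟩ is a fusion sequence of splitting trees, i.e., T_{n+1} ≤_n T_n for all n, then T = ⋂_n T_n is a splitting tree, and moreover T ≤_n T_n for every n. -/
/-- A tree on `2`: a set of finite binary sequences closed under initial segments. -/
def IsTree (T : Set (List Bool)) : Prop := ∀ s ∈ T, ∀ t : List Bool, t <+: s → t ∈ T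

/-- The restriction `T_s` of `T` to `s`: all nodes of `T` compatible with `s`. -/
def restrict (T : Set (List Bool)) (s : List Bool) : Set (List Bool) :=
  {t ∈ T | t <+: s ∨ s <+: t}

/-- `S ⊆ 2^{<ω}` is fat: there is `m` such that for all `n ≥ m` there are
`s, t ∈ S` with `s(n) = 0` and `t(n) = 1`. -/
def Fat (S : Set (List Bool)) : Prop :=
  ∃ m : ℕ, ∀ n ≥ m, (∃ s ∈ S, s[n]? = some false) ∧ (∃ t ∈ S, t[n]? = some true)

/-- A perfect tree: a tree in which every node has two incomparable extensions. -/
def PerfectTree (T : Set (List Bool)) : Prop :=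
  IsTree T ∧ ∀ t ∈ T, ∃ s₀ ∈ T, ∃ s₁ ∈ T,
    t <+: s₀ ∧ t <+: s₁ ∧ ¬ s₀ <+: s₁ ∧ ¬ s₁ <+: s₀

/-- A splitting tree: a perfect tree `T` on `2` such that every restriction
`T_s` is fat. -/
def SplittingTree (T : Set (List Bool)) : Prop :=
  PerfectTree T ∧ ∀ s ∈ T, Fat (restrict T s)

/-- `m` witnesses fatness of `S`. -/
def FatWit (S : Set (List Bool)) (m : ℕ) : Prop :=
  ∀ n ≥ m, (∃ s ∈ S, s[n]? = some false) ∧ (∃ t ∈ S, t[n]? = some true)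

/-- `m(S)`: the least witness of fatness of `S`. -/
noncomputable def mFat (S : Set (List Bool)) : ℕ := sInf {m : ℕ | FatWit S m}

/-- A splitting node of a tree on `2`: both immediate successors are in the tree. -/
def IsSplitNode (T : Set (List Bool)) (s : List Bool) : Prop :=
  s ∈ T ∧ s ++ [false] ∈ T ∧ s ++ [true] ∈ T

/-- `split_{≤n}(T)`: splitting nodes of `T` with at most `n` proper splitting-node
initial segments. -/
def splitLE (n : ℕ) (T : Set (List Bool)) : Set (List Bool) :=
  {s | IsSplitNode T s ∧
    Nat.card {t : List Bool // t <+: s ∧ t ≠ s ∧ IsSplitNode T t} ≤ n}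

/-- The fusion orderings `S ≤_n T` on splitting trees. -/
def SPle (n : ℕ) (S T : Set (List Bool)) : Prop :=
  S ⊆ T ∧ splitLE n S = splitLE n T ∧
    ∀ s ∈ splitLE n S, mFat (restrict S s) = mFat (restrict T s)

section Aux

open Classical

/-- The set of proper split-node prefixes of `s` in `R`. -/
def preds (R : Set (List Bool)) (s : List Bool) : Set (List Bool) :=
  {t | t <+: s ∧ t ≠ s ∧ IsSplitNode R t}

lemma preds_finite (R : Set (List Bool)) (s : List Bool) : (preds R s).Finite := by
  apply Set.Finite.subset (s.inits.finite_toSet)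
  intro u hu
  simpa [List.mem_inits] using hu.1

lemma mem_splitLE {n : ℕ} {R : Set (List Bool)} {s : List Bool} :
    s ∈ splitLE n R ↔ IsSplitNode R s ∧ (preds R s).ncard ≤ n := by
  have hc : Nat.card {t : List Bool // t <+: s ∧ t ≠ s ∧ IsSplitNode R t}
      = (preds R s).ncard := Nat.card_coe_set_eq (preds R s)
  unfold splitLE
  rw [Set.mem_setOf_eq, hc]

lemma prefix_length_lt {a b : List Bool} (h : a <+: b) (hne : a ≠ b) :
    a.length < b.length :=
  lt_of_le_of_ne h.length_le (fun hl => hne (h.eq_of_length_le hl.ge))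

lemma isSplitNode_mono {S R : Set (List Bool)} (h : S ⊆ R) {u : List Bool}
    (hu : IsSplitNode S u) : IsSplitNode R u :=
  ⟨h hu.1, h hu.2.1, h hu.2.2⟩

lemma preds_ncard_lt {R : Set (List Bool)} {s t : List Bool} (ht : t ∈ preds R s) :
    (preds R t).ncard < (preds R s).ncard := by
  apply Set.ncard_lt_ncard _ (preds_finite R s)
  constructor
  · rintro u ⟨h1, h2, h3⟩
    have h4 : u.length < t.length := prefix_length_lt h1 h2
    have h5 : t.length < s.length := prefix_length_lt ht.1 ht.2.1
    exact ⟨h1.trans ht.1, fun he => by subst he; omega, h3⟩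
  · intro hsub
    exact (hsub ht).2.1 rfl

lemma splitLE_mono_index {n k : ℕ} (h : n ≤ k) (R : Set (List Bool)) :
    splitLE n R ⊆ splitLE k R := by
  intro s hs
  rcases mem_splitLE.mp hs with ⟨h1, h2⟩
  exact mem_splitLE.mpr ⟨h1, h2.trans h⟩

lemma SPle_of_le {n k : ℕ} {S R : Set (List Bool)} (hnk : n ≤ k) (h : SPle k S R) :
    SPle n S R := by
  obtain ⟨hsub, heq, hm⟩ := h
  have key : ∀ s ∈ splitLE k S, preds S s = preds R s := by
    intro s hs
    ext t
    constructor
    · rintro ⟨h1, h2, h3⟩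
      refine ⟨h1, h2, ?_⟩
      have htk : t ∈ splitLE k S := mem_splitLE.mpr
        ⟨h3, le_of_lt (lt_of_lt_of_le (preds_ncard_lt ⟨h1, h2, h3⟩) (mem_splitLE.mp hs).2)⟩
      rw [heq] at htk
      exact (mem_splitLE.mp htk).1
    · rintro ⟨h1, h2, h3⟩
      have hsR : s ∈ splitLE k R := heq ▸ hs
      have htk : t ∈ splitLE k R := mem_splitLE.mpr
        ⟨h3, le_of_lt (lt_of_lt_of_le (preds_ncard_lt ⟨h1, h2, h3⟩) (mem_splitLE.mp hsR).2)⟩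
      rw [← heq] at htk
      exact ⟨h1, h2, (mem_splitLE.mp htk).1⟩
  have heqn : splitLE n S = splitLE n R := by
    ext s
    constructor
    · intro hs
      have hsk : s ∈ splitLE k S := splitLE_mono_index hnk S hs
      have hp := key s hsk
      rcases mem_splitLE.mp hs with ⟨_, h2⟩
      have hsR : s ∈ splitLE k R := heq ▸ hsk
      exact mem_splitLE.mpr ⟨(mem_splitLE.mp hsR).1, hp ▸ h2⟩
    · intro hs
      have hskR : s ∈ splitLE k R := splitLE_mono_index hnk R hs
      have hskS : s ∈ splitLE k S := heq.symm ▸ hskR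
      have hp := key s hskS
      rcases mem_splitLE.mp hs with ⟨_, h2⟩
      exact mem_splitLE.mpr ⟨(mem_splitLE.mp hskS).1, hp.symm ▸ h2⟩
  exact ⟨hsub, heqn, fun s hs => hm s (splitLE_mono_index hnk S hs)⟩

lemma SPle_refl (n : ℕ) (S : Set (List Bool)) : SPle n S S :=
  ⟨subset_rfl, rfl, fun _ _ => rfl⟩

lemma SPle_trans {n : ℕ} {S R U : Set (List Bool)} (h1 : SPle n S R) (h2 : SPle n R U) :
    SPle n S U :=
  ⟨h1.1.trans h2.1, h1.2.1.trans h2.2.1,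
    fun s hs => (h1.2.2 s hs).trans (h2.2.2 s (h1.2.1 ▸ hs))⟩

lemma exists_split_bits : ∀ (a b : List Bool), ¬ a <+: b → ¬ b <+: a →
    ∃ u x, u ++ [x] <+: a ∧ u ++ [!x] <+: b := by
  intro a
  induction a with
  | nil => intro b h _; exact absurd List.nil_prefix h
  | cons x a ih =>
    intro b hab hba
    cases b with
    | nil => exact absurd List.nil_prefix hba
    | cons y b =>
      by_cases hxy : x = y
      · subst hxy
        have h1 : ¬ a <+: b := fun h => hab (List.cons_prefix_cons.mpr ⟨rfl, h⟩)
        have h2 : ¬ b <+: a := fun h => hba (List.cons_prefix_cons.mpr ⟨rfl, h⟩)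
        obtain ⟨u, z, hu1, hu2⟩ := ih b h1 h2
        exact ⟨x :: u, z, List.cons_prefix_cons.mpr ⟨rfl, hu1⟩,
          List.cons_prefix_cons.mpr ⟨rfl, hu2⟩⟩
      · have hy : y = !x := by revert hxy; cases x <;> cases y <;> simp
        subst hy
        exact ⟨[], x, List.cons_prefix_cons.mpr ⟨rfl, List.nil_prefix⟩,
          List.cons_prefix_cons.mpr ⟨rfl, List.nil_prefix⟩⟩

lemma prefix_eq_of_length {a b c : List Bool} (h1 : a <+: c) (h2 : b <+: c)
    (hl : a.length = b.length) : a = b := by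
  rcases List.prefix_or_prefix_of_prefix h1 h2 with h | h
  · exact h.eq_of_length_le hl.ge
  · exact (h.eq_of_length_le hl.le).symm

lemma exists_split_above {R : Set (List Bool)} {s : List Bool}
    (hR : PerfectTree R) (hs : s ∈ R) : ∃ t, s <+: t ∧ IsSplitNode R t := by
  obtain ⟨s₀, h0, s₁, h1, hp0, hp1, hi0, hi1⟩ := hR.2 s hs
  obtain ⟨u, x, hux, huy⟩ := exists_split_bits s₀ s₁ hi0 hi1
  have hux' : u ++ [x] ∈ R := hR.1 s₀ h0 _ hux
  have huy' : u ++ [!x] ∈ R := hR.1 s₁ h1 _ huy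
  have hu : u ∈ R := hR.1 _ hux' _ (List.prefix_append u [x])
  have hsp : IsSplitNode R u := by
    cases x with
    | false => exact ⟨hu, hux', by simpa using huy'⟩
    | true => exact ⟨hu, by simpa using huy', hux'⟩
  refine ⟨u, ?_, hsp⟩
  rcases List.prefix_or_prefix_of_prefix hp0 hux with h | h
  · by_cases hlen : s.length ≤ u.length
    · rcases List.prefix_or_prefix_of_prefix h (List.prefix_append u [x]) with h' | h'
      · exact h'
      · rw [h'.eq_of_length_le hlen]
    · have hse : s = u ++ [x] := h.eq_of_length_le (by simp; omega)
      have hx1 : u ++ [x] <+: s₁ := hse ▸ hp1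
      have := prefix_eq_of_length hx1 huy (by simp)
      simp at this
  · have hx1 : u ++ [x] <+: s₁ := h.trans hp1
    have := prefix_eq_of_length hx1 huy (by simp)
    simp at this

lemma exists_min_split {R : Set (List Bool)} {s : List Bool}
    (hR : PerfectTree R) (hs : s ∈ R) :
    ∃ t, s <+: t ∧ IsSplitNode R t ∧ preds R t = preds R s := by
  have hex : ∃ l, ∃ t, s <+: t ∧ IsSplitNode R t ∧ t.length = l := by
    obtain ⟨t, h1, h2⟩ := exists_split_above hR hs
    exact ⟨t.length, t, h1, h2, rfl⟩
  obtain ⟨t, hst, htsp, htl⟩ := Nat.find_spec hex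
  have hmin : ∀ u, s <+: u → IsSplitNode R u → t.length ≤ u.length := by
    intro u h1 h2
    rw [htl]
    exact Nat.find_min' hex ⟨u, h1, h2, rfl⟩
  refine ⟨t, hst, htsp, ?_⟩
  ext u
  constructor
  · rintro ⟨h1, h2, h3⟩
    have hul : u.length < t.length := prefix_length_lt h1 h2
    rcases List.prefix_or_prefix_of_prefix h1 hst with h | h
    · refine ⟨h, fun he => ?_, h3⟩
      subst he
      exact absurd (hmin u (List.prefix_refl u) h3) (not_le.mpr hul)
    · exact absurd (hmin u h h3) (not_le.mpr hul)
  · rintro ⟨h1, h2, h3⟩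
    have hus : u.length < s.length := prefix_length_lt h1 h2
    have hstl : s.length ≤ t.length := hst.length_le
    exact ⟨h1.trans hst, fun he => by subst he; omega, h3⟩

lemma fatWit_mono {S S' : Set (List Bool)} {m : ℕ} (h : S ⊆ S') (hw : FatWit S m) :
    FatWit S' m := by
  intro n hn
  obtain ⟨⟨a, ha, ha'⟩, ⟨b, hb, hb'⟩⟩ := hw n hn
  exact ⟨⟨a, h ha, ha'⟩, ⟨b, h hb, hb'⟩⟩

lemma fatWit_mFat {S : Set (List Bool)} (h : Fat S) : FatWit S (mFat S) := by
  obtain ⟨m, hm⟩ := h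
  exact Nat.sInf_mem (⟨m, hm⟩ : {m : ℕ | FatWit S m}.Nonempty)

lemma mFat_le {S : Set (List Bool)} {m : ℕ} (h : FatWit S m) : mFat S ≤ m :=
  Nat.sInf_le h

lemma restrict_mono_left {S S' : Set (List Bool)} {s : List Bool} (h : S ⊆ S') :
    restrict S s ⊆ restrict S' s :=
  fun u hu => ⟨h hu.1, hu.2⟩

lemma restrict_anti_prefix {S : Set (List Bool)} {s t : List Bool} (h : s <+: t) :
    restrict S t ⊆ restrict S s := by
  rintro u ⟨hu, hc | hc⟩
  · exact ⟨hu, List.prefix_or_prefix_of_prefix hc h⟩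
  · exact ⟨hu, Or.inr (h.trans hc)⟩

lemma pull_lemma (T : ℕ → Set (List Bool)) (htree : ∀ k, IsTree (T k))
    (hdec : ∀ {k m : ℕ}, k ≤ m → T m ⊆ T k)
    {t : List Bool} (ht : ∀ m, t ∈ T m) (n : ℕ) (b : Bool)
    (hb : ∀ m, ∃ u ∈ restrict (T m) t, u[n]? = some b) :
    ∃ p ∈ restrict (⋂ k, T k) t, p[n]? = some b := by
  have hlen_of : ∀ {l : List Bool}, l[n]? = some b → n < l.length := by
    intro l hl
    exact (List.getElem?_eq_some_iff.mp hl).1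
  by_cases hcase : n < t.length
  · obtain ⟨u, ⟨hu1, hu2⟩, hu3⟩ := hb 0
    have htn : t[n]? = some b := by
      rcases hu2 with h | h
      · obtain ⟨w, rfl⟩ := h
        rw [← hu3]
        simp [List.getElem?_append, hlen_of hu3]
      · obtain ⟨w, rfl⟩ := h
        rw [← hu3]
        simp [List.getElem?_append, hcase]
    exact ⟨t, ⟨Set.mem_iInter.mpr ht, Or.inl (List.prefix_refl t)⟩, htn⟩
  · push_neg at hcase
    choose u hu hgu using hb
    have hlen : ∀ m, n < (u m).length := fun m => hlen_of (hgu m)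
    have htpu : ∀ m, t <+: u m := by
      intro m
      rcases (hu m).2 with h | h
      · have e1 := h.length_le
        have e2 := hlen m
        omega
      · exact h
    have hplen : ∀ m, ((u m).take (n + 1)).length = n + 1 := by
      intro m
      have := hlen m
      simp only [List.length_take]
      omega
    set p : ℕ → {l : List Bool // l.length = n + 1} :=
      fun m => ⟨(u m).take (n + 1), hplen m⟩ with hp
    have hprop : ∀ m, (p m).1 ∈ T m ∧ t <+: (p m).1 ∧ (p m).1[n]? = some b := by
      intro m
      refine ⟨htree m _ (hu m).1 _ (List.take_prefix _ _), ?_, ?_⟩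
      · obtain ⟨w, hw⟩ := htpu m
        simp only [hp, ← hw, List.take_append,
          List.take_of_length_le (show t.length ≤ n + 1 by omega)]
        exact List.prefix_append _ _
      · simp only [hp]
        rw [← hgu m]
        simp [List.getElem?_take]
    haveI : Finite {l : List Bool // l.length = n + 1} :=
      inferInstanceAs (Finite (List.Vector Bool (n + 1)))
    obtain ⟨q, hq⟩ := Finite.exists_infinite_fiber p
    have hqinf : {m | p m = q}.Infinite := Set.infinite_coe_iff.mp hq
    have hqT : ∀ k, q.1 ∈ T k := by
      intro k
      obtain ⟨m, hm, hkm⟩ := hqinf.exists_gt k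
      have := (hprop m).1
      rw [hm] at this
      exact hdec hkm.le this
    obtain ⟨m₀, hm₀⟩ := hqinf.nonempty
    have h2 : t <+: q.1 := by
      have := (hprop m₀).2.1
      rwa [hm₀] at this
    have h3 : q.1[n]? = some b := by
      have := (hprop m₀).2.2
      rwa [hm₀] at this
    exact ⟨q.1, ⟨Set.mem_iInter.mpr hqT, Or.inr h2⟩, h3⟩

end Aux

/-- If `⟨T n⟩` is a fusion sequence of splitting trees, i.e. `T (n+1) ≤_n T n`
for all `n`, then `⋂ n, T n` is a splitting tree and `⋂ n, T n ≤_n T n` for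
every `n`. -/
theorem stmt7 (T : ℕ → Set (List Bool)) (hT : ∀ n, SplittingTree (T n))
    (hfus : ∀ n, SPle n (T (n + 1)) (T n)) :
    SplittingTree (⋂ k, T k) ∧ ∀ n, SPle n (⋂ k, T k) (T n) := by
  classical
  set W := ⋂ k, T k with hWdef
  have htree : ∀ k, IsTree (T k) := fun k => (hT k).1.1
  have hdec : ∀ {k m : ℕ}, k ≤ m → T m ⊆ T k := by
    intro k m h
    induction m, h using Nat.le_induction with
    | base => exact subset_rfl
    | succ m hm ih => exact ((hfus m).1).trans ih
  have hchain : ∀ {n m : ℕ}, n ≤ m → SPle n (T m) (T n) := by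
    intro n m h
    induction m, h using Nat.le_induction with
    | base => exact SPle_refl n (T n)
    | succ m hm ih => exact SPle_trans (SPle_of_le hm (hfus m)) ih
  have hWsub : ∀ k, W ⊆ T k := fun k => Set.iInter_subset _ k
  have hmemW : ∀ {x : List Bool}, x ∈ W ↔ ∀ k, x ∈ T k := fun {x} => Set.mem_iInter
  have hsplitW : ∀ {u : List Bool}, IsSplitNode W u ↔ ∀ m, IsSplitNode (T m) u := by
    intro u
    constructor
    · intro h m; exact isSplitNode_mono (hWsub m) h
    · intro h
      exact ⟨hmemW.mpr (fun k => (h k).1), hmemW.mpr (fun k => (h k).2.1),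
        hmemW.mpr (fun k => (h k).2.2)⟩
  have hsplit_anti : ∀ {k m : ℕ} {u : List Bool}, k ≤ m →
      IsSplitNode (T m) u → IsSplitNode (T k) u :=
    fun h hu => isSplitNode_mono (hdec h) hu
  have hstab0 : ∀ {n m : ℕ}, n ≤ m → splitLE n (T m) = splitLE n (T n) :=
    fun h => (hchain h).2.1
  have hpreds_anti : ∀ {k m : ℕ} (t : List Bool), k ≤ m →
      preds (T m) t ⊆ preds (T k) t :=
    fun t h u hu => ⟨hu.1, hu.2.1, hsplit_anti h hu.2.2⟩
  have hpredsW_sub : ∀ (t : List Bool) (m : ℕ), preds W t ⊆ preds (T m) t :=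
    fun t m u hu => ⟨hu.1, hu.2.1, isSplitNode_mono (hWsub m) hu.2.2⟩
  -- stabilization of split-predecessor sets
  have K2 : ∀ t : List Bool, ∃ M, preds (T M) t = preds W t := by
    intro t
    have hchoice : ∀ u : List Bool, ∃ m, ¬ IsSplitNode W u → ¬ IsSplitNode (T m) u := by
      intro u
      by_cases h : IsSplitNode W u
      · exact ⟨0, fun hc => absurd h hc⟩
      · rw [hsplitW] at h
        push_neg at h
        obtain ⟨m, hm⟩ := h
        exact ⟨m, fun _ => hm⟩
    choose g hg using hchoice
    set M := ((t.inits).map g).sum with hM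
    have hgM : ∀ u ∈ t.inits, g u ≤ M :=
      fun u hu => List.single_le_sum (fun x _ => Nat.zero_le x) _ (List.mem_map_of_mem (f := g) hu)
    refine ⟨M, Set.Subset.antisymm ?_ (hpredsW_sub t M)⟩
    rintro u ⟨h1, h2, h3⟩
    refine ⟨h1, h2, ?_⟩
    by_contra hW
    exact hg u hW (hsplit_anti (hgM u ((List.mem_inits _ _).mpr h1)) h3)
  have K3 : ∀ t : List Bool, IsSplitNode W t → ∀ m, (preds W t).ncard ≤ m →
      t ∈ splitLE ((preds W t).ncard) (T m) := by
    intro t ht m hm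
    obtain ⟨M, hM⟩ := K2 t
    have hM' : preds (T (max M m)) t = preds W t :=
      Set.Subset.antisymm ((hpreds_anti t (le_max_left M m)).trans hM.subset)
        (hpredsW_sub t _)
    have ht1 : t ∈ splitLE ((preds W t).ncard) (T (max M m)) :=
      mem_splitLE.mpr ⟨hsplitW.mp ht (max M m), by rw [hM']⟩
    rw [hstab0 (hm.trans (le_max_right M m))] at ht1
    rw [← hstab0 hm] at ht1
    exact ht1
  have K1 : ∀ (h : ℕ) (t : List Bool), (∀ m, h ≤ m → t ∈ splitLE h (T m)) →
      IsSplitNode W t := by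
    intro h t hall
    rw [hsplitW]
    intro m
    rcases le_or_gt h m with hc | hc
    · exact (mem_splitLE.mp (hall m hc)).1
    · exact hsplit_anti hc.le (mem_splitLE.mp (hall h le_rfl)).1
  have K4 : ∀ s ∈ W, ∃ t h, s <+: t ∧ (∀ m, h ≤ m → t ∈ splitLE h (T m)) := by
    intro s hs
    obtain ⟨M, hM⟩ := K2 s
    set h := (preds W s).ncard with hh
    set m₀ := max M h with hm₀
    obtain ⟨t, hst, htsp, hpe⟩ := exists_min_split (hT m₀).1 (hmemW.mp hs m₀)
    have hpm : preds (T m₀) s = preds W s :=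
      Set.Subset.antisymm ((hpreds_anti s (le_max_left M h)).trans hM.subset)
        (hpredsW_sub s _)
    have ht1 : t ∈ splitLE h (T m₀) := mem_splitLE.mpr ⟨htsp, by rw [hpe, hpm]⟩
    rw [hstab0 (le_max_right M h)] at ht1
    refine ⟨t, h, hst, ?_⟩
    intro m hm
    rw [hstab0 hm]
    exact ht1
  have K6 : ∀ (t : List Bool) (h : ℕ), (∀ m, h ≤ m → t ∈ splitLE h (T m)) →
      Fat (restrict W t) ∧ ∀ m, h ≤ m → mFat (restrict W t) = mFat (restrict (T m) t) := by
    intro t h hall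
    have htW : ∀ m, t ∈ T m := by
      intro m
      rcases le_or_gt h m with hc | hc
      · exact (mem_splitLE.mp (hall m hc)).1.1
      · exact hdec hc.le (mem_splitLE.mp (hall h le_rfl)).1.1
    have hμm : ∀ m, h ≤ m → mFat (restrict (T m) t) = mFat (restrict (T h) t) :=
      fun m hm => (hchain hm).2.2 t (hall m hm)
    have hfatm : ∀ m, FatWit (restrict (T m) t) (mFat (restrict (T h) t)) := by
      intro m
      have hf : Fat (restrict (T (max h m)) t) := (hT _).2 t (htW _)
      have hw := fatWit_mFat hf
      rw [hμm _ (le_max_left h m)] at hw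
      exact fatWit_mono (restrict_mono_left (hdec (le_max_right h m))) hw
    have hWit : FatWit (restrict W t) (mFat (restrict (T h) t)) := by
      intro n hn
      have hpf := pull_lemma T htree (fun {k m} hkm => hdec hkm) htW n false
        (fun m => ((hfatm m) n hn).1)
      have hpt := pull_lemma T htree (fun {k m} hkm => hdec hkm) htW n true
        (fun m => ((hfatm m) n hn).2)
      rw [← hWdef] at hpf hpt
      exact ⟨hpf, hpt⟩
    have hFat : Fat (restrict W t) := ⟨_, hWit⟩
    refine ⟨hFat, ?_⟩
    intro m hm
    have hle : mFat (restrict W t) ≤ mFat (restrict (T h) t) := mFat_le hWit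
    have hge : mFat (restrict (T h) t) ≤ mFat (restrict W t) := by
      have hw := fatWit_mFat hFat
      have h2 := mFat_le (fatWit_mono (restrict_mono_left (hWsub h)) hw)
      rwa [hμm h le_rfl] at h2
    rw [le_antisymm hle hge, hμm m hm]
  have K7 : ∀ n, splitLE n W = splitLE n (T n) := by
    intro n
    ext t
    constructor
    · intro ht
      rcases mem_splitLE.mp ht with ⟨h1, h2⟩
      have h3 := K3 t h1 n h2
      rcases mem_splitLE.mp h3 with ⟨h4, h5⟩
      exact mem_splitLE.mpr ⟨h4, h5.trans h2⟩
    · intro ht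
      have hall : ∀ m, n ≤ m → t ∈ splitLE n (T m) := by
        intro m hm
        rw [hstab0 hm]
        exact ht
      have hsp : IsSplitNode W t := K1 n t hall
      refine mem_splitLE.mpr ⟨hsp, ?_⟩
      calc (preds W t).ncard ≤ (preds (T n) t).ncard :=
            Set.ncard_le_ncard (hpredsW_sub t n) (preds_finite _ _)
        _ ≤ n := (mem_splitLE.mp ht).2
  constructor
  · refine ⟨⟨?_, ?_⟩, ?_⟩
    · intro s hs u hu
      exact hmemW.mpr (fun k => htree k s (hmemW.mp hs k) u hu)
    · intro t ht
      obtain ⟨u, h, htu, hall⟩ := K4 t ht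
      have hsp := K1 h u hall
      refine ⟨u ++ [false], hsp.2.1, u ++ [true], hsp.2.2,
        htu.trans (List.prefix_append u _), htu.trans (List.prefix_append u _), ?_, ?_⟩
      · intro hc
        have := hc.eq_of_length_le (by simp)
        simp at this
      · intro hc
        have := hc.eq_of_length_le (by simp)
        simp at this
    · intro s hs
      obtain ⟨u, h, hsu, hall⟩ := K4 s hs
      obtain ⟨m, hm⟩ := (K6 u h hall).1
      exact ⟨m, fatWit_mono (restrict_anti_prefix hsu) hm⟩
  · intro n
    refine ⟨hWsub n, K7 n, ?_⟩
    intro s hs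
    rcases mem_splitLE.mp hs with ⟨h1, h2⟩
    exact (K6 s ((preds W s).ncard) (fun m hm => K3 s h1 m hm)).2 n h2
end

section
/- For every splitting tree S there is an antichain A ⊆ S (as a subset of 2^{<ω}, i.e., pairwise incomparable nodes) such that for every k ∈ ω and j ∈ 2, if some s ∈ S satisfies s(k) = j then some t ∈ A satisfies t(k) = j. -/
namespace Stmt8Aux

/-- Incomparability of nodes. -/
def Incomp (x y : List Bool) : Prop := ¬ x <+: y ∧ ¬ y <+: x

lemma Incomp.symm {x y : List Bool} (h : Incomp x y) : Incomp y x := ⟨h.2, h.1⟩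

lemma get?_eq_of_prefix {x y : List Bool} (h : x <+: y) {k : ℕ} (hk : k < x.length) :
    y[k]? = x[k]? := by
  obtain ⟨z, rfl⟩ := h
  exact List.getElem?_append_left hk

lemma lt_length_of_get? {x : List Bool} {k : ℕ} {v : Bool} (h : x[k]? = some v) :
    k < x.length := (List.getElem?_eq_some_iff.mp h).1

/-- If a proper position has different values in `x` and `y`, they are incomparable. -/
lemma incomp_of_get?_ne {x y : List Bool} {p : ℕ} {v w : Bool}
    (hx : x[p]? = some v) (hy : y[p]? = some w) (hvw : v ≠ w) : Incomp x y := by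
  constructor
  · intro h
    rw [get?_eq_of_prefix h (lt_length_of_get? hx), hx] at hy
    exact hvw (Option.some.inj hy)
  · intro h
    rw [get?_eq_of_prefix h (lt_length_of_get? hy), hy] at hx
    exact hvw (Option.some.inj hx).symm

/-- Extensions of `r` inherit incomparability from `r`. -/
lemma Incomp.of_prefix {r x y : List Bool} (hr : r <+: x) (h : Incomp r y) : Incomp x y := by
  constructor
  · exact fun hxy => h.1 (hr.trans hxy)
  · intro hyx
    rcases List.prefix_or_prefix_of_prefix hr hyx with h1 | h1
    · exact h.1 h1
    · exact h.2 h1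

lemma prefix_of_get? {x y : List Bool} (h : ∀ i, i < x.length → y[i]? = x[i]?) :
    x <+: y := by
  rw [List.prefix_iff_eq_take]
  apply List.ext_getElem?
  intro n
  by_cases hn : n < x.length
  · rw [List.getElem?_take_of_lt hn, h n hn]
  · rw [List.getElem?_eq_none_iff.2 (by omega), List.getElem?_eq_none_iff.2 (by simp [List.length_take]; omega)]

lemma take_eq_of_agree {x y : List Bool} {p : ℕ} (h : ∀ i, i < p → x[i]? = y[i]?) :
    x.take p = y.take p := by
  apply List.ext_getElem?
  intro n
  by_cases hn : n < p
  · rw [List.getElem?_take_of_lt hn, List.getElem?_take_of_lt hn, h n hn]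
  · rw [List.getElem?_eq_none_iff.2 (by simp [List.length_take]; omega),
      List.getElem?_eq_none_iff.2 (by simp [List.length_take]; omega)]

/-- Two incomparable nodes have a least divergence point, with values defined on both. -/
lemma exists_divergence {x y : List Bool} (h : Incomp x y) :
    ∃ p v w, x[p]? = some v ∧ y[p]? = some w ∧ v ≠ w ∧ x.take p = y.take p := by
  classical
  have hne : ∃ p : ℕ, x[p]? ≠ y[p]? := by
    by_contra hc
    push_neg at hc
    exact h.1 (List.ext_getElem? hc ▸ List.prefix_refl x)
  set p := Nat.find hne with hp
  have hdp : x[p]? ≠ y[p]? := Nat.find_spec hne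
  have hagree : ∀ i, i < p → x[i]? = y[i]? := fun i hi => by
    by_contra hic; exact absurd (Nat.find_le hic : p ≤ i) (by omega)
  have hx : ∃ v, x[p]? = some v := by
    rcases hxv : x[p]? with _ | v
    · exfalso
      apply h.1
      apply prefix_of_get?
      intro i hi
      have hpx : x.length ≤ p := List.getElem?_eq_none_iff.1 hxv
      exact (hagree i (by omega)).symm
    · exact ⟨v, rfl⟩
  have hy : ∃ w, y[p]? = some w := by
    rcases hyv : y[p]? with _ | w
    · exfalso
      apply h.2
      apply prefix_of_get?
      intro i hi
      have hpy : y.length ≤ p := List.getElem?_eq_none_iff.1 hyv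
      exact (hagree i (by omega))
    · exact ⟨w, rfl⟩
  obtain ⟨v, hv⟩ := hx
  obtain ⟨w, hw⟩ := hy
  refine ⟨p, v, w, hv, hw, ?_, take_eq_of_agree hagree⟩
  intro hvw
  exact hdp (by rw [hv, hw, hvw])

variable {S : Set (List Bool)}

/-- Any node of a perfect tree has arbitrarily long extensions in the tree. -/
lemma exists_long (hS : SplittingTree S) {s : List Bool} (hs : s ∈ S) (L : ℕ) :
    ∃ t ∈ S, s <+: t ∧ L ≤ t.length := by
  induction L with
  | zero => exact ⟨s, hs, List.prefix_refl s, Nat.zero_le _⟩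
  | succ L ih =>
    obtain ⟨t, ht, hst, hL⟩ := ih
    obtain ⟨a, ha, b, hb, hta, htb, hab, hba⟩ := hS.1.2 t ht
    have hne : t ≠ a := by
      rintro rfl
      exact hab htb
    have : t.length < a.length := by
      rcases Nat.lt_or_ge t.length a.length with h | h
      · exact h
      · exact absurd (hta.eq_of_length (le_antisymm hta.length_le h)) hne
    exact ⟨a, ha, hst.trans hta, by omega⟩

lemma fat_spec {T : Set (List Bool)} (h : Fat T) :
    ∃ m, ∀ k : ℕ, m ≤ k → ∀ j : Bool, ∃ u ∈ T, u[k]? = some j := by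
  obtain ⟨m, hm⟩ := h
  refine ⟨m, fun k hk j => ?_⟩
  cases j
  · exact (hm k hk).1
  · exact (hm k hk).2

/-- The invariant of the recursive construction: a partial antichain `A` plus a
"reservoir" antichain `R`, such that every realized value is either covered by `A`
or witnessed in the restriction of `S` to some reservoir node. -/
structure Good (S : Set (List Bool)) (A R : Set (List Bool)) : Prop where
  hA : A ⊆ S
  hR : R ⊆ S
  hAA : ∀ x ∈ A, ∀ y ∈ A, x ≠ y → Incomp x y
  hRR : ∀ x ∈ R, ∀ y ∈ R, x ≠ y → Incomp x y
  hAR : ∀ x ∈ A, ∀ y ∈ R, Incomp x y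
  cov : ∀ (k : ℕ) (j : Bool), (∃ s ∈ S, s[k]? = some j) →
    (∃ t ∈ A, t[k]? = some j) ∨ (∃ r ∈ R, ∃ u ∈ restrict S r, u[k]? = some j)

lemma step (hS : SplittingTree S) {A R : Set (List Bool)} (h : Good S A R) (k : ℕ) (j : Bool) :
    ∃ A' R', Good S A' R' ∧ A ⊆ A' ∧
      ((∃ s ∈ S, s[k]? = some j) → ∃ t ∈ A', t[k]? = some j) := by
  classical
  by_cases hcov : ∃ t ∈ A, t[k]? = some j
  · exact ⟨A, R, h, subset_rfl, fun _ => hcov⟩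
  by_cases hwit : ∃ s ∈ S, s[k]? = some j
  swap
  · exact ⟨A, R, h, subset_rfl, fun hw => absurd hw hwit⟩
  -- main case
  obtain ⟨r, hrR, u, hu, huk⟩ := (h.cov k j hwit).resolve_left hcov
  have hrS : r ∈ S := h.hR hrR
  have huS : u ∈ S := hu.1
  -- w ⊇ r with w(k) = j
  obtain ⟨w, hwS, hrw, hwk⟩ : ∃ w, w ∈ S ∧ r <+: w ∧ w[k]? = some j := by
    rcases hu.2 with h1 | h1
    · exact ⟨r, hrS, List.prefix_refl r,
        by rw [get?_eq_of_prefix h1 (lt_length_of_get? huk)]; exact huk⟩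
    · exact ⟨u, huS, h1, huk⟩
  -- split w
  obtain ⟨a, ha, b, hb, hwa, hwb, hab, hba⟩ := hS.1.2 w hwS
  have Iab : Incomp a b := ⟨hab, hba⟩
  -- fat bound of restrict S b
  obtain ⟨m, hm⟩ := fat_spec (hS.2 b hb)
  -- long extension t of a
  obtain ⟨t, htS, hat, htlen⟩ := exists_long hS ha m
  have hwt : w <+: t := hwa.trans hat
  have hrt : r <+: t := hrw.trans hwt
  have htk : t[k]? = some j := by
    rw [get?_eq_of_prefix hwt (lt_length_of_get? hwk)]; exact hwk
  -- incomparability of b and t, divergence node d_q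
  have Ibt : Incomp b t := (Iab.of_prefix hat).symm
  obtain ⟨q, vb, vt, hbq, htq, hvbt, hbtq⟩ := exists_divergence Ibt
  have hrb : r <+: b := hrw.trans hwb
  -- the set of divergence nodes along t above r
  set D : Set (List Bool) :=
    {x | ∃ p v, r.length ≤ p ∧ t[p]? = some v ∧ x = t.take p ++ [!v] ∧ x ∈ S} with hD
  have hDS : D ⊆ S := by rintro x ⟨p, v, _, _, _, hxS⟩; exact hxS
  -- r is a prefix of every divergence node
  have hrtake : ∀ p, r.length ≤ p → r <+: t.take p := by
    intro p hp
    have h1 : r = (t.take p).take r.length := by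
      rw [List.take_take, min_eq_left hp]
      exact List.prefix_iff_eq_take.1 hrt
    rw [h1]; exact List.take_prefix _ _
  have hrD : ∀ x ∈ D, r <+: x := by
    rintro x ⟨p, v, hp, hv, rfl, -⟩
    exact (hrtake p hp).trans (List.prefix_append _ _)
  -- the divergence point of b and t gives a member of D which is below b
  have hqr : r.length ≤ q := by
    by_contra hc
    push_neg at hc
    rw [get?_eq_of_prefix hrb hc] at hbq
    rw [get?_eq_of_prefix hrt hc] at htq
    rw [hbq] at htq
    exact hvbt (Option.some.inj htq)
  have hdq : b.take (q+1) ∈ D := by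
    refine ⟨q, vt, hqr, htq, ?_, hS.1.1 b hb _ (List.take_prefix _ _)⟩
    have h1 : b.take (q+1) = b.take q ++ (b[q]?).toList := by
      exact List.take_succ
    rw [h1, hbq, hbtq]
    have : vb = !vt := by cases vb <;> cases vt <;> first | rfl | exact absurd rfl hvbt
    rw [this]
    rfl
  have hdqb : b.take (q+1) <+: b := List.take_prefix _ _
  -- membership / incomparability facts about D
  have hDval : ∀ p v, r.length ≤ p → t[p]? = some v →
      (t.take p ++ [!v])[p]? = some (!v) := by
    intro p v _ hv
    have hlt : p < t.length := lt_length_of_get? hv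
    have hlen : (t.take p).length = p := by simp [List.length_take]; omega
    have h2 := List.getElem?_concat_length (l := t.take p) (a := !v)
    rwa [hlen] at h2
  have hDt : ∀ x ∈ D, Incomp x t := by
    rintro x ⟨p, v, hp, hv, rfl, -⟩
    exact incomp_of_get?_ne (hDval p v hp hv) hv (by simp)
  have hDD : ∀ x ∈ D, ∀ y ∈ D, x ≠ y → Incomp x y := by
    have key : ∀ p v p' v', r.length ≤ p → t[p]? = some v → r.length ≤ p' →
        t[p']? = some v' → p < p' →
        Incomp (t.take p ++ [!v]) (t.take p' ++ [!v']) := by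
      intro p v p' v' hp hv hp' hv' hpp'
      have h1 : (t.take p ++ [!v])[p]? = some (!v) := hDval p v hp hv
      have h2 : (t.take p' ++ [!v'])[p]? = some v := by
        have hlt : p < (t.take p').length := by
          have := lt_length_of_get? hv'
          simp only [List.length_take]
          omega
        rw [List.getElem?_append_left hlt, List.getElem?_take_of_lt hpp']
        exact hv
      exact incomp_of_get?_ne h1 h2 (by simp)
    rintro x ⟨p, v, hp, hv, rfl, -⟩ y ⟨p', v', hp', hv', rfl, -⟩ hne
    rcases lt_trichotomy p p' with hlt | heq | hlt
    · exact key p v p' v' hp hv hp' hv' hlt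
    · subst heq
      rw [hv] at hv'
      exact absurd (by rw [Option.some.inj hv']) hne
    · exact (key p' v' p v hp' hv' hp hv hlt).symm
  -- the new state
  refine ⟨insert t A, (R \ {r}) ∪ D, ?_, Set.subset_insert t A, fun _ => ⟨t, Set.mem_insert t A, htk⟩⟩
  constructor
  · exact Set.insert_subset htS h.hA
  · rintro x (hx | hx)
    · exact h.hR hx.1
    · exact hDS hx
  · -- hAA
    rintro x (rfl | hx) y (rfl | hy) hne
    · exact absurd rfl hne
    · exact (h.hAR y hy r hrR).symm.of_prefix hrt
    · exact ((h.hAR x hx r hrR).symm.of_prefix hrt).symm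
    · exact h.hAA x hx y hy hne
  · -- hRR
    rintro x (hx | hx) y (hy | hy) hne
    · exact h.hRR x hx.1 y hy.1 hne
    · -- x ∈ R \ {r}, y ∈ D
      have hxr : x ≠ r := hx.2
      exact ((h.hRR r hrR x hx.1 (Ne.symm hxr)).of_prefix (hrD y hy)).symm
    · have hyr : y ≠ r := hy.2
      exact (h.hRR r hrR y hy.1 (Ne.symm hyr)).of_prefix (hrD x hx)
    · exact hDD x hx y hy hne
  · -- hAR
    rintro x (rfl | hx) y (hy | hy)
    · exact (h.hRR r hrR y hy.1 (Ne.symm hy.2)).of_prefix hrt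
    · exact (hDt y hy).symm
    · exact h.hAR x hx y hy.1
    · exact ((h.hAR x hx r hrR).symm.of_prefix (hrD y hy)).symm
  · -- cov
    intro k₀ j₀ hwit₀
    rcases h.cov k₀ j₀ hwit₀ with ⟨t₀, ht₀, ht₀k⟩ | ⟨r₀, hr₀, u₀, hu₀, hu₀k⟩
    · exact Or.inl ⟨t₀, Set.mem_insert_of_mem t ht₀, ht₀k⟩
    by_cases hr₀r : r₀ = r
    swap
    · exact Or.inr ⟨r₀, Or.inl ⟨hr₀, hr₀r⟩, u₀, hu₀, hu₀k⟩
    rw [hr₀r] at hu₀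
    clear hr₀r
    by_cases htk₀ : t[k₀]? = some j₀
    · exact Or.inl ⟨t, Set.mem_insert t A, htk₀⟩
    by_cases hk₀m : m ≤ k₀
    · -- use fatness of restrict S b; witnesses there are comparable with b.take (q+1)
      obtain ⟨u', hu', hu'k⟩ := hm k₀ hk₀m j₀
      refine Or.inr ⟨b.take (q+1), Or.inr hdq, u', ⟨hu'.1, ?_⟩, hu'k⟩
      rcases hu'.2 with h1 | h1
      · exact List.prefix_or_prefix_of_prefix h1 hdqb
      · exact Or.inr (hdqb.trans h1)
    · -- k₀ < m ≤ t.length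
      push_neg at hk₀m
      have hk₀t : k₀ < t.length := by omega
      obtain ⟨v₀, hv₀⟩ : ∃ v₀, t[k₀]? = some v₀ := by
        rcases hvv : t[k₀]? with _ | v₀
        · exact absurd (List.getElem?_eq_none_iff.1 hvv) (by omega)
        · exact ⟨v₀, rfl⟩
      have hv₀j : v₀ ≠ j₀ := fun hc => htk₀ (hc ▸ hv₀)
      rcases hu₀.2 with h1 | h1
      · -- u₀ <+: r : then r (hence b.take (q+1)) already has value j₀ at k₀
        have hk₀u : k₀ < u₀.length := lt_length_of_get? hu₀k
        have hrk : r[k₀]? = some j₀ := by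
          rw [get?_eq_of_prefix h1 hk₀u]; exact hu₀k
        have hdqr : r <+: b.take (q+1) := hrD _ hdq
        refine Or.inr ⟨b.take (q+1), Or.inr hdq, b.take (q+1),
          ⟨hDS hdq, Or.inl (List.prefix_refl _)⟩, ?_⟩
        rw [get?_eq_of_prefix hdqr (lt_length_of_get? hrk)]
        exact hrk
      · -- r <+: u₀
        have hut : Incomp u₀ t := by
          constructor
          · intro hc
            apply htk₀
            rw [get?_eq_of_prefix hc (lt_length_of_get? hu₀k)]
            exact hu₀k
          · intro hc
            rw [get?_eq_of_prefix hc hk₀t, hv₀] at hu₀k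
            exact hv₀j (Option.some.inj hu₀k)
        obtain ⟨p, w₁, w₂, hup, htp, hw12, hupt⟩ := exists_divergence hut
        have hpr : r.length ≤ p := by
          by_contra hc
          push_neg at hc
          rw [get?_eq_of_prefix h1 hc] at hup
          rw [get?_eq_of_prefix hrt hc] at htp
          rw [hup] at htp
          exact hw12 (Option.some.inj htp)
        have hd : u₀.take (p+1) ∈ D := by
          refine ⟨p, w₂, hpr, htp, ?_, hS.1.1 u₀ hu₀.1 _ (List.take_prefix _ _)⟩
          have h2 : u₀.take (p+1) = u₀.take p ++ (u₀[p]?).toList := by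
            exact List.take_succ
          rw [h2, hup, hupt]
          have : w₁ = !w₂ := by cases w₁ <;> cases w₂ <;> first | rfl | exact absurd rfl hw12
          rw [this]
          rfl
        exact Or.inr ⟨u₀.take (p+1), Or.inr hd, u₀,
          ⟨hu₀.1, Or.inr (List.take_prefix _ _)⟩, hu₀k⟩

end Stmt8Aux

open Stmt8Aux in
/-- For every splitting tree `S` there is an antichain `A ⊆ S` (pairwise
incomparable nodes of `2^{<ω}`) such that for every `k` and `j ∈ 2`, if some
`s ∈ S` has `s(k) = j`, then some `t ∈ A` has `t(k) = j`. -/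
theorem stmt8 (S : Set (List Bool)) (hS : SplittingTree S) :
    ∃ A ⊆ S, (∀ s ∈ A, ∀ t ∈ A, s ≠ t → ¬ s <+: t ∧ ¬ t <+: s) ∧
      ∀ (k : ℕ) (j : Bool), (∃ s ∈ S, s[k]? = some j) →
        ∃ t ∈ A, t[k]? = some j := by
  classical
  by_cases hne : ([] : List Bool) ∈ S
  swap
  · refine ⟨∅, by simp, by simp, ?_⟩
    rintro k j ⟨s, hs, -⟩
    exact absurd (hS.1.1 s hs [] (List.nil_prefix)) hne
  -- initial state
  have q0 : Good S ∅ {[]} := by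
    refine ⟨by simp, by simp [hne], by simp, ?_, by simp, ?_⟩
    · intro x hx y hy hxy
      simp only [Set.mem_singleton_iff] at hx hy
      exact absurd (hx.trans hy.symm) hxy
    · intro k j ⟨s, hs, hsk⟩
      exact Or.inr ⟨[], rfl, s, ⟨hs, Or.inr (List.nil_prefix)⟩, hsk⟩
  -- iterate the step lemma
  let St := {q : Set (List Bool) × Set (List Bool) // Good S q.1 q.2}
  have hstep : ∀ q : St, ∀ n : ℕ, ∃ q' : St, q.1.1 ⊆ q'.1.1 ∧
      ((∃ s ∈ S, s[(n / 2)]? = some (n % 2 == 1)) →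
        ∃ t ∈ q'.1.1, t[(n / 2)]? = some (n % 2 == 1)) := by
    intro q n
    obtain ⟨A', R', hg, hsub, hcov⟩ := step hS q.2 (n / 2) (n % 2 == 1)
    exact ⟨⟨(A', R'), hg⟩, hsub, hcov⟩
  let g : ℕ → St := fun n =>
    Nat.rec (motive := fun _ => St) ⟨(∅, {[]}), q0⟩ (fun n q => (hstep q n).choose) n
  have hg : ∀ n, g (n + 1) = (hstep (g n) n).choose := fun n => rfl
  have hsucc : ∀ n, (g n).1.1 ⊆ (g (n + 1)).1.1 := fun n => (hstep (g n) n).choose_spec.1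
  have hmono : ∀ m n, m ≤ n → (g m).1.1 ⊆ (g n).1.1 := by
    intro m n hmn
    induction hmn with
    | refl => exact subset_rfl
    | @step n' h ih => exact ih.trans (hsucc n')
  refine ⟨⋃ n, (g n).1.1, ?_, ?_, ?_⟩
  · exact Set.iUnion_subset fun n => (g n).2.hA
  · intro s hs t ht hst
    obtain ⟨n₁, hn₁⟩ := Set.mem_iUnion.1 hs
    obtain ⟨n₂, hn₂⟩ := Set.mem_iUnion.1 ht
    have h1 : s ∈ (g (max n₁ n₂)).1.1 := hmono n₁ _ (le_max_left _ _) hn₁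
    have h2 : t ∈ (g (max n₁ n₂)).1.1 := hmono n₂ _ (le_max_right _ _) hn₂
    exact (g (max n₁ n₂)).2.hAA s h1 t h2 hst
  · intro k j hwit
    obtain ⟨n, hdiv, hmod⟩ : ∃ n, n / 2 = k ∧ (n % 2 == 1) = j := by
      cases j
      · refine ⟨2 * k, by omega, ?_⟩
        have h2 : (2 * k) % 2 = 0 := by omega
        simp [h2]
      · refine ⟨2 * k + 1, by omega, ?_⟩
        have h2 : (2 * k + 1) % 2 = 1 := by omega
        simp [h2]
    have hcov := (hstep (g n) n).choose_spec.2
    obtain ⟨t, htA, htk⟩ := hcov (by rw [hdiv, hmod]; exact hwit)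
    rw [hdiv, hmod] at htk
    exact ⟨t, Set.mem_iUnion.2 ⟨n + 1, htA⟩, htk⟩
end

section
/- Splitting forcing SP is weighted: for every splitting tree T there is a weight ρ on T (a map ρ : T × T → [T]^{<ω} with ρ(s,t) ⊆ T_s ∖ T_t) such that every tree S with S ≤_ρ T is again a splitting tree. -/
/-- A weight on a perfect tree `T`: a map `ρ : T × T → [T]^{<ω}` with
`ρ(s,t) ⊆ T_s ∖ T_t`. -/
def IsWeight (T : Set (List Bool)) (ρ : List Bool → List Bool → Finset (List Bool)) : Prop :=
  ∀ s ∈ T, ∀ t ∈ T, ↑(ρ s t) ⊆ restrict T s \ restrict T t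

/-- `S ≤_ρ T`: `S ⊆ T` and there is a dense set of `s₀ ∈ S` admitting an
injective sequence `(s_n)` in `S_{s₀}` with `s₀` as first element and
`ρ(s_n, s_{n+1}) ⊆ S` for all `n`. -/
def LeRho (ρ : List Bool → List Bool → Finset (List Bool)) (T S : Set (List Bool)) : Prop :=
  S ⊆ T ∧ ∀ s ∈ S, ∃ s₀ ∈ S, s <+: s₀ ∧ ∃ f : ℕ → List Bool,
    Function.Injective f ∧ f 0 = s₀ ∧ (∀ n, f n ∈ restrict S s₀) ∧
    ∀ n, ↑(ρ (f n) (f (n + 1))) ⊆ S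

namespace SP9

open scoped Classical
open List

/-! ### List lemmas -/

lemma get?_of_prefix {x y : List Bool} (h : x <+: y) {n : ℕ} {b : Bool}
    (hx : x[n]? = some b) : y[n]? = some b := by
  have hn : n < x.length := (List.getElem?_eq_some_iff.mp hx).1
  obtain ⟨r, rfl⟩ := h
  rw [List.getElem?_append, if_pos hn]; exact hx

lemma incomp_of_get?_ne {x y : List Bool} {n : ℕ} {b c : Bool}
    (hx : x[n]? = some b) (hy : y[n]? = some c) (hbc : b ≠ c) :
    ¬ x <+: y ∧ ¬ y <+: x := by
  constructor
  · intro h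
    have := get?_of_prefix h hx
    rw [hy] at this
    exact hbc (Option.some.inj this).symm
  · intro h
    have := get?_of_prefix h hy
    rw [hx] at this
    exact hbc (Option.some.inj this)

lemma lt_length_of_get? {x : List Bool} {n : ℕ} {b : Bool} (h : x[n]? = some b) :
    n < x.length := (List.getElem?_eq_some_iff.mp h).1

lemma prefix_of_compat_le {x y : List Bool} (h : x <+: y ∨ y <+: x)
    (hl : x.length ≤ y.length) : x <+: y := by
  rcases h with h | h
  · exact h
  · rw [h.eq_of_length_le hl]

lemma exists_diverge : ∀ (x y : List Bool), ¬ x <+: y → ¬ y <+: x →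
    ∃ w b, w ++ [b] <+: x ∧ w ++ [!b] <+: y := by
  intro x
  induction x with
  | nil => intro y h _; exact absurd (List.nil_prefix) h
  | cons a x ih =>
    intro y hxy hyx
    cases y with
    | nil => exact absurd (List.nil_prefix) hyx
    | cons c y' =>
      by_cases hac : a = c
      · subst hac
        have h1 : ¬ x <+: y' := fun h => hxy (List.cons_prefix_cons.mpr ⟨rfl, h⟩)
        have h2 : ¬ y' <+: x := fun h => hyx (List.cons_prefix_cons.mpr ⟨rfl, h⟩)
        obtain ⟨w, b, hw1, hw2⟩ := ih y' h1 h2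
        exact ⟨a :: w, b, List.cons_prefix_cons.mpr ⟨rfl, hw1⟩,
          List.cons_prefix_cons.mpr ⟨rfl, hw2⟩⟩
      · refine ⟨[], a, ?_, ?_⟩ <;>
          · cases a <;> cases c <;>
              simp_all [List.cons_prefix_cons, List.nil_prefix]

lemma prefix_snoc {x y : List Bool} (h : x <+: y) (hl : x.length < y.length) :
    ∃ b, y[x.length]? = some b ∧ x ++ [b] <+: y := by
  obtain ⟨r, rfl⟩ := h
  cases r with
  | nil => simp at hl
  | cons c r' =>
    refine ⟨c, ?_, ?_⟩
    · have h1 : x ++ [c] <+: x ++ c :: r' := ⟨r', by simp⟩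
      exact get?_of_prefix h1 (by simp)
    · exact ⟨r', by simp⟩

/-! ### Splitting nodes and choice functions -/

/-- `v` is a splitting node of `T`. -/
def Splt (T : Set (List Bool)) (v : List Bool) : Prop :=
  v ∈ T ∧ v ++ [false] ∈ T ∧ v ++ [true] ∈ T

lemma prefix_of_base {s v t w : List Bool} {b : Bool} (hsv : s <+: v) (hst : s <+: t)
    (h1 : w ++ [b] <+: v) (h2 : w ++ [!b] <+: t) : s <+: w := by
  by_cases hl : s.length ≤ w.length
  · exact List.prefix_of_prefix_length_le hsv ((List.prefix_append w [b]).trans h1) hl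
  · exfalso
    have h3 : w ++ [b] <+: s :=
      List.prefix_of_prefix_length_le h1 hsv (by simp; omega)
    have h4 : w ++ [b] <+: t := h3.trans hst
    have e1 : t[w.length]? = some b := get?_of_prefix h4 (by simp)
    have e2 : t[w.length]? = some (!b) := get?_of_prefix h2 (by simp)
    rw [e1] at e2
    cases b <;> simp_all

lemma split_of_diverge {T : Set (List Bool)} (hTt : IsTree T) {v t w : List Bool} {b : Bool}
    (hv : v ∈ T) (ht : t ∈ T) (h1 : w ++ [b] <+: v) (h2 : w ++ [!b] <+: t) : Splt T w := by
  have hwv : w ++ [b] ∈ T := hTt v hv _ h1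
  have hwt : w ++ [!b] ∈ T := hTt t ht _ h2
  have hw : w ∈ T := hTt _ hwv w ⟨[b], rfl⟩
  refine ⟨hw, ?_, ?_⟩ <;> cases b <;> simp_all

lemma exists_split_above {T : Set (List Bool)} (hT : SplittingTree T) {s : List Bool}
    (hs : s ∈ T) : ∃ v, s <+: v ∧ Splt T v := by
  obtain ⟨c, hc, d, hd, hsc, hsd, h1, h2⟩ := hT.1.2 s hs
  obtain ⟨w, b, hw1, hw2⟩ := exists_diverge c d h1 h2
  exact ⟨w, prefix_of_base hsc hsd hw1 hw2, split_of_diverge hT.1.1 hc hd hw1 hw2⟩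

/-- A fatness bound for `restrict T s`, at least `s.length`. -/
noncomputable def mF (T : Set (List Bool)) (s : List Bool) : ℕ :=
  if h : Fat (restrict T s) then max h.choose s.length else s.length

lemma mF_ge (T : Set (List Bool)) (s : List Bool) : s.length ≤ mF T s := by
  unfold mF; split
  · exact le_max_right _ _
  · exact le_refl _

lemma mF_spec {T : Set (List Bool)} {s : List Bool} (hs : Fat (restrict T s)) {n : ℕ}
    (hn : mF T s ≤ n) :
    (∃ u ∈ restrict T s, u[n]? = some false) ∧ (∃ u ∈ restrict T s, u[n]? = some true) := by
  unfold mF at hn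
  rw [dif_pos hs] at hn
  exact hs.choose_spec n (le_trans (le_max_left _ _) hn)

/-- Witness choice function. -/
noncomputable def wF (T : Set (List Bool)) (s : List Bool) (n : ℕ) (b : Bool) : List Bool :=
  if h : ∃ u, u ∈ restrict T s ∧ u[n]? = some b then h.choose else []

lemma wF_spec {T : Set (List Bool)} {s : List Bool} {n : ℕ} {b : Bool}
    (h : ∃ u, u ∈ restrict T s ∧ u[n]? = some b) :
    wF T s n b ∈ restrict T s ∧ (wF T s n b)[n]? = some b := by
  unfold wF; rw [dif_pos h]; exact h.choose_spec

/-- The least level of a splitting node extending `s`. -/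
noncomputable def sg (T : Set (List Bool)) (s : List Bool) : ℕ :=
  if h : ∃ q : ℕ, ∃ v, s <+: v ∧ Splt T v ∧ v.length = q then Nat.find h else 0

lemma sg_spec {T : Set (List Bool)} {s : List Bool} (h : ∃ v, s <+: v ∧ Splt T v) :
    ∃ v, s <+: v ∧ Splt T v ∧ v.length = sg T s := by
  have h' : ∃ q : ℕ, ∃ v, s <+: v ∧ Splt T v ∧ v.length = q := by
    obtain ⟨v, h1, h2⟩ := h; exact ⟨v.length, v, h1, h2, rfl⟩
  unfold sg; rw [dif_pos h']; exact Nat.find_spec h'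

lemma sg_min {T : Set (List Bool)} {s v : List Bool} (h : ∃ v, s <+: v ∧ Splt T v)
    (h1 : s <+: v) (h2 : Splt T v) : sg T s ≤ v.length := by
  have h' : ∃ q : ℕ, ∃ v, s <+: v ∧ Splt T v ∧ v.length = q := by
    obtain ⟨v, h1, h2⟩ := h; exact ⟨v.length, v, h1, h2, rfl⟩
  unfold sg; rw [dif_pos h']
  exact Nat.find_min' h' ⟨v, h1, h2, rfl⟩

lemma sg_ge {T : Set (List Bool)} {s : List Bool} (h : ∃ v, s <+: v ∧ Splt T v) :
    s.length ≤ sg T s := by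
  obtain ⟨v, h1, _, h3⟩ := sg_spec h
  exact h3 ▸ h1.length_le

/-- A chosen splitting node extending `s` of minimal level. -/
noncomputable def vF (T : Set (List Bool)) (s : List Bool) : List Bool :=
  if h : ∃ v, s <+: v ∧ Splt T v ∧ v.length = sg T s then h.choose else []

lemma vF_spec {T : Set (List Bool)} {s : List Bool} (h : ∃ v, s <+: v ∧ Splt T v) :
    s <+: vF T s ∧ Splt T (vF T s) ∧ (vF T s).length = sg T s := by
  unfold vF; rw [dif_pos (sg_spec h)]; exact (sg_spec h).choose_spec

/-- Uniform bound `Φ`. -/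
noncomputable def ph (T : Set (List Bool)) (L : ℕ) : ℕ :=
  L + (List.finite_length_le Bool L).toFinset.sup (mF T)

lemma ph_ge (T : Set (List Bool)) (L : ℕ) : L ≤ ph T L := Nat.le_add_right _ _

lemma ph_mono {T : Set (List Bool)} {L L' : ℕ} (h : L ≤ L') : ph T L ≤ ph T L' := by
  unfold ph
  refine Nat.add_le_add h (Finset.sup_mono ?_)
  intro l hl
  rw [Set.Finite.mem_toFinset] at hl ⊢
  exact le_trans hl h

lemma mF_le_ph {T : Set (List Bool)} {w : List Bool} {L : ℕ} (h : w.length ≤ L) :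
    mF T w ≤ ph T L :=
  le_trans (Finset.le_sup ((List.finite_length_le Bool L).mem_toFinset.mpr h))
    (Nat.le_add_left _ _)

/-- `E(s) = Φ(σ(s)+1)`. -/
noncomputable def eF (T : Set (List Bool)) (s : List Bool) : ℕ := ph T (sg T s + 1)

/-- The covered condition for a pair `(s,t)`. -/
def Cv (T : Set (List Bool)) (s t : List Bool) : Prop :=
  (¬ s <+: t ∧ ¬ t <+: s) ∨ (s <+: t ∧ sg T s < t.length)

/-- The base node: extends `s`, incompatible with `t`, of length `≤ σ(s)+1`. -/
noncomputable def bF (T : Set (List Bool)) (s t : List Bool) : List Bool :=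
  if ¬ s <+: t ∧ ¬ t <+: s then s
  else if vF T s <+: t then vF T s ++ [!(t.getD (sg T s) false)] else vF T s

/-- The weight. -/
noncomputable def rho (T : Set (List Bool)) (s t : List Bool) : Finset (List Bool) :=
  if s ∈ T ∧ t ∈ T ∧ Cv T s t then
    (Finset.Ico (eF T s) (eF T t + 1)).biUnion
      (fun n => {wF T (bF T s t) n false, wF T (bF T s t) n true})
  else ∅

end SP9
namespace SP9

open scoped Classical
open List

lemma bF_props {T : Set (List Bool)} (hT : SplittingTree T) {s t : List Bool}
    (hs : s ∈ T) (ht : t ∈ T) (hc : Cv T s t) :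
    bF T s t ∈ T ∧ s <+: bF T s t ∧ (bF T s t).length ≤ sg T s + 1 ∧
      ¬ bF T s t <+: t ∧ ¬ t <+: bF T s t := by
  have hex : ∃ v, s <+: v ∧ Splt T v := exists_split_above hT hs
  obtain ⟨hv1, hv2, hv3⟩ := vF_spec (T := T) hex
  unfold bF
  by_cases h1 : ¬ s <+: t ∧ ¬ t <+: s
  · rw [if_pos h1]
    exact ⟨hs, List.prefix_refl s, le_trans (sg_ge hex) (Nat.le_succ _), h1.1, h1.2⟩
  · rw [if_neg h1]
    have hc' : s <+: t ∧ sg T s < t.length := by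
      rcases hc with h | h
      · exact absurd h h1
      · exact h
    obtain ⟨hst, hlt⟩ := hc'
    by_cases h2 : vF T s <+: t
    · rw [if_pos h2]
      have hvlt : (vF T s).length < t.length := by omega
      obtain ⟨c, hgc, hvc⟩ := prefix_snoc h2 hvlt
      rw [hv3] at hgc
      have hgd : t.getD (sg T s) false = c := by
        simp [List.getD_eq_getElem?_getD, hgc]
      rw [hgd]
      have hmem : vF T s ++ [!c] ∈ T := by
        rcases hv2 with ⟨_, hf, htr⟩
        cases c
        · simpa using htr
        · simpa using hf
      have hg1 : (vF T s ++ [!c])[sg T s]? = some (!c) := by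
        rw [← hv3]; simp
      have hinc := incomp_of_get?_ne hg1 hgc (by cases c <;> simp)
      refine ⟨hmem, hv1.trans (List.prefix_append _ _), by simp [hv3], hinc.1, hinc.2⟩
    · rw [if_neg h2]
      refine ⟨hv2.1, hv1, by omega, h2, ?_⟩
      intro h
      have := h.length_le
      omega
  done

lemma wit_props {T : Set (List Bool)} (hT : SplittingTree T) {s t : List Bool}
    (hs : s ∈ T) (ht : t ∈ T) (hc : Cv T s t) {n : ℕ} (hn : eF T s ≤ n) (b : Bool) :
    wF T (bF T s t) n b ∈ T ∧ bF T s t <+: wF T (bF T s t) n b ∧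
      (wF T (bF T s t) n b)[n]? = some b := by
  obtain ⟨hb1, hb2, hb3, hb4, hb5⟩ := bF_props hT hs ht hc
  have hmle : mF T (bF T s t) ≤ n := le_trans (mF_le_ph hb3) hn
  have hfat : Fat (restrict T (bF T s t)) := hT.2 _ hb1
  have hex : ∃ u, u ∈ restrict T (bF T s t) ∧ u[n]? = some b := by
    rcases mF_spec hfat hmle with ⟨h0, h1⟩
    cases b
    · exact h0
    · exact h1
  obtain ⟨⟨hwT, hwcomp⟩, hwget⟩ := wF_spec hex
  have hlen : (bF T s t).length ≤ (wF T (bF T s t) n b).length := by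
    have := lt_length_of_get? hwget
    have := mF_ge T (bF T s t)
    omega
  exact ⟨hwT, prefix_of_compat_le hwcomp.symm hlen, hwget⟩

end SP9
namespace SP9

open scoped Classical
open List

lemma rho_mem {T : Set (List Bool)} {s t : List Bool}
    (hs : s ∈ T) (ht : t ∈ T) (hc : Cv T s t) {n : ℕ}
    (hn : n ∈ Finset.Ico (eF T s) (eF T t + 1)) (b : Bool) :
    wF T (bF T s t) n b ∈ rho T s t := by
  unfold rho
  rw [if_pos ⟨hs, ht, hc⟩]
  refine Finset.mem_biUnion.mpr ⟨n, hn, ?_⟩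
  cases b
  · exact Finset.mem_insert_self _ _
  · exact Finset.mem_insert.mpr (Or.inr (Finset.mem_singleton_self _))

lemma rho_weight (T : Set (List Bool)) (hT : SplittingTree T) : IsWeight T (rho T) := by
  intro s hs t ht x hx
  rw [Finset.mem_coe] at hx
  unfold rho at hx
  split at hx
  case isFalse => simp at hx
  case isTrue h =>
    obtain ⟨_, _, hc⟩ := h
    obtain ⟨n, hn, hx⟩ := Finset.mem_biUnion.mp hx
    rw [Finset.mem_Ico] at hn
    have hxw : x = wF T (bF T s t) n false ∨ x = wF T (bF T s t) n true := by
      rcases Finset.mem_insert.mp hx with h | h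
      · exact Or.inl h
      · exact Or.inr (Finset.mem_singleton.mp h)
    obtain ⟨hb1, hb2, hb3, hb4, hb5⟩ := bF_props hT hs ht hc
    have key : ∀ b : Bool, x = wF T (bF T s t) n b → x ∈ restrict T s \ restrict T t := by
      intro b hxb
      obtain ⟨hwT, hwpre, hwget⟩ := wit_props hT hs ht hc hn.1 b
      subst hxb
      constructor
      · exact ⟨hwT, Or.inr (hb2.trans hwpre)⟩
      · rintro ⟨-, hcomp | hcomp⟩
        · exact hb4 (hwpre.trans hcomp)
        · rcases List.prefix_or_prefix_of_prefix hcomp hwpre with h | h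
          · exact hb5 h
          · exact hb4 h
    rcases hxw with h | h
    · exact key false h
    · exact key true h

lemma step_unc {T : Set (List Bool)} (hT : SplittingTree T) {s t : List Bool}
    (hs : s ∈ T) (ht : t ∈ T) (hne : s ≠ t) (hnc : ¬ Cv T s t) :
    sg T t ≤ sg T s ∧ t.length ≤ sg T s := by
  have hexs : ∃ v, s <+: v ∧ Splt T v := exists_split_above hT hs
  have hext : ∃ v, t <+: v ∧ Splt T v := exists_split_above hT ht
  obtain ⟨hv1, hv2, hv3⟩ := vF_spec (T := T) hexs
  unfold Cv at hnc
  push_neg at hnc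
  obtain ⟨hnc1, hnc2⟩ := hnc
  have hcomp : s <+: t ∨ t <+: s := by
    by_cases h : s <+: t
    · exact Or.inl h
    · exact Or.inr (hnc1 h)
  rcases hcomp with hst | hts
  · have hlen : t.length ≤ sg T s := hnc2 hst
    have htv : t <+: vF T s := by
      by_cases hvt : t <+: vF T s
      · exact hvt
      · by_cases hv4 : vF T s <+: t
        · rw [hv4.eq_of_length_le (by omega)]
        · exfalso
          obtain ⟨w, b, hw1, hw2⟩ := exists_diverge (vF T s) t hv4 hvt
          have hsw : s <+: w := prefix_of_base hv1 hst hw1 hw2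
          have hsplw : Splt T w := split_of_diverge hT.1.1 hv2.1 ht hw1 hw2
          have := sg_min hexs hsw hsplw
          have := hw1.length_le
          simp at this
          omega
    exact ⟨le_trans (sg_min hext htv hv2) (le_of_eq hv3), hlen⟩
  · have hlt : t.length < s.length := by
      rcases lt_or_eq_of_le hts.length_le with h | h
      · exact h
      · exact absurd (hts.eq_of_length_le (le_of_eq h.symm)) hne.symm
    refine ⟨le_trans (sg_min hext (hts.trans hv1) hv2) (le_of_eq hv3), ?_⟩
    have := sg_ge hexs
    omega

end SP9
namespace SP9

open scoped Classical
open List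

lemma main_lemma {T : Set (List Bool)} (hT : SplittingTree T) {S : Set (List Bool)}
    (hSsub : S ⊆ T) {s₀ : List Bool} {f : ℕ → List Bool} (hinj : Function.Injective f)
    (hmem : ∀ n, f n ∈ restrict S s₀)
    (hrho : ∀ n, ↑(rho T (f n) (f (n + 1))) ⊆ S) :
    ∃ m₀ : ℕ, ∀ n ≥ m₀, ∃ u w, u ∈ S ∧ w ∈ S ∧ s₀ <+: u ∧ s₀ <+: w ∧
      u[n]? = some false ∧ w[n]? = some true := by
  have hfS : ∀ k, f k ∈ S := fun k => (hmem k).1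
  have hfT : ∀ k, f k ∈ T := fun k => hSsub (hfS k)
  have hcomp0 : ∀ k, f k <+: s₀ ∨ s₀ <+: f k := fun k => (hmem k).2
  have hne : ∀ k, f k ≠ f (k + 1) := by
    intro k h
    have := hinj h
    omega
  -- stretch lemma
  have stretch : ∀ j k, j ≤ k → (∀ i, j ≤ i → i < k → ¬ Cv T (f i) (f (i + 1))) →
      sg T (f k) ≤ sg T (f j) ∧ (f k).length ≤ sg T (f j) := by
    intro j k hjk
    induction k, hjk using Nat.le_induction with
    | base =>
      intro _
      exact ⟨le_refl _, sg_ge (exists_split_above hT (hfT j))⟩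
    | succ k hjk IH =>
      intro hunc
      have IH' := IH (fun i h1 h2 => hunc i h1 (by omega))
      have hstep := step_unc hT (hfT k) (hfT (k + 1)) (hne k)
        (hunc k hjk (by omega))
      exact ⟨le_trans hstep.1 IH'.1, le_trans hstep.2 IH'.1⟩
  -- bounded length contradiction
  have unbdd : ∀ j C : ℕ, (∀ k, j ≤ k → (f k).length ≤ C) → False := by
    intro j C hC
    have h3 : (f '' Set.Ici j).Infinite :=
      (Set.Ici_infinite j).image (hinj.injOn)
    apply h3
    apply (List.finite_length_le Bool C).subset
    rintro x ⟨k, hk, rfl⟩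
    exact hC k hk
  -- there are covered pairs beyond any point
  have exCov : ∀ j, ∃ k, j ≤ k ∧ Cv T (f k) (f (k + 1)) := by
    intro j
    by_contra h
    push_neg at h
    exact unbdd j (sg T (f j)) (fun k hk => (stretch j k hk (fun i hi _ => h i hi)).2)
  -- all but finitely many f k extend s₀
  have hgood : ∃ K, ∀ k, K ≤ k → s₀ <+: f k := by
    have hfin : {k | ¬ s₀ <+: f k}.Finite := by
      apply Set.Finite.subset
        (((List.finite_length_le Bool s₀.length).preimage (hinj.injOn)))
      intro k hk
      simp only [Set.mem_setOf_eq] at hk ⊢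
      rcases hcomp0 k with h | h
      · exact h.length_le
      · exact absurd h hk
    obtain ⟨K, hK⟩ := hfin.bddAbove
    refine ⟨K + 1, fun k hk => ?_⟩
    by_contra hc
    have := hK hc
    omega
  obtain ⟨K, hK⟩ := hgood
  obtain ⟨K₀, hK₀ge, hK₀cov⟩ := exCov K
  refine ⟨eF T (f K₀), ?_⟩
  intro n hn
  -- the covering claim
  have cover : ∃ k, K ≤ k ∧ Cv T (f k) (f (k + 1)) ∧ eF T (f k) ≤ n ∧ n ≤ eF T (f (k + 1)) := by
    by_contra hcon
    push_neg at hcon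
    have claimB : ∀ k, K₀ ≤ k → Cv T (f k) (f (k + 1)) → eF T (f k) ≤ n := by
      intro k
      induction k using Nat.strong_induction_on with
      | _ k IH =>
        intro hk hcov
        rcases eq_or_lt_of_le hk with heq | hlt
        · rw [← heq]; exact hn
        · set P : ℕ → Prop := fun i => K₀ ≤ i ∧ Cv T (f i) (f (i + 1)) with hP
          have hPK₀ : P K₀ := ⟨le_refl _, hK₀cov⟩
          have hK₀le : K₀ ≤ k - 1 := by omega
          have hPj : P (Nat.findGreatest P (k - 1)) := Nat.findGreatest_spec hK₀le hPK₀
          have hjle : Nat.findGreatest P (k - 1) ≤ k - 1 := Nat.findGreatest_le _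
          have hjge : K₀ ≤ Nat.findGreatest P (k - 1) := Nat.le_findGreatest hK₀le hPK₀
          set j := Nat.findGreatest P (k - 1) with hj
          have hEj : eF T (f j) ≤ n := IH j (by omega) hPj.1 hPj.2
          have hEj1 : eF T (f (j + 1)) < n :=
            hcon j (le_trans hK₀ge hPj.1) hPj.2 hEj
          have hstr : ∀ i, j + 1 ≤ i → i < k → ¬ Cv T (f i) (f (i + 1)) := by
            intro i h1 h2 hCvi
            exact Nat.findGreatest_is_greatest (show j < i by omega) (by omega)
              ⟨by omega, hCvi⟩
          have hst := stretch (j + 1) k (by omega) hstr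
          have : eF T (f k) ≤ eF T (f (j + 1)) := ph_mono (by omega)
          omega
    have hlenbd : ∀ k, K₀ + 1 ≤ k → (f k).length ≤ n := by
      intro k hk
      set P : ℕ → Prop := fun i => K₀ ≤ i ∧ Cv T (f i) (f (i + 1)) with hP
      have hPK₀ : P K₀ := ⟨le_refl _, hK₀cov⟩
      have hK₀le : K₀ ≤ k - 1 := by omega
      have hPj : P (Nat.findGreatest P (k - 1)) := Nat.findGreatest_spec hK₀le hPK₀
      have hjle : Nat.findGreatest P (k - 1) ≤ k - 1 := Nat.findGreatest_le _
      have hjge : K₀ ≤ Nat.findGreatest P (k - 1) := Nat.le_findGreatest hK₀le hPK₀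
      set j := Nat.findGreatest P (k - 1) with hj
      have hEj : eF T (f j) ≤ n := claimB j hjge hPj.2
      have hEj1 : eF T (f (j + 1)) < n :=
        hcon j (le_trans hK₀ge hPj.1) hPj.2 hEj
      have hsg1 : sg T (f (j + 1)) + 1 ≤ eF T (f (j + 1)) := ph_ge T _
      have hstr : ∀ i, j + 1 ≤ i → i < k → ¬ Cv T (f i) (f (i + 1)) := by
        intro i h1 h2 hCvi
        exact Nat.findGreatest_is_greatest (show j < i by omega) (by omega)
          ⟨by omega, hCvi⟩
      have hst := stretch (j + 1) k (by omega) hstr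
      omega
    exact unbdd (K₀ + 1) n hlenbd
  obtain ⟨k, hkK, hkcov, hE1, hE2⟩ := cover
  have hgoodk : s₀ <+: f k := hK k hkK
  have hIco : n ∈ Finset.Ico (eF T (f k)) (eF T (f (k + 1)) + 1) :=
    Finset.mem_Ico.mpr ⟨hE1, by omega⟩
  obtain ⟨hb1, hb2, hb3, hb4, hb5⟩ := bF_props hT (hfT k) (hfT (k + 1)) hkcov
  have key : ∀ b : Bool, wF T (bF T (f k) (f (k + 1))) n b ∈ S ∧
      s₀ <+: wF T (bF T (f k) (f (k + 1))) n b ∧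
      (wF T (bF T (f k) (f (k + 1))) n b)[n]? = some b := by
    intro b
    obtain ⟨hwT, hwpre, hwget⟩ := wit_props hT (hfT k) (hfT (k + 1)) hkcov hE1 b
    refine ⟨hrho k ?_, hgoodk.trans (hb2.trans hwpre), hwget⟩
    exact Finset.mem_coe.mpr (rho_mem (hfT k) (hfT (k + 1)) hkcov hIco b)
  obtain ⟨hf1, hf2, hf3⟩ := key false
  obtain ⟨ht1, ht2, ht3⟩ := key true
  exact ⟨_, _, hf1, ht1, hf2, ht2, hf3, ht3⟩

end SP9

/-- Splitting forcing is weighted: for every splitting tree `T` there is a weight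
`ρ` on `T` such that every tree `S` with `S ≤_ρ T` is again a splitting tree. -/
theorem stmt9 (T : Set (List Bool)) (hT : SplittingTree T) :
    ∃ ρ : List Bool → List Bool → Finset (List Bool), IsWeight T ρ ∧
      ∀ S : Set (List Bool), IsTree S → LeRho ρ T S → SplittingTree S := by
  classical
  refine ⟨SP9.rho T, SP9.rho_weight T hT, ?_⟩
  intro S hS hle
  obtain ⟨hsub, hdense⟩ := hle
  have main : ∀ s ∈ S, ∃ s₀, s₀ ∈ S ∧ s <+: s₀ ∧ ∃ m₀ : ℕ, ∀ n ≥ m₀,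
      ∃ u w, u ∈ S ∧ w ∈ S ∧ s₀ <+: u ∧ s₀ <+: w ∧
        u[n]? = some false ∧ w[n]? = some true := by
    intro s hs
    obtain ⟨s₀, hs₀S, hss₀, f, hinj, hf0, hmem, hrho⟩ := hdense s hs
    exact ⟨s₀, hs₀S, hss₀, SP9.main_lemma hT hsub hinj hmem hrho⟩
  refine ⟨⟨hS, ?_⟩, ?_⟩
  · intro t ht
    obtain ⟨s₀, hs₀S, hts₀, m₀, hm₀⟩ := main t ht
    obtain ⟨u, w, huS, hwS, hu, hw, hub, hwb⟩ := hm₀ m₀ (le_refl _)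
    have hinc := SP9.incomp_of_get?_ne hub hwb (by simp)
    exact ⟨u, huS, w, hwS, hts₀.trans hu, hts₀.trans hw, hinc.1, hinc.2⟩
  · intro s hs
    obtain ⟨s₀, hs₀S, hss₀, m₀, hm₀⟩ := main s hs
    refine ⟨m₀, fun n hn => ?_⟩
    obtain ⟨u, w, huS, hwS, hu, hw, hub, hwb⟩ := hm₀ n hn
    exact ⟨⟨u, ⟨huS, Or.inr (hss₀.trans hu)⟩, hub⟩, ⟨w, ⟨hwS, Or.inr (hss₀.trans hw)⟩, hwb⟩⟩
end

section
/- Sacks forcing is weighted: for every perfect tree T ⊆ 2^{<ω} there is a weight ρ on T such that any tree S with S ≤_ρ T is perfect. Explicitly, one can take ρ(s,t) to consist of all r⌢i ∈ T_s ∖ T_t such that r⌢(1−i) ∈ T and |r| is minimal with this property. -/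
/-! ### Auxiliary definitions and lemmas -/

lemma mem_restrict {T : Set (List Bool)} {s u : List Bool} :
    u ∈ restrict T s ↔ u ∈ T ∧ (u <+: s ∨ s <+: u) := Iff.rfl

/-- `u` is a candidate for `ρ(s,t)`: a splitting child in `T_s ∖ T_t`. -/
def Cand (T : Set (List Bool)) (s t u : List Bool) : Prop :=
  u ∈ restrict T s \ restrict T t ∧ ∃ r i, u = r ++ [i] ∧ r ++ [!i] ∈ T

lemma cand_finite (T : Set (List Bool)) (s t : List Bool) :
    {u | Cand T s t u ∧ ∀ v, Cand T s t v → u.length ≤ v.length}.Finite := by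
  by_cases h : ∃ u, Cand T s t u ∧ ∀ v, Cand T s t v → u.length ≤ v.length
  · obtain ⟨u₀, hu₀, hmin⟩ := h
    apply (List.finite_length_eq Bool u₀.length).subset
    rintro v ⟨hv, hvmin⟩
    exact le_antisymm (hvmin _ hu₀) (hmin _ hv)
  · convert Set.finite_empty
    ext u
    simp only [Set.mem_setOf_eq, Set.mem_empty_iff_false, iff_false]
    exact fun hu => h ⟨u, hu⟩

/-- The weight for Sacks forcing: minimal-length splitting children in `T_s ∖ T_t`. -/
noncomputable def rho (T : Set (List Bool)) (s t : List Bool) : Finset (List Bool) :=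
  (cand_finite T s t).toFinset

lemma mem_rho {T : Set (List Bool)} {s t u : List Bool} :
    u ∈ rho T s t ↔ Cand T s t u ∧ ∀ v, Cand T s t v → u.length ≤ v.length := by
  simp only [rho, Set.Finite.mem_toFinset, Set.mem_setOf_eq]

lemma rho_nonempty {T : Set (List Bool)} {s t c : List Bool} (hc : Cand T s t c) :
    ∃ u, u ∈ rho T s t := by
  classical
  have hex : ∃ n, ∃ u, Cand T s t u ∧ u.length = n := ⟨c.length, c, hc, rfl⟩
  obtain ⟨u, hu, hlen⟩ := Nat.find_spec hex
  refine ⟨u, mem_rho.2 ⟨hu, fun v hv => ?_⟩⟩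
  rw [hlen]
  exact Nat.find_min' hex ⟨v, hv, rfl⟩

lemma exists_split (a : List Bool) : ∀ (b : List Bool), ¬ a <+: b → ¬ b <+: a →
    ∃ (r : List Bool) (i : Bool), (r ++ [i]) <+: a ∧ (r ++ [!i]) <+: b := by
  induction a with
  | nil => intro b hab _; exact absurd List.nil_prefix hab
  | cons x a ih =>
    intro b hab hba
    cases b with
    | nil => exact absurd List.nil_prefix hba
    | cons y b =>
      by_cases hxy : x = y
      · subst hxy
        obtain ⟨r, i, h1, h2⟩ := ih b (fun h => hab (List.cons_prefix_cons.2 ⟨rfl, h⟩))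
          (fun h => hba (List.cons_prefix_cons.2 ⟨rfl, h⟩))
        exact ⟨x :: r, i, List.cons_prefix_cons.2 ⟨rfl, h1⟩, List.cons_prefix_cons.2 ⟨rfl, h2⟩⟩
      · refine ⟨[], x, ?_, ?_⟩
        · simp only [List.nil_append]
          exact List.cons_prefix_cons.2 ⟨rfl, List.nil_prefix⟩
        · have hnx : (!x) = y := by cases x <;> cases y <;> simp_all
          simp only [List.nil_append]
          rw [hnx]
          exact List.cons_prefix_cons.2 ⟨rfl, List.nil_prefix⟩

lemma exists_splitNode {T : Set (List Bool)} (hT : PerfectTree T) {v : List Bool} (hv : v ∈ T) :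
    ∃ (r : List Bool) (i : Bool), r ++ [i] ∈ T ∧ r ++ [!i] ∈ T ∧
      v <+: r ++ [i] ∧ v <+: r ++ [!i] := by
  obtain ⟨s₁, hs₁, s₂, hs₂, hv1, hv2, h12, h21⟩ := hT.2 v hv
  obtain ⟨r, i, hr1, hr2⟩ := exists_split s₁ s₂ h12 h21
  have hT1 : r ++ [i] ∈ T := hT.1 s₁ hs₁ _ hr1
  have hT2 : r ++ [!i] ∈ T := hT.1 s₂ hs₂ _ hr2
  have hne : (r ++ [i] : List Bool) ≠ r ++ [!i] := by simp
  have hvi : v <+: r ++ [i] := by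
    rcases List.prefix_or_prefix_of_prefix hv1 hr1 with h | h
    · exact h
    · exfalso
      apply hne
      exact (List.prefix_of_prefix_length_le (h.trans hv2) hr2 (by simp)).eq_of_length (by simp)
  have hvni : v <+: r ++ [!i] := by
    rcases List.prefix_or_prefix_of_prefix hv2 hr2 with h | h
    · exact h
    · exfalso
      apply hne
      exact ((List.prefix_of_prefix_length_le (h.trans hv1) hr1 (by simp)).eq_of_length
        (by simp)).symm ▸ rfl
  exact ⟨r, i, hT1, hT2, hvi, hvni⟩

/-- Sacks forcing is weighted: for every perfect tree `T ⊆ 2^{<ω}` there is a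
weight `ρ` on `T` such that any tree `S` with `S ≤_ρ T` is perfect. One can take
`ρ(s,t)` to consist of all `r⌢i ∈ T_s ∖ T_t` with `r⌢(1−i) ∈ T` and `|r|`
minimal with this property. -/
theorem stmt10 (T : Set (List Bool)) (hT : PerfectTree T) :
    ∃ ρ : List Bool → List Bool → Finset (List Bool), IsWeight T ρ ∧
      (∀ S : Set (List Bool), IsTree S → LeRho ρ T S → PerfectTree S) ∧
      ∀ s ∈ T, ∀ t ∈ T, ∀ u : List Bool, (u ∈ ρ s t ↔
        ∃ (r : List Bool) (i : Bool), u = r ++ [i] ∧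
          u ∈ restrict T s \ restrict T t ∧ r ++ [!i] ∈ T ∧
          ∀ (r' : List Bool) (i' : Bool), r' ++ [i'] ∈ restrict T s \ restrict T t →
            r' ++ [!i'] ∈ T → r.length ≤ r'.length) := by
  classical
  refine ⟨rho T, ?_, ?_, ?_⟩
  · -- IsWeight
    intro s _ t _ u hu
    exact (mem_rho.1 (Finset.mem_coe.1 hu)).1.1
  · -- main statement
    intro S hS hLe
    obtain ⟨hST, hdense⟩ := hLe
    refine ⟨hS, ?_⟩
    intro t ht
    obtain ⟨s₀, hs₀S, hts₀, f, hfinj, hf0, hfmem, hfrho⟩ := hdense t ht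
    by_cases hchain : ∀ m k : ℕ, f m <+: f k ∨ f k <+: f m
    · -- chain case
      have hflen : ∀ m k : ℕ, (f m).length = (f k).length → m = k := by
        intro m k h
        apply hfinj
        rcases hchain m k with h' | h'
        · exact h'.eq_of_length h
        · exact (h'.eq_of_length h.symm).symm
      have hunb : ∀ B : ℕ, ∃ N, B ≤ (f N).length := by
        intro B
        have hfin : {m : ℕ | (f m).length < B}.Finite := by
          apply Set.Finite.of_finite_image (f := fun m => (f m).length)
          · exact (Set.finite_Iio B).subset (by rintro _ ⟨m, hm, rfl⟩; exact hm)
          · exact fun a _ b _ h => hflen a b h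
        obtain ⟨N, hN⟩ := hfin.infinite_compl.nonempty
        simp only [Set.mem_compl_iff, Set.mem_setOf_eq, not_lt] at hN
        exact ⟨N, hN⟩
      have hs₀m : ∀ m, f m <+: s₀ ∨ s₀ <+: f m := fun m => (mem_restrict.1 (hfmem m)).2
      have hcompt : ∀ m, t <+: f m ∨ f m <+: t := by
        intro m
        rcases hs₀m m with h | h
        · exact List.prefix_or_prefix_of_prefix hts₀ h
        · exact Or.inl (hts₀.trans h)
      have hMfin : {m : ℕ | ¬ t <+: f m}.Finite := by
        apply Set.Finite.of_finite_image (f := fun m => (f m).length)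
        · apply (Set.finite_Iio t.length).subset
          rintro _ ⟨m, hm, rfl⟩
          simp only [Set.mem_setOf_eq] at hm
          have hmt : f m <+: t := (hcompt m).resolve_left hm
          simp only [Set.mem_Iio]
          rcases hmt.length_le.lt_or_eq with h | h
          · exact h
          · exfalso
            apply hm
            rw [hmt.eq_of_length h]
        · exact fun a _ b _ h => hflen a b h
      obtain ⟨M, hM⟩ := hMfin.bddAbove
      have htfm : ∀ m, M < m → t <+: f m := by
        intro m hm
        by_contra hc
        exact absurd (hM hc) (not_le.2 hm)
      obtain ⟨N₀, hN₀⟩ := hunb ((Finset.range (M + 2)).sup fun m => (f m).length)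
      have hfN₀ : ∀ m, m ≤ M + 1 → f m <+: f N₀ := by
        intro m hm
        have h1 : (f m).length ≤ (f N₀).length :=
          le_trans (Finset.le_sup (f := fun m => (f m).length)
            (Finset.mem_range.2 (by omega : m < M + 2))) hN₀
        rcases hchain m N₀ with h | h
        · exact h
        · rw [← h.eq_of_length (le_antisymm h.length_le h1)]
      have hfN₀T : f N₀ ∈ T := hST (mem_restrict.1 (hfmem N₀)).1
      obtain ⟨r, i, hc0T, hc1T, hpc0, hpc1⟩ := exists_splitNode hT hfN₀T
      obtain ⟨N, hN⟩ := hunb (r.length + 1)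
      have hchoosec : ∃ c : List Bool, c ∈ T ∧ (∃ r' i', c = r' ++ [i'] ∧ r' ++ [!i'] ∈ T) ∧
          f N₀ <+: c ∧ ¬ (c <+: f N ∨ f N <+: c) := by
        have hnotboth : ¬ ((r ++ [i]) <+: f N ∧ (r ++ [!i]) <+: f N) := by
          rintro ⟨h1, h2⟩
          have heq := (List.prefix_of_prefix_length_le h1 h2 (by simp)).eq_of_length (by simp)
          simp at heq
        by_cases hcase : (r ++ [i]) <+: f N
        · refine ⟨r ++ [!i], hc1T, ⟨r, !i, rfl, by simpa using hc0T⟩, hpc1, ?_⟩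
          rintro (h | h)
          · exact hnotboth ⟨hcase, h⟩
          · have heq := h.eq_of_length
              (le_antisymm h.length_le (by simpa using hN))
            exact hnotboth ⟨hcase, by rw [← heq]⟩
        · refine ⟨r ++ [i], hc0T, ⟨r, i, rfl, hc1T⟩, hpc0, ?_⟩
          rintro (h | h)
          · exact hcase h
          · have heq := h.eq_of_length
              (le_antisymm h.length_le (by simpa using hN))
            exact hcase (by rw [← heq])
      obtain ⟨c, hcT, hcCore, hfN₀c, hcN⟩ := hchoosec
      have hA1 : ∀ m, (c <+: f m ∨ f m <+: c) → f m <+: c := by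
        intro m hm
        rcases hm with h | h
        · exfalso
          rcases hchain m N with h' | h'
          · exact hcN (Or.inl (h.trans h'))
          · exact hcN (List.prefix_or_prefix_of_prefix h h')
        · exact h
      have hAfin : {m : ℕ | c <+: f m ∨ f m <+: c}.Finite := by
        apply Set.Finite.of_finite_image (f := fun m => (f m).length)
        · apply (Set.finite_Iio (c.length + 1)).subset
          rintro _ ⟨m, hm, rfl⟩
          simp only [Set.mem_setOf_eq] at hm
          have := (hA1 m hm).length_le
          simp only [Set.mem_Iio]
          omega
        · exact fun a _ b _ h => hflen a b h
      obtain ⟨K, hK⟩ := hAfin.bddAbove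
      set P : ℕ → Prop := fun m => c <+: f m ∨ f m <+: c with hP
      have hM1A : P (M + 1) := Or.inr ((hfN₀ (M + 1) le_rfl).trans hfN₀c)
      have hM1K : M + 1 ≤ K := hK hM1A
      set n := Nat.findGreatest P K with hn
      have hnA : P n := Nat.findGreatest_spec hM1K hM1A
      have hMn : M + 1 ≤ n := Nat.le_findGreatest hM1K hM1A
      have hn1A : ¬ P (n + 1) := by
        by_cases h : n + 1 ≤ K
        · exact Nat.findGreatest_is_greatest (Nat.lt_succ_self n) h
        · exact fun hp => h (hK hp)
      have htfn : t <+: f n := htfm n (by omega)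
      have hfnc : f n <+: c := hA1 n hnA
      have htfn1 : t <+: f (n + 1) := by
        rcases hcompt (n + 1) with h | h
        · exact h
        · exact absurd (Or.inr ((h.trans htfn).trans hfnc)) hn1A
      have hcCand : Cand T (f n) (f (n + 1)) c := by
        refine ⟨⟨mem_restrict.2 ⟨hcT, Or.inr hfnc⟩, fun hmem => ?_⟩, hcCore⟩
        exact hn1A (mem_restrict.1 hmem).2
      obtain ⟨u', hu'rho⟩ := rho_nonempty hcCand
      have hu'S : u' ∈ S := hfrho n (Finset.mem_coe.2 hu'rho)
      obtain ⟨hu'diff, -⟩ := mem_rho.1 hu'rho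
      obtain ⟨hu'Tfn, hu'ncomp⟩ := (Set.mem_diff u').1 hu'diff.1
      have hu'T : u' ∈ T := (mem_restrict.1 hu'Tfn).1
      have hu'n1 : ¬ (u' <+: f (n + 1) ∨ f (n + 1) <+: u') := fun h =>
        hu'ncomp (mem_restrict.2 ⟨hu'T, h⟩)
      have htu' : t <+: u' := by
        rcases (mem_restrict.1 hu'Tfn).2 with h | h
        · rcases List.prefix_or_prefix_of_prefix htfn h with h' | h'
          · exact h'
          · exact absurd (Or.inl (h'.trans htfn1)) hu'n1
        · exact htfn.trans h
      exact ⟨u', hu'S, f (n + 1), (mem_restrict.1 (hfmem (n + 1))).1, htu', htfn1,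
        fun h => hu'n1 (Or.inl h), fun h => hu'n1 (Or.inr h)⟩
    · -- non-chain case: two incomparable members of the sequence
      push_neg at hchain
      obtain ⟨m, k, hmk, hkm⟩ := hchain
      have hm := mem_restrict.1 (hfmem m)
      have hk := mem_restrict.1 (hfmem k)
      have hsm : s₀ <+: f m := by
        rcases hm.2 with h | h
        · exfalso
          rcases hk.2 with h' | h'
          · rcases List.prefix_or_prefix_of_prefix h h' with h'' | h''
            · exact hmk h''
            · exact hkm h''
          · exact hmk (h.trans h')
        · exact h
      have hsk : s₀ <+: f k := by
        rcases hk.2 with h | h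
        · exact absurd (h.trans hsm) hkm
        · exact h
      exact ⟨f m, hm.1, f k, hk.1, hts₀.trans hsm, hts₀.trans hsk, hmk, hkm⟩
  · -- characterization of ρ
    intro s _ t _ u
    rw [mem_rho]
    constructor
    · rintro ⟨⟨hdiff, r, i, rfl, hsib⟩, hmin⟩
      refine ⟨r, i, rfl, hdiff, hsib, ?_⟩
      intro r' i' hd' hs'
      have := hmin (r' ++ [i']) ⟨hd', r', i', rfl, hs'⟩
      simpa using this
    · rintro ⟨r, i, rfl, hdiff, hsib, hmin⟩
      refine ⟨⟨hdiff, r, i, rfl, hsib⟩, ?_⟩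
      rintro v ⟨hd', r', i', rfl, hs'⟩
      have := hmin r' i' hd' hs'
      simpa using this
end
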